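/- arXiv:2105.09725 — 6 statements merged into one kernel-verified Lean document; each statement's English description precedes it below -/
import Mathlib

section
/- Let p be an odd prime and let ζ ∈ ℤ_pˣ be a unit of the p-adic integers whose reduction modulo p generates the cyclic group (ℤ/pℤ)ˣ. Then the closure (with respect to the p-adic topology) of the subgroup of GL₂(ℤ_p) generated by the four matrices X = [[0,1],[1,0]], P₋ = [[1,0],[1,1]], M_ζ = [[ζ,0],[0,1]], and P_{1+p} = [[1+p,0],[0,1]] is all of GL₂(ℤ_p). -/
namespace Stmt0Aux

variable {p : ℕ} [hpI : Fact p.Prime]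

lemma one_add_pow_eq {R : Type*} [CommRing R] (x : R) (c : ℕ) :
    ∃ s : R, (1 + x) ^ c = 1 + c * x + x ^ 2 * s := by
  induction c with
  | zero => exact ⟨0, by simp⟩
  | succ n ih =>
    obtain ⟨s, hs⟩ := ih
    refine ⟨n + s + x * s, ?_⟩
    rw [pow_succ, hs]
    push_cast
    ring

lemma toZMod_eq_zero_iff (x : ℤ_[p]) :
    PadicInt.toZMod x = 0 ↔ (p : ℤ_[p]) ∣ x := by
  rw [← RingHom.mem_ker, PadicInt.ker_toZMod, PadicInt.maximalIdeal_eq_span_p,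
    Ideal.mem_span_singleton]

lemma isUnit_iff_not_dvd (x : ℤ_[p]) : IsUnit x ↔ ¬ (p : ℤ_[p]) ∣ x := by
  rw [PadicInt.isUnit_iff, ← PadicInt.norm_lt_one_iff_dvd, not_lt]
  constructor
  · intro h; rw [h]
  · intro h; exact le_antisymm (PadicInt.norm_le_one x) h

lemma sum_peel {R : Type*} [CommRing R] (f : ℕ → R) (m : ℕ) :
    ∑ i ∈ Finset.range (m + 2), f i = (∑ i ∈ Finset.range m, f (i + 2)) + f 1 + f 0 := by
  rw [Finset.sum_range_succ' f (m + 1), Finset.sum_range_succ' (fun i => f (i + 1)) m]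

lemma exists_v (hp2 : p ≠ 2) (k : ℕ) :
    ∃ v : ℤ_[p], (p : ℤ_[p]) ∣ (v - 1) ∧ (1 + (p : ℤ_[p])) ^ (p ^ k) = 1 + (p : ℤ_[p]) ^ (k + 1) * v := by
  have hp := hpI.out
  have hp3 : 3 ≤ p := by
    have := hp.two_le
    omega
  induction k with
  | zero => exact ⟨1, by simp, by simp⟩
  | succ k ih =>
    obtain ⟨v, hv1, hv2⟩ := ih
    -- expand ((1+p)^(p^k))^p = (1 + p^(k+1) v)^p
    set y : ℤ_[p] := (p : ℤ_[p]) ^ (k + 1) * v with hy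
    obtain ⟨q, hq⟩ : ∃ q, p = q + 3 := ⟨p - 3, by omega⟩
    have expand : (y + 1) ^ p = ∑ i ∈ Finset.range (p + 1), y ^ i * ↑(p.choose i) := by
      rw [add_pow]
      refine Finset.sum_congr rfl fun i _ => by ring
    have hsum : (p : ℤ_[p]) ^ (k + 3) ∣ ∑ i ∈ Finset.range (q + 2), y ^ (i + 2) * ↑(p.choose (i + 2)) := by
      refine Finset.dvd_sum fun i hi => ?_
      rcases eq_or_lt_of_le (by simp at hi; omega : i + 2 ≤ p) with h | h
      · -- i + 2 = p, choose = 1, y^p has huge valuation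
        have : ((p : ℤ_[p]) ^ (k + 1)) ^ (i + 2) ∣ y ^ (i + 2) := by
          rw [hy, mul_pow]; exact Dvd.intro _ rfl
        refine dvd_mul_of_dvd_left (dvd_trans ?_ this) _
        rw [← pow_mul]
        exact pow_dvd_pow _ (by nlinarith)
      · -- 2 ≤ i + 2 < p : p ∣ choose, p^(2k+2) ∣ y^(i+2)
        have h1 : (p : ℤ_[p]) ∣ ↑(p.choose (i + 2)) := by
          have := hp.dvd_choose_self (by omega) h
          exact_mod_cast Nat.cast_dvd_cast (α := ℤ_[p]) this
        have h2 : ((p : ℤ_[p]) ^ (k + 1)) ^ 2 ∣ y ^ (i + 2) := by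
          rw [hy, mul_pow]
          exact dvd_mul_of_dvd_left (pow_dvd_pow _ (by omega)) _
        have h3 : ((p : ℤ_[p]) ^ (k + 1)) ^ 2 * p ∣ y ^ (i + 2) * ↑(p.choose (i + 2)) :=
          mul_dvd_mul h2 h1
        refine dvd_trans ?_ h3
        rw [← pow_mul, ← pow_succ]
        exact pow_dvd_pow _ (by omega)
    obtain ⟨w, hw⟩ := hsum
    refine ⟨v + p * w, ?_, ?_⟩
    · have : v + (p : ℤ_[p]) * w - 1 = (v - 1) + p * w := by ring
      rw [this]
      exact dvd_add hv1 (Dvd.intro _ rfl)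
    · rw [pow_succ p k, pow_mul, hv2, add_comm (1 : ℤ_[p]) y, expand]
      have hp1 : p + 1 = q + 2 + 2 := by omega
      have hsplit : ∑ i ∈ Finset.range (p + 1), y ^ i * ↑(p.choose i)
          = (∑ i ∈ Finset.range (q + 2), y ^ (i + 2) * ↑(p.choose (i + 2)))
            + y ^ 1 * ↑(p.choose 1) + y ^ 0 * ↑(p.choose 0) := by
        rw [hp1]
        exact sum_peel _ _
      rw [hsplit, hw]
      simp only [pow_one, pow_zero, Nat.choose_one_right, Nat.choose_zero_right, Nat.cast_one,
        one_mul, mul_one]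
      rw [hy]
      ring

lemma exists_b (hp2 : p ≠ 2) (u : ℤ_[p]) (hu : (p : ℤ_[p]) ∣ (u - 1)) (n : ℕ) :
    ∃ b : ℕ, (p : ℤ_[p]) ^ n ∣ ((1 + (p : ℤ_[p])) ^ b - u) := by
  have hp := hpI.out
  haveI : NeZero p := ⟨hp.ne_zero⟩
  induction n with
  | zero => exact ⟨0, by simp⟩
  | succ n ih =>
    rcases Nat.eq_zero_or_pos n with rfl | hn
    · exact ⟨0, by simpa using dvd_neg.2 hu⟩
    obtain ⟨b, hb⟩ := ih
    obtain ⟨t, ht⟩ := hb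
    obtain ⟨v, hv1, hv2⟩ := exists_v hp2 (n - 1)
    have hn' : n - 1 + 1 = n := by omega
    rw [hn'] at hv2
    have hU : PadicInt.toZMod u = 1 := by
      have : PadicInt.toZMod (u - 1) = 0 := (toZMod_eq_zero_iff _).2 hu
      rw [map_sub, map_one, sub_eq_zero] at this
      exact this
    have hV : PadicInt.toZMod v = 1 := by
      have : PadicInt.toZMod (v - 1) = 0 := (toZMod_eq_zero_iff _).2 hv1
      rw [map_sub, map_one, sub_eq_zero] at this
      exact this
    set c : ℕ := (-(PadicInt.toZMod t)).val with hc
    obtain ⟨s, hs⟩ := one_add_pow_eq ((p : ℤ_[p]) ^ n * v) c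
    refine ⟨b + c * p ^ (n - 1), ?_⟩
    have hbu : (1 + (p : ℤ_[p])) ^ b = u + (p : ℤ_[p]) ^ n * t := by
      rw [← ht]; ring
    have key : (1 + (p : ℤ_[p])) ^ (b + c * p ^ (n - 1)) - u
        = (p : ℤ_[p]) ^ n * (u * c * v + t)
          + ((p : ℤ_[p]) ^ n) ^ 2 * (u * v ^ 2 * s + t * c * v + (p : ℤ_[p]) ^ n * (t * v ^ 2 * s)) := by
      rw [pow_add, pow_mul', hv2, hbu, hs]
      ring
    rw [key]
    refine dvd_add ?_ ?_
    · rw [pow_succ]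
      refine mul_dvd_mul dvd_rfl ?_
      rw [← toZMod_eq_zero_iff]
      have hcv : ((c : ℕ) : ZMod p) = -(PadicInt.toZMod t) := ZMod.natCast_rightInverse _
      rw [map_add, map_mul, map_mul, hU, hV, map_natCast, hcv]
      ring
    · refine dvd_mul_of_dvd_left ?_ _
      rw [← pow_mul]
      exact pow_dvd_pow _ (by omega)

lemma isUnit_one_add_p : IsUnit (1 + (p : ℤ_[p])) := by
  have hp := hpI.out
  rw [isUnit_iff_not_dvd]
  intro h
  have h1 : (p : ℤ_[p]) ∣ 1 := (dvd_add_right dvd_rfl).mp (by rwa [add_comm] at h)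
  have := isUnit_of_dvd_one h1
  rw [PadicInt.isUnit_iff, PadicInt.norm_p] at this
  have hp2 : (2 : ℝ) ≤ (p : ℝ) := by exact_mod_cast hp.two_le
  have : ((p : ℝ))⁻¹ < 1 := inv_lt_one_of_one_lt₀ (by linarith)
  simp_all

lemma exists_ab (hp2 : p ≠ 2) (ζ : ℤ_[p]ˣ)
    (hζ : Subgroup.zpowers (Units.map (PadicInt.toZMod (p := p)).toMonoidHom ζ) = ⊤)
    (u : ℤ_[p]ˣ) (n : ℕ) :
    ∃ (a : ℤ) (b : ℕ),
      (p : ℤ_[p]) ^ n ∣ ((ζ ^ a : ℤ_[p]ˣ) : ℤ_[p]) * (1 + (p : ℤ_[p])) ^ b - (u : ℤ_[p]) := by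
  obtain ⟨a, ha⟩ : ∃ a : ℤ, (Units.map (PadicInt.toZMod (p := p)).toMonoidHom ζ) ^ a
      = Units.map (PadicInt.toZMod (p := p)).toMonoidHom u := by
    have hmem : Units.map (PadicInt.toZMod (p := p)).toMonoidHom u
        ∈ Subgroup.zpowers (Units.map (PadicInt.toZMod (p := p)).toMonoidHom ζ) := by
      rw [hζ]; trivial
    obtain ⟨a, ha⟩ := Subgroup.mem_zpowers_iff.mp hmem
    exact ⟨a, ha⟩
  set w : ℤ_[p]ˣ := ζ ^ (-a) * u with hwdef
  have hmap : Units.map (PadicInt.toZMod (p := p)).toMonoidHom w = 1 := by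
    rw [hwdef, map_mul, map_zpow, zpow_neg, ha, inv_mul_cancel]
  have hw : (p : ℤ_[p]) ∣ ((w : ℤ_[p]) - 1) := by
    rw [← toZMod_eq_zero_iff, map_sub, map_one, sub_eq_zero]
    have := congrArg Units.val hmap
    simpa using this
  obtain ⟨b, hb⟩ := exists_b hp2 (w : ℤ_[p]) hw n
  refine ⟨a, b, ?_⟩
  have hmul : ((ζ ^ a : ℤ_[p]ˣ) : ℤ_[p]) * ((1 + (p : ℤ_[p])) ^ b - (w : ℤ_[p]))
      = ((ζ ^ a : ℤ_[p]ˣ) : ℤ_[p]) * (1 + (p : ℤ_[p])) ^ b - (u : ℤ_[p]) := by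
    have : ζ ^ a * w = u := by rw [hwdef]; group
    rw [mul_sub, ← Units.val_mul, this]
  rw [← hmul]
  exact Dvd.dvd.mul_left hb _



noncomputable def Eu (t : ℤ_[p]) : GL (Fin 2) ℤ_[p] where
  val := !![1, t; 0, 1]
  inv := !![1, -t; 0, 1]
  val_inv := by ext i j; fin_cases i <;> fin_cases j <;>
    simp [Matrix.mul_apply, Fin.sum_univ_two, Matrix.one_apply]
  inv_val := by ext i j; fin_cases i <;> fin_cases j <;>
    simp [Matrix.mul_apply, Fin.sum_univ_two, Matrix.one_apply]

noncomputable def Lu (t : ℤ_[p]) : GL (Fin 2) ℤ_[p] where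
  val := !![1, 0; t, 1]
  inv := !![1, 0; -t, 1]
  val_inv := by ext i j; fin_cases i <;> fin_cases j <;>
    simp [Matrix.mul_apply, Fin.sum_univ_two, Matrix.one_apply]
  inv_val := by ext i j; fin_cases i <;> fin_cases j <;>
    simp [Matrix.mul_apply, Fin.sum_univ_two, Matrix.one_apply]

noncomputable def Du (u : ℤ_[p]ˣ) : GL (Fin 2) ℤ_[p] where
  val := !![(u : ℤ_[p]), 0; 0, 1]
  inv := !![((u⁻¹ : ℤ_[p]ˣ) : ℤ_[p]), 0; 0, 1]
  val_inv := by ext i j; fin_cases i <;> fin_cases j <;>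
    simp [Matrix.mul_apply, Fin.sum_univ_two, Matrix.one_apply]
  inv_val := by ext i j; fin_cases i <;> fin_cases j <;>
    simp [Matrix.mul_apply, Fin.sum_univ_two, Matrix.one_apply]

noncomputable def Xu : GL (Fin 2) ℤ_[p] where
  val := !![0, 1; 1, 0]
  inv := !![0, 1; 1, 0]
  val_inv := by ext i j; fin_cases i <;> fin_cases j <;>
    simp [Matrix.mul_apply, Fin.sum_univ_two, Matrix.one_apply]
  inv_val := by ext i j; fin_cases i <;> fin_cases j <;>
    simp [Matrix.mul_apply, Fin.sum_univ_two, Matrix.one_apply]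

@[simp] lemma Eu_val (t : ℤ_[p]) : (Eu t : Matrix (Fin 2) (Fin 2) ℤ_[p]) = !![1, t; 0, 1] := rfl
@[simp] lemma Eu_inv_val (t : ℤ_[p]) :
    ((Eu t)⁻¹ : GL (Fin 2) ℤ_[p]) = (!![1, -t; 0, 1] : Matrix (Fin 2) (Fin 2) ℤ_[p]) := rfl
@[simp] lemma Lu_val (t : ℤ_[p]) : (Lu t : Matrix (Fin 2) (Fin 2) ℤ_[p]) = !![1, 0; t, 1] := rfl
@[simp] lemma Lu_inv_val (t : ℤ_[p]) :
    ((Lu t)⁻¹ : GL (Fin 2) ℤ_[p]) = (!![1, 0; -t, 1] : Matrix (Fin 2) (Fin 2) ℤ_[p]) := rfl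
@[simp] lemma Du_val (u : ℤ_[p]ˣ) :
    (Du u : Matrix (Fin 2) (Fin 2) ℤ_[p]) = !![(u : ℤ_[p]), 0; 0, 1] := rfl
@[simp] lemma Du_inv_val (u : ℤ_[p]ˣ) :
    ((Du u)⁻¹ : GL (Fin 2) ℤ_[p]) = (!![((u⁻¹ : ℤ_[p]ˣ) : ℤ_[p]), 0; 0, 1] : Matrix (Fin 2) (Fin 2) ℤ_[p]) := rfl
@[simp] lemma Xu_val : ((Xu : GL (Fin 2) ℤ_[p]) : Matrix (Fin 2) (Fin 2) ℤ_[p]) = !![0, 1; 1, 0] := rfl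

lemma Eu_add (t s : ℤ_[p]) : Eu t * Eu s = Eu (t + s) := by
  refine Units.ext ?_
  show (Eu t : Matrix (Fin 2) (Fin 2) ℤ_[p]) * (Eu s : Matrix (Fin 2) (Fin 2) ℤ_[p]) = _
  ext i j
  fin_cases i <;> fin_cases j <;>
    simp [Matrix.mul_apply, Fin.sum_univ_two, add_comm]

lemma Lu_add (t s : ℤ_[p]) : Lu t * Lu s = Lu (t + s) := by
  refine Units.ext ?_
  show (Lu t : Matrix (Fin 2) (Fin 2) ℤ_[p]) * (Lu s : Matrix (Fin 2) (Fin 2) ℤ_[p]) = _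
  ext i j
  fin_cases i <;> fin_cases j <;>
    simp [Matrix.mul_apply, Fin.sum_univ_two, add_comm]

lemma Eu_pow (n : ℕ) : (Eu 1 : GL (Fin 2) ℤ_[p]) ^ n = Eu (n : ℤ_[p]) := by
  induction n with
  | zero =>
    refine (Units.ext ?_).symm
    ext i j
    fin_cases i <;> fin_cases j <;> simp [Matrix.one_apply]
  | succ n ih =>
    rw [pow_succ, ih, Eu_add]
    push_cast
    ring_nf

lemma Lu_pow (n : ℕ) : (Lu 1 : GL (Fin 2) ℤ_[p]) ^ n = Lu (n : ℤ_[p]) := by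
  induction n with
  | zero =>
    refine (Units.ext ?_).symm
    ext i j
    fin_cases i <;> fin_cases j <;> simp [Matrix.one_apply]
  | succ n ih =>
    rw [pow_succ, ih, Lu_add]
    push_cast
    ring_nf

lemma Du_mul (u v : ℤ_[p]ˣ) : Du u * Du v = Du (u * v) := by
  refine Units.ext ?_
  show (Du u : Matrix (Fin 2) (Fin 2) ℤ_[p]) * (Du v : Matrix (Fin 2) (Fin 2) ℤ_[p]) = _
  ext i j
  fin_cases i <;> fin_cases j <;>
    simp [Matrix.mul_apply, Fin.sum_univ_two]

noncomputable def Dhom : ℤ_[p]ˣ →* GL (Fin 2) ℤ_[p] :=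
  MonoidHom.mk' Du fun u v => (Du_mul u v).symm

@[simp] lemma Dhom_apply (u : ℤ_[p]ˣ) : (Dhom u : GL (Fin 2) ℤ_[p]) = Du u := rfl



lemma norm_le_of_dvd {x : ℤ_[p]} {n : ℕ} (h : (p : ℤ_[p]) ^ n ∣ x) :
    ‖x‖ ≤ ((p : ℝ)⁻¹) ^ n := by
  obtain ⟨c, rfl⟩ := h
  have hc : ‖c‖ ≤ 1 := PadicInt.norm_le_one c
  have hp0 : (0:ℝ) < (p : ℝ) := by
    exact_mod_cast hpI.out.pos
  have hpn : ‖(p : ℤ_[p]) ^ n‖ = ((p:ℝ)⁻¹) ^ n := by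
    rw [PadicInt.norm_p_pow]
    rw [zpow_neg, zpow_natCast, inv_pow]
  rw [norm_mul, hpn]
  calc ((p:ℝ)⁻¹) ^ n * ‖c‖ ≤ ((p:ℝ)⁻¹) ^ n * 1 := by
        apply mul_le_mul_of_nonneg_left hc (by positivity)
    _ = ((p:ℝ)⁻¹) ^ n := mul_one _

lemma mem_closure_of_approx (s : Subgroup (GL (Fin 2) ℤ_[p]))
    (g : GL (Fin 2) ℤ_[p]) (w : ℕ → GL (Fin 2) ℤ_[p]) (hw : ∀ n, w n ∈ s)
    (h1 : ∀ n i j, ‖((w n : Matrix (Fin 2) (Fin 2) ℤ_[p]) i j)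
      - ((g : Matrix (Fin 2) (Fin 2) ℤ_[p]) i j)‖ ≤ ((p : ℝ)⁻¹) ^ n)
    (h2 : ∀ n i j, ‖((((w n)⁻¹ : GL (Fin 2) ℤ_[p]) : Matrix (Fin 2) (Fin 2) ℤ_[p]) i j)
      - (((g⁻¹ : GL (Fin 2) ℤ_[p]) : Matrix (Fin 2) (Fin 2) ℤ_[p]) i j)‖ ≤ ((p : ℝ)⁻¹) ^ n) :
    g ∈ s.topologicalClosure := by
  have hp1 : (1:ℝ) < p := by exact_mod_cast hpI.out.one_lt
  have hlim : Filter.Tendsto (fun n : ℕ => ((p : ℝ)⁻¹) ^ n) Filter.atTop (nhds 0) :=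
    tendsto_pow_atTop_nhds_zero_of_lt_one (by positivity) (inv_lt_one_of_one_lt₀ hp1)
  have key : ∀ (A : ℕ → Matrix (Fin 2) (Fin 2) ℤ_[p]) (B : Matrix (Fin 2) (Fin 2) ℤ_[p]),
      (∀ n i j, ‖A n i j - B i j‖ ≤ ((p : ℝ)⁻¹) ^ n) →
      Filter.Tendsto A Filter.atTop (nhds B) := by
    intro A B h
    refine tendsto_pi_nhds.2 ?_
    intro i
    rw [tendsto_pi_nhds]
    intro j
    rw [← tendsto_sub_nhds_zero_iff]
    exact squeeze_zero_norm (fun n => h n i j) hlim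
  have t1 := key _ _ h1
  have t2 := key _ _ h2
  have tend : Filter.Tendsto w Filter.atTop (nhds g) := by
    rw [Units.isEmbedding_embedProduct.tendsto_nhds_iff]
    have heq : (Units.embedProduct _) ∘ w = fun n =>
        (((w n : Matrix (Fin 2) (Fin 2) ℤ_[p])),
          MulOpposite.op (((w n)⁻¹ : GL (Fin 2) ℤ_[p]) : Matrix (Fin 2) (Fin 2) ℤ_[p])) := rfl
    rw [heq]
    have : Units.embedProduct _ g = ((g : Matrix (Fin 2) (Fin 2) ℤ_[p]),
        MulOpposite.op ((g⁻¹ : GL (Fin 2) ℤ_[p]) : Matrix (Fin 2) (Fin 2) ℤ_[p])) := rfl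
    rw [this]
    exact t1.prodMk_nhds ((MulOpposite.continuous_op.tendsto _).comp t2)
  exact mem_closure_of_tendsto tend (Filter.Eventually.of_forall hw)

lemma Xu_mul_Xu : (Xu : GL (Fin 2) ℤ_[p]) * Xu = 1 := by
  apply Units.ext
  show ((Xu : GL (Fin 2) ℤ_[p]) : Matrix (Fin 2) (Fin 2) ℤ_[p]) * _ = _
  ext i j
  fin_cases i <;> fin_cases j <;>
    simp [Matrix.mul_apply, Fin.sum_univ_two, Matrix.one_apply]

lemma mem_of_gen (K : Subgroup (GL (Fin 2) ℤ_[p]))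
    (hX : Xu ∈ K) (hE : ∀ t, Eu t ∈ K) (hL : ∀ t, Lu t ∈ K) (hD : ∀ u, Du u ∈ K) :
    ∀ g : GL (Fin 2) ℤ_[p], g ∈ K := by
  have main : ∀ g : GL (Fin 2) ℤ_[p],
      IsUnit ((g : Matrix (Fin 2) (Fin 2) ℤ_[p]) 0 0) → g ∈ K := by
    intro g ha
    have hdetu : IsUnit (g : Matrix (Fin 2) (Fin 2) ℤ_[p]).det :=
      (Matrix.isUnit_iff_isUnit_det _).mp ⟨g, rfl⟩
    obtain ⟨ai, hai⟩ := ha.exists_right_inv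
    obtain ⟨di0, hdi0⟩ := hdetu.exists_right_inv
    set M := (g : Matrix (Fin 2) (Fin 2) ℤ_[p]) with hM
    have hdet : M.det = M 0 0 * M 1 1 - M 0 1 * M 1 0 := Matrix.det_fin_two M
    set d' : ℤ_[p] := M 1 1 - M 1 0 * ai * M 0 1 with hd'
    set di : ℤ_[p] := di0 * M 0 0 with hdi
    have hd'di : d' * di = 1 := by
      rw [hd', hdi]
      linear_combination hdi0 - di0 * hdet - M 0 1 * M 1 0 * di0 * hai
    set A : ℤ_[p]ˣ := Units.mkOfMulEqOne _ _ hai with hA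
    set D' : ℤ_[p]ˣ := Units.mkOfMulEqOne _ _ hd'di with hD'
    have hdecomp : g = Lu (M 1 0 * ai) * Eu (M 0 1 * di) * Du A * Xu * Du D' * Xu := by
      apply Units.ext
      show M = _
      simp only [Units.val_mul, Lu_val, Eu_val, Du_val, Xu_val, hA, hD',
        Units.val_mkOfMulEqOne, Matrix.mul_fin_two]
      nth_rewrite 1 [Matrix.eta_fin_two M]
      ext i j
      fin_cases i <;> fin_cases j
      · simp
      · simp
        linear_combination (-(M 0 1)) * hd'di
      · simp
        linear_combination (-(M 1 0)) * hai
      · simp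
        linear_combination (-(M 1 0 * ai * M 0 1)) * hd'di - hd'
    rw [hdecomp]
    exact mul_mem (mul_mem (mul_mem (mul_mem (mul_mem (hL _) (hE _)) (hD _)) hX) (hD _)) hX
  intro g
  by_cases ha : IsUnit ((g : Matrix (Fin 2) (Fin 2) ℤ_[p]) 0 0)
  · exact main g ha
  · have hdetu : IsUnit (g : Matrix (Fin 2) (Fin 2) ℤ_[p]).det :=
      (Matrix.isUnit_iff_isUnit_det _).mp ⟨g, rfl⟩
    have hc : IsUnit ((g : Matrix (Fin 2) (Fin 2) ℤ_[p]) 1 0) := by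
      rw [isUnit_iff_not_dvd] at ha ⊢
      rw [not_not] at ha
      intro hdvd
      have hdd : (p : ℤ_[p]) ∣ (g : Matrix (Fin 2) (Fin 2) ℤ_[p]).det := by
        rw [Matrix.det_fin_two]
        exact dvd_sub (ha.mul_right _) (hdvd.mul_left _)
      rw [isUnit_iff_not_dvd] at hdetu
      exact hdetu hdd
    have hXg : IsUnit (((Xu * g : GL (Fin 2) ℤ_[p]) : Matrix (Fin 2) (Fin 2) ℤ_[p]) 0 0) := by
      have hentry : ((Xu * g : GL (Fin 2) ℤ_[p]) : Matrix (Fin 2) (Fin 2) ℤ_[p]) 0 0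
          = (g : Matrix (Fin 2) (Fin 2) ℤ_[p]) 1 0 := by
        simp [Units.val_mul, Matrix.mul_apply, Fin.sum_univ_two]
      rwa [hentry]
    have hmem := main _ hXg
    have hg : g = Xu * (Xu * g) := by rw [← mul_assoc, Xu_mul_Xu, one_mul]
    rw [hg]
    exact mul_mem hX hmem

end Stmt0Aux

open Stmt0Aux in
/-- Let `p` be an odd prime and `ζ ∈ ℤ_pˣ` a unit whose reduction mod `p`
generates `(ℤ/pℤ)ˣ`. Then the topological closure of the subgroup of `GL₂(ℤ_p)` generated by
`X = [[0,1],[1,0]]`, `P₋ = [[1,0],[1,1]]`, `M_ζ = [[ζ,0],[0,1]]` and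
`P_{1+p} = [[1+p,0],[0,1]]` is all of `GL₂(ℤ_p)`. -/
theorem stmt_0 (p : ℕ) [Fact p.Prime] (hp : p ≠ 2) (ζ : ℤ_[p]ˣ)
    (hζ : Subgroup.zpowers (Units.map (PadicInt.toZMod (p := p)).toMonoidHom ζ) = ⊤) :
    (Subgroup.closure {g : GL (Fin 2) ℤ_[p] |
        (g : Matrix (Fin 2) (Fin 2) ℤ_[p]) ∈
          ({!![0, 1; 1, 0], !![1, 0; 1, 1], !![(ζ : ℤ_[p]), 0; 0, 1],
            !![1 + (p : ℤ_[p]), 0; 0, 1]} :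
            Set (Matrix (Fin 2) (Fin 2) ℤ_[p]))}).topologicalClosure = ⊤ := by
  set C : Subgroup (GL (Fin 2) ℤ_[p]) := Subgroup.closure {g : GL (Fin 2) ℤ_[p] |
        (g : Matrix (Fin 2) (Fin 2) ℤ_[p]) ∈
          ({!![0, 1; 1, 0], !![1, 0; 1, 1], !![(ζ : ℤ_[p]), 0; 0, 1],
            !![1 + (p : ℤ_[p]), 0; 0, 1]} :
            Set (Matrix (Fin 2) (Fin 2) ℤ_[p]))} with hC
  set η : ℤ_[p]ˣ := (isUnit_one_add_p (p := p)).unit with hη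
  have hηval : (η : ℤ_[p]) = 1 + (p : ℤ_[p]) := IsUnit.unit_spec _
  have hXC : Xu ∈ C := by
    rw [hC]
    exact Subgroup.subset_closure (by simp [Set.mem_setOf_eq])
  have hL1C : Lu (1 : ℤ_[p]) ∈ C := by
    rw [hC]
    exact Subgroup.subset_closure (by simp [Set.mem_setOf_eq])
  have hDζC : Du ζ ∈ C := by
    rw [hC]
    exact Subgroup.subset_closure (by simp [Set.mem_setOf_eq])
  have hDηC : Du η ∈ C := by
    rw [hC]
    exact Subgroup.subset_closure (by simp [Set.mem_setOf_eq, hηval])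
  have hE1C : Eu (1 : ℤ_[p]) ∈ C := by
    have heq : Eu (1 : ℤ_[p]) = Xu * Lu 1 * Xu := by
      apply Units.ext
      show _ = ((Xu : GL (Fin 2) ℤ_[p]) : Matrix (Fin 2) (Fin 2) ℤ_[p])
        * ((Lu 1 : GL (Fin 2) ℤ_[p]) : Matrix (Fin 2) (Fin 2) ℤ_[p])
        * ((Xu : GL (Fin 2) ℤ_[p]) : Matrix (Fin 2) (Fin 2) ℤ_[p])
      ext i j
      fin_cases i <;> fin_cases j <;>
        simp [Matrix.mul_apply, Fin.sum_univ_two]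
    rw [heq]
    exact mul_mem (mul_mem hXC hL1C) hXC
  rw [Subgroup.eq_top_iff']
  intro g
  apply mem_of_gen C.topologicalClosure (Subgroup.le_topologicalClosure C hXC) ?hE ?hL ?hD g
  case hE =>
    intro t
    apply mem_closure_of_approx C (Eu t) (fun n => Eu ((t.appr n : ℕ) : ℤ_[p]))
    · intro n
      rw [← Eu_pow]
      exact pow_mem hE1C _
    · intro n i j
      have hsp : (p : ℤ_[p]) ^ n ∣ t - ((t.appr n : ℕ) : ℤ_[p]) := by
        have := PadicInt.appr_spec n t
        rwa [Ideal.mem_span_singleton] at this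
      fin_cases i <;> fin_cases j
      · exact norm_le_of_dvd (show (p : ℤ_[p]) ^ n ∣ (1 : ℤ_[p]) - 1 by simp)
      · refine norm_le_of_dvd ?_
        show (p : ℤ_[p]) ^ n ∣ ((t.appr n : ℕ) : ℤ_[p]) - t
        have heq : ((t.appr n : ℕ) : ℤ_[p]) - t = -(t - ((t.appr n : ℕ) : ℤ_[p])) := by ring
        rw [heq]
        exact dvd_neg.mpr hsp
      · exact norm_le_of_dvd (show (p : ℤ_[p]) ^ n ∣ (0 : ℤ_[p]) - 0 by simp)
      · exact norm_le_of_dvd (show (p : ℤ_[p]) ^ n ∣ (1 : ℤ_[p]) - 1 by simp)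
    · intro n i j
      have hsp : (p : ℤ_[p]) ^ n ∣ t - ((t.appr n : ℕ) : ℤ_[p]) := by
        have := PadicInt.appr_spec n t
        rwa [Ideal.mem_span_singleton] at this
      fin_cases i <;> fin_cases j
      · exact norm_le_of_dvd (show (p : ℤ_[p]) ^ n ∣ (1 : ℤ_[p]) - 1 by simp)
      · refine norm_le_of_dvd ?_
        show (p : ℤ_[p]) ^ n ∣ -((t.appr n : ℕ) : ℤ_[p]) - -t
        have heq : -((t.appr n : ℕ) : ℤ_[p]) - -t = t - ((t.appr n : ℕ) : ℤ_[p]) := by ring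
        rw [heq]
        exact hsp
      · exact norm_le_of_dvd (show (p : ℤ_[p]) ^ n ∣ (0 : ℤ_[p]) - 0 by simp)
      · exact norm_le_of_dvd (show (p : ℤ_[p]) ^ n ∣ (1 : ℤ_[p]) - 1 by simp)
  case hL =>
    intro t
    apply mem_closure_of_approx C (Lu t) (fun n => Lu ((t.appr n : ℕ) : ℤ_[p]))
    · intro n
      rw [← Lu_pow]
      exact pow_mem hL1C _
    · intro n i j
      have hsp : (p : ℤ_[p]) ^ n ∣ t - ((t.appr n : ℕ) : ℤ_[p]) := by
        have := PadicInt.appr_spec n t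
        rwa [Ideal.mem_span_singleton] at this
      fin_cases i <;> fin_cases j
      · exact norm_le_of_dvd (show (p : ℤ_[p]) ^ n ∣ (1 : ℤ_[p]) - 1 by simp)
      · exact norm_le_of_dvd (show (p : ℤ_[p]) ^ n ∣ (0 : ℤ_[p]) - 0 by simp)
      · refine norm_le_of_dvd ?_
        show (p : ℤ_[p]) ^ n ∣ ((t.appr n : ℕ) : ℤ_[p]) - t
        have heq : ((t.appr n : ℕ) : ℤ_[p]) - t = -(t - ((t.appr n : ℕ) : ℤ_[p])) := by ring
        rw [heq]
        exact dvd_neg.mpr hsp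
      · exact norm_le_of_dvd (show (p : ℤ_[p]) ^ n ∣ (1 : ℤ_[p]) - 1 by simp)
    · intro n i j
      have hsp : (p : ℤ_[p]) ^ n ∣ t - ((t.appr n : ℕ) : ℤ_[p]) := by
        have := PadicInt.appr_spec n t
        rwa [Ideal.mem_span_singleton] at this
      fin_cases i <;> fin_cases j
      · exact norm_le_of_dvd (show (p : ℤ_[p]) ^ n ∣ (1 : ℤ_[p]) - 1 by simp)
      · exact norm_le_of_dvd (show (p : ℤ_[p]) ^ n ∣ (0 : ℤ_[p]) - 0 by simp)
      · refine norm_le_of_dvd ?_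
        show (p : ℤ_[p]) ^ n ∣ -((t.appr n : ℕ) : ℤ_[p]) - -t
        have heq : -((t.appr n : ℕ) : ℤ_[p]) - -t = t - ((t.appr n : ℕ) : ℤ_[p]) := by ring
        rw [heq]
        exact hsp
      · exact norm_le_of_dvd (show (p : ℤ_[p]) ^ n ∣ (1 : ℤ_[p]) - 1 by simp)
  case hD =>
    intro u
    have hex : ∀ n : ℕ, ∃ v : ℤ_[p]ˣ, (Du v ∈ C) ∧ (p : ℤ_[p]) ^ n ∣ ((v : ℤ_[p]) - (u : ℤ_[p])) := by
      intro n
      obtain ⟨a, b, hab⟩ := exists_ab hp ζ hζ u n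
      refine ⟨ζ ^ a * η ^ b, ?_, ?_⟩
      · have hDv : Du (ζ ^ a * η ^ b) = Dhom ζ ^ a * Dhom η ^ b := by
          rw [← map_zpow, ← map_pow, ← map_mul]
          rfl
        rw [hDv]
        exact mul_mem (zpow_mem hDζC a) (pow_mem hDηC b)
      · have hval : ((ζ ^ a * η ^ b : ℤ_[p]ˣ) : ℤ_[p])
            = ((ζ ^ a : ℤ_[p]ˣ) : ℤ_[p]) * (1 + (p : ℤ_[p])) ^ b := by
          rw [Units.val_mul, Units.val_pow_eq_pow_val, hηval]
        rw [hval]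
        exact hab
    choose v hvC hvd using hex
    apply mem_closure_of_approx C (Du u) (fun n => Du (v n)) hvC
    · intro n i j
      fin_cases i <;> fin_cases j
      · refine norm_le_of_dvd ?_
        show (p : ℤ_[p]) ^ n ∣ ((v n : ℤ_[p]ˣ) : ℤ_[p]) - (u : ℤ_[p])
        exact hvd n
      · exact norm_le_of_dvd (show (p : ℤ_[p]) ^ n ∣ (0 : ℤ_[p]) - 0 by simp)
      · exact norm_le_of_dvd (show (p : ℤ_[p]) ^ n ∣ (0 : ℤ_[p]) - 0 by simp)
      · exact norm_le_of_dvd (show (p : ℤ_[p]) ^ n ∣ (1 : ℤ_[p]) - 1 by simp)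
    · intro n i j
      have h1 : (((v n)⁻¹ : ℤ_[p]ˣ) : ℤ_[p]) * ((v n : ℤ_[p]ˣ) : ℤ_[p]) = 1 := Units.inv_mul _
      have h2 : ((u : ℤ_[p])) * ((u⁻¹ : ℤ_[p]ˣ) : ℤ_[p]) = 1 := Units.mul_inv _
      have hdvd' : (p : ℤ_[p]) ^ n ∣ (((v n)⁻¹ : ℤ_[p]ˣ) : ℤ_[p]) - ((u⁻¹ : ℤ_[p]ˣ) : ℤ_[p]) := by
        have hident : (((v n)⁻¹ : ℤ_[p]ˣ) : ℤ_[p]) - ((u⁻¹ : ℤ_[p]ˣ) : ℤ_[p])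
            = (((v n)⁻¹ : ℤ_[p]ˣ) : ℤ_[p]) * ((u : ℤ_[p]) - ((v n : ℤ_[p]ˣ) : ℤ_[p]))
              * ((u⁻¹ : ℤ_[p]ˣ) : ℤ_[p]) := by
          linear_combination ((u⁻¹ : ℤ_[p]ˣ) : ℤ_[p]) * h1 - (((v n)⁻¹ : ℤ_[p]ˣ) : ℤ_[p]) * h2
        rw [hident]
        have hneg : ((u : ℤ_[p])) - ((v n : ℤ_[p]ˣ) : ℤ_[p])
            = -(((v n : ℤ_[p]ˣ) : ℤ_[p]) - (u : ℤ_[p])) := by ring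
        refine Dvd.dvd.mul_right (Dvd.dvd.mul_left ?_ _) _
        rw [hneg]
        exact dvd_neg.mpr (hvd n)
      fin_cases i <;> fin_cases j
      · refine norm_le_of_dvd ?_
        show (p : ℤ_[p]) ^ n ∣ (((v n)⁻¹ : ℤ_[p]ˣ) : ℤ_[p]) - ((u⁻¹ : ℤ_[p]ˣ) : ℤ_[p])
        exact hdvd'
      · exact norm_le_of_dvd (show (p : ℤ_[p]) ^ n ∣ (0 : ℤ_[p]) - 0 by simp)
      · exact norm_le_of_dvd (show (p : ℤ_[p]) ^ n ∣ (0 : ℤ_[p]) - 0 by simp)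
      · exact norm_le_of_dvd (show (p : ℤ_[p]) ^ n ∣ (1 : ℤ_[p]) - 1 by simp)
end

section
/- Let p be an odd prime and let ζ ∈ ℤ_pˣ be a unit of the p-adic integers whose reduction modulo p generates the cyclic group (ℤ/pℤ)ˣ. Then the closure (with respect to the p-adic topology) of the subgroup of GL₂(ℤ_p) generated by the four matrices P⁺ = [[1,1],[0,1]], P₋ = [[1,0],[1,1]], M_ζ = [[ζ,0],[0,1]], and P_{1+p} = [[1+p,0],[0,1]] is all of GL₂(ℤ_p). -/
open Matrix

lemma fin_two_matrix_ext {α : Type*} {a b c d a' b' c' d' : α}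
    (h1 : a = a') (h2 : b = b') (h3 : c = c') (h4 : d = d') :
    !![a, b; c, d] = !![a', b'; c', d'] := by
  subst h1 h2 h3 h4; rfl

section Aux

variable {p : ℕ} [Fact p.Prime]

/-- Upper unipotent. -/
noncomputable def Eu (x : ℤ_[p]) : GL (Fin 2) ℤ_[p] :=
  ⟨!![1, x; 0, 1], !![1, -x; 0, 1],
    by rw [mul_fin_two, one_fin_two]; congr 1 <;> ring,
    by rw [mul_fin_two, one_fin_two]; congr 1 <;> ring⟩

/-- Lower unipotent. -/
noncomputable def Fu (x : ℤ_[p]) : GL (Fin 2) ℤ_[p] :=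
  ⟨!![1, 0; x, 1], !![1, 0; -x, 1],
    by rw [mul_fin_two, one_fin_two]; congr 1 <;> ring,
    by rw [mul_fin_two, one_fin_two]; congr 1 <;> ring⟩

/-- Diagonal diag(u, v). -/
noncomputable def Du (u v : ℤ_[p]ˣ) : GL (Fin 2) ℤ_[p] :=
  ⟨!![(u : ℤ_[p]), 0; 0, (v : ℤ_[p])], !![((u⁻¹ : ℤ_[p]ˣ) : ℤ_[p]), 0; 0, ((v⁻¹ : ℤ_[p]ˣ) : ℤ_[p])],
    by rw [mul_fin_two, one_fin_two]; congr 1 <;> simp,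
    by rw [mul_fin_two, one_fin_two]; congr 1 <;> simp⟩

@[simp] lemma Eu_val (x : ℤ_[p]) : (Eu x : Matrix (Fin 2) (Fin 2) ℤ_[p]) = !![1, x; 0, 1] := rfl
@[simp] lemma Fu_val (x : ℤ_[p]) : (Fu x : Matrix (Fin 2) (Fin 2) ℤ_[p]) = !![1, 0; x, 1] := rfl
@[simp] lemma Du_val (u v : ℤ_[p]ˣ) :
    (Du u v : Matrix (Fin 2) (Fin 2) ℤ_[p]) = !![(u : ℤ_[p]), 0; 0, (v : ℤ_[p])] := rfl

lemma Eu_mul (x y : ℤ_[p]) : Eu x * Eu y = Eu (x + y) := by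
  ext : 1
  show (Eu x).val * (Eu y).val = _
  rw [Eu_val, Eu_val, Eu_val, mul_fin_two]; congr 1 <;> ring

lemma Fu_mul (x y : ℤ_[p]) : Fu x * Fu y = Fu (x + y) := by
  ext : 1
  show (Fu x).val * (Fu y).val = _
  rw [Fu_val, Fu_val, Fu_val, mul_fin_two]; congr 1 <;> ring

lemma Du_mul (u v u' v' : ℤ_[p]ˣ) : Du u v * Du u' v' = Du (u * u') (v * v') := by
  ext : 1
  show (Du u v).val * (Du u' v').val = _
  rw [Du_val, Du_val, Du_val, mul_fin_two]; congr 1 <;> simp <;> ring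

end Aux

section Cont

variable {p : ℕ} [Fact p.Prime]

lemma continuous_Eu : Continuous (Eu (p := p)) := by
  rw [Units.continuous_iff]
  constructor
  · apply continuous_matrix
    intro i j
    fin_cases i <;> fin_cases j <;> simp <;> first | exact continuous_const | exact continuous_id
  · apply continuous_matrix
    intro i j
    show Continuous fun x => (!![1, -x; 0, 1] : Matrix (Fin 2) (Fin 2) ℤ_[p]) i j
    fin_cases i <;> fin_cases j <;> simp <;>
      first | exact continuous_const | exact continuous_neg

lemma continuous_Fu : Continuous (Fu (p := p)) := by
  rw [Units.continuous_iff]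
  constructor
  · apply continuous_matrix
    intro i j
    fin_cases i <;> fin_cases j <;> simp <;> first | exact continuous_const | exact continuous_id
  · apply continuous_matrix
    intro i j
    show Continuous fun x => (!![1, 0; -x, 1] : Matrix (Fin 2) (Fin 2) ℤ_[p]) i j
    fin_cases i <;> fin_cases j <;> simp <;>
      first | exact continuous_const | exact continuous_neg

lemma continuous_Du : Continuous (fun u : ℤ_[p]ˣ => Du u 1) := by
  rw [Units.continuous_iff]
  constructor
  · apply continuous_matrix
    intro i j
    show Continuous fun u : ℤ_[p]ˣ => (!![(u : ℤ_[p]), 0; 0, 1] : Matrix (Fin 2) (Fin 2) ℤ_[p]) i j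
    fin_cases i <;> fin_cases j <;> simp <;>
      first | exact continuous_const | exact Units.continuous_val
  · apply continuous_matrix
    intro i j
    show Continuous fun u : ℤ_[p]ˣ =>
      (!![((u⁻¹ : ℤ_[p]ˣ) : ℤ_[p]), 0; 0, 1] : Matrix (Fin 2) (Fin 2) ℤ_[p]) i j
    fin_cases i <;> fin_cases j <;> simp <;>
      first | exact continuous_const | exact Units.continuous_coe_inv

end Cont

section GLGen

variable {p : ℕ} [hp : Fact p.Prime]

noncomputable def Wu : GL (Fin 2) ℤ_[p] :=
  ⟨!![0, -1; 1, 0], !![0, 1; -1, 0],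
    by rw [mul_fin_two, one_fin_two]; congr 1 <;> ring,
    by rw [mul_fin_two, one_fin_two]; congr 1 <;> ring⟩

lemma Wu_eq : (Wu : GL (Fin 2) ℤ_[p]) = Eu (-1) * Fu 1 * Eu (-1) := by
  ext : 1
  show (Wu.val : Matrix (Fin 2) (Fin 2) ℤ_[p]) = (Eu (-1)).val * (Fu 1).val * (Eu (-1)).val
  rw [Eu_val, Fu_val, mul_fin_two, mul_fin_two]
  show (!![0, -1; 1, 0] : Matrix (Fin 2) (Fin 2) ℤ_[p]) = _
  congr 1 <;> ring

lemma Du_one_eq (v : ℤ_[p]ˣ) : (Du 1 v : GL (Fin 2) ℤ_[p]) = Wu * Du v 1 * Wu⁻¹ := by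
  ext : 1
  show (Du 1 v).val = Wu.val * (Du v 1).val * (Wu⁻¹).val
  show (Du 1 v).val = Wu.val * (Du v 1).val * !![0, 1; -1, 0]
  rw [Du_val, Du_val]
  show (!![((1 : ℤ_[p]ˣ) : ℤ_[p]), 0; 0, (v : ℤ_[p])]) =
    !![0, -1; 1, 0] * !![(v : ℤ_[p]), 0; 0, ((1 : ℤ_[p]ˣ) : ℤ_[p])] * !![0, 1; -1, 0]
  rw [mul_fin_two, mul_fin_two]
  congr 1 <;> simp

lemma Du_split (a b : ℤ_[p]ˣ) : (Du a b : GL (Fin 2) ℤ_[p]) = Du a 1 * Du 1 b := by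
  rw [Du_mul, mul_one, one_mul]

theorem glgen (H : Subgroup (GL (Fin 2) ℤ_[p]))
    (hE : ∀ x : ℤ_[p], Eu x ∈ H) (hF : ∀ x : ℤ_[p], Fu x ∈ H)
    (hD : ∀ u : ℤ_[p]ˣ, Du u 1 ∈ H) : H = ⊤ := by
  have hW : (Wu : GL (Fin 2) ℤ_[p]) ∈ H := by
    rw [Wu_eq]; exact mul_mem (mul_mem (hE _) (hF _)) (hE _)
  have hD2 : ∀ u v : ℤ_[p]ˣ, Du u v ∈ H := by
    intro u v
    rw [Du_split, Du_one_eq]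
    exact mul_mem (hD u) (mul_mem (mul_mem hW (hD v)) (inv_mem hW))
  -- main elimination
  have main : ∀ g : GL (Fin 2) ℤ_[p], IsUnit ((g : Matrix (Fin 2) (Fin 2) ℤ_[p]) 0 0) → g ∈ H := by
    intro g ha
    set a := (g : Matrix (Fin 2) (Fin 2) ℤ_[p]) 0 0 with han
    set b := (g : Matrix (Fin 2) (Fin 2) ℤ_[p]) 0 1 with hbn
    set c := (g : Matrix (Fin 2) (Fin 2) ℤ_[p]) 1 0 with hcn
    set d := (g : Matrix (Fin 2) (Fin 2) ℤ_[p]) 1 1 with hdn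
    have hdet : IsUnit (a * d - b * c) := by
      have h1 : IsUnit (g : Matrix (Fin 2) (Fin 2) ℤ_[p]) := g.isUnit
      have h2 := (Matrix.isUnit_iff_isUnit_det _).mp h1
      rwa [Matrix.det_fin_two] at h2
    obtain ⟨ua, hua⟩ := ha
    have hd' : IsUnit (d - c * (↑ua⁻¹ : ℤ_[p]) * b) := by
      have heq : a * (d - c * (↑ua⁻¹ : ℤ_[p]) * b) = a * d - b * c := by
        rw [← hua]
        have h3 : (↑ua : ℤ_[p]) * (↑ua⁻¹ : ℤ_[p]) = 1 := ua.mul_inv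
        linear_combination (-(b * c)) * h3
      exact isUnit_of_mul_isUnit_right (heq ▸ hdet)
    obtain ⟨ud, hud⟩ := hd'
    have hg : g = Fu (c * (↑ua⁻¹ : ℤ_[p])) * Du ua ud * Eu ((↑ua⁻¹ : ℤ_[p]) * b) := by
      ext : 1
      show (g : Matrix (Fin 2) (Fin 2) ℤ_[p]) = _
      rw [Matrix.eta_fin_two (g : Matrix (Fin 2) (Fin 2) ℤ_[p])]
      show !![a, b; c, d] =
        (Fu (c * (↑ua⁻¹ : ℤ_[p]))).val * (Du ua ud).val * (Eu ((↑ua⁻¹ : ℤ_[p]) * b)).val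
      rw [Fu_val, Du_val, Eu_val, mul_fin_two, mul_fin_two]
      have h3 : (↑ua : ℤ_[p]) * (↑ua⁻¹ : ℤ_[p]) = 1 := ua.mul_inv
      have hd2 : d = (↑ud : ℤ_[p]) + c * (↑ua⁻¹ : ℤ_[p]) * b := by rw [hud]; ring
      rw [← hua, hd2]
      refine fin_two_matrix_ext ?_ ?_ ?_ ?_
      · ring
      · linear_combination (-b) * h3
      · linear_combination (-c) * h3
      · linear_combination (-(c * (↑ua⁻¹ : ℤ_[p]) * b)) * h3
    rw [hg]
    exact mul_mem (mul_mem (hF _) (hD2 _ _)) (hE _)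
  rw [eq_top_iff]
  intro g _
  by_cases ha : IsUnit ((g : Matrix (Fin 2) (Fin 2) ℤ_[p]) 0 0)
  · exact main g ha
  · have hc : IsUnit ((g : Matrix (Fin 2) (Fin 2) ℤ_[p]) 1 0) := by
      by_contra hc
      have hdet : IsUnit ((g : Matrix (Fin 2) (Fin 2) ℤ_[p]).det) :=
        (Matrix.isUnit_iff_isUnit_det _).mp g.isUnit
      rw [Matrix.det_fin_two] at hdet
      have hmem : ∀ x : ℤ_[p], ¬IsUnit x → x ∈ IsLocalRing.maximalIdeal ℤ_[p] := fun x hx => hx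
      have h1 := Ideal.mul_mem_right ((g : Matrix (Fin 2) (Fin 2) ℤ_[p]) 1 1) _ (hmem _ ha)
      have h2 := Ideal.mul_mem_left _ ((g : Matrix (Fin 2) (Fin 2) ℤ_[p]) 0 1) (hmem _ hc)
      have h3 := Ideal.sub_mem _ h1 h2
      exact (IsLocalRing.maximalIdeal.isMaximal ℤ_[p]).ne_top
        (Ideal.eq_top_of_isUnit_mem _ h3 hdet)
    have hkey : IsUnit (((Eu 1 * g : GL (Fin 2) ℤ_[p]) : Matrix (Fin 2) (Fin 2) ℤ_[p]) 0 0) := by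
      have heq : ((Eu 1 * g : GL (Fin 2) ℤ_[p]) : Matrix (Fin 2) (Fin 2) ℤ_[p]) 0 0 =
          (g : Matrix (Fin 2) (Fin 2) ℤ_[p]) 0 0 + (g : Matrix (Fin 2) (Fin 2) ℤ_[p]) 1 0 := by
        have : ((Eu 1 * g : GL (Fin 2) ℤ_[p]) : Matrix (Fin 2) (Fin 2) ℤ_[p])
            = (Eu 1).val * Units.val g := rfl
        rw [this, Matrix.mul_apply, Fin.sum_univ_two, Eu_val]
        simp
      rw [heq]
      by_contra hac
      have hmem : ∀ x : ℤ_[p], ¬IsUnit x → x ∈ IsLocalRing.maximalIdeal ℤ_[p] := fun x hx => hx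
      have h1 := Ideal.sub_mem _ (hmem _ hac) (hmem _ ha)
      rw [add_sub_cancel_left] at h1
      exact (mem_nonunits_iff.mp ((IsLocalRing.mem_maximalIdeal _).mp h1)) hc
    have := main _ hkey
    have hg : g = (Eu 1)⁻¹ * (Eu 1 * g) := by group
    rw [hg]
    exact mul_mem (inv_mem (hE 1)) this
  
end GLGen


section Key

variable {p : ℕ} [hp : Fact p.Prime]

lemma key_emult (hodd : Odd p) (j : ℕ) :
    emultiplicity (p : ℤ) ((1 + p : ℤ) ^ (p ^ j) - 1) = (j + 1 : ℕ) := by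
  have hx : ¬ (p : ℤ) ∣ (1 + p : ℤ) := by
    intro hdvd
    have h2 : (p : ℤ) ∣ 1 := (dvd_add_right (dvd_refl _)).mp (by simpa [add_comm] using hdvd)
    have h3 : p ∣ 1 := by exact_mod_cast h2
    have h4 := Nat.le_of_dvd one_pos h3
    have h5 := hp.out.two_le
    omega
  have h := Int.emultiplicity_pow_sub_pow hp.out hodd
    (x := (1 + p : ℤ)) (y := 1) (by simp) hx (p ^ j)
  rw [one_pow, add_sub_cancel_left] at h
  rw [h]
  have hpz : Prime (p : ℤ) := Nat.prime_iff_prime_int.mp hp.out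
  have h1 : emultiplicity (p : ℤ) ((p : ℤ) ^ 1) = 1 := emultiplicity_pow_self_of_prime hpz 1
  rw [pow_one] at h1
  have h2 : emultiplicity p (p ^ j) = j := emultiplicity_pow_self_of_prime hp.out.prime j
  rw [h1, h2]
  norm_cast
  rw [add_comm]

/-- `(1+p)^(p^(k-1)) ≡ 1 mod p^k`. -/
lemma key_dvd (hodd : Odd p) (k : ℕ) :
    (p : ℤ) ^ (k + 1) ∣ (1 + p : ℤ) ^ (p ^ k) - 1 := by
  rw [pow_dvd_iff_le_emultiplicity, key_emult hodd k]

lemma key_not_dvd (hodd : Odd p) (k : ℕ) :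
    ¬ (p : ℤ) ^ (k + 2) ∣ (1 + p : ℤ) ^ (p ^ k) - 1 := by
  apply not_pow_dvd_of_emultiplicity_lt
  rw [key_emult hodd k]
  exact_mod_cast Nat.lt_succ_self _

end Key

section ZModPart

variable {p : ℕ} [hp : Fact p.Prime]

lemma zmod_pow_eq_one_iff (k N : ℕ) :
    ((1 + p : ZMod (p ^ k))) ^ N = 1 ↔ (p : ℤ) ^ k ∣ (1 + p : ℤ) ^ N - 1 := by
  have : ((1 + p : ZMod (p ^ k))) ^ N - 1 = ((((1 + p : ℤ) ^ N - 1 : ℤ)) : ZMod (p ^ k)) := by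
    push_cast
    ring
  rw [← sub_eq_zero, this, ZMod.intCast_zmod_eq_zero_iff_dvd]
  push_cast
  rfl

lemma orderOf_one_add_p (hodd : Odd p) (k : ℕ) (hk : 1 ≤ k) (β : (ZMod (p ^ k))ˣ)
    (hβ : (β : ZMod (p ^ k)) = 1 + p) : orderOf β = p ^ (k - 1) := by
  have hpow : ∀ N : ℕ, β ^ N = 1 ↔ ((1 + p : ZMod (p ^ k))) ^ N = 1 := by
    intro N
    rw [← hβ]
    constructor
    · intro h
      have := congrArg (Units.val) h
      simpa using this
    · intro h
      ext
      simpa using h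
  have h1 : β ^ (p ^ (k - 1)) = 1 := by
    rw [hpow, zmod_pow_eq_one_iff]
    have := key_dvd hodd (k - 1)
    rwa [Nat.sub_add_cancel hk] at this
  have horder : orderOf β ∣ p ^ (k - 1) := orderOf_dvd_of_pow_eq_one h1
  obtain ⟨m, hm, hord⟩ := (Nat.dvd_prime_pow hp.out).mp horder
  rcases Nat.lt_or_ge m (k - 1) with hlt | hge
  · exfalso
    have hdvd2 : orderOf β ∣ p ^ (k - 2) := by
      rw [hord]
      exact pow_dvd_pow p (by omega)
    have h2 : β ^ (p ^ (k - 2)) = 1 := orderOf_dvd_iff_pow_eq_one.mp hdvd2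
    rw [hpow, zmod_pow_eq_one_iff] at h2
    have := key_not_dvd hodd (k - 2)
    rw [show k - 2 + 2 = k by omega] at this
    exact this h2
  · rw [hord]
    congr 1
    omega

lemma zmod_units_top (hodd : Odd p) (k : ℕ) (hk : 1 ≤ k) (G : Subgroup (ZMod (p ^ k))ˣ)
    (β γ : (ZMod (p ^ k))ˣ) (hβ : (β : ZMod (p ^ k)) = 1 + p) (hγord : (p - 1) ∣ orderOf γ)
    (hβG : β ∈ G) (hγG : γ ∈ G) : G = ⊤ := by
  haveI : NeZero (p ^ k) := ⟨pow_ne_zero _ hp.out.pos.ne'⟩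
  have hcard_dvd : ∀ x : (ZMod (p ^ k))ˣ, x ∈ G → orderOf x ∣ Nat.card G := by
    intro x hx
    have : orderOf (⟨x, hx⟩ : G) = orderOf x := by
      exact (orderOf_injective G.subtype (Subgroup.subtype_injective G) ⟨x, hx⟩).symm
    rw [← this]
    exact orderOf_dvd_natCard _
  have hβdvd : p ^ (k - 1) ∣ Nat.card G := by
    rw [← orderOf_one_add_p hodd k hk β hβ]
    exact hcard_dvd β hβG
  have hγdvd : (p - 1) ∣ Nat.card G := hγord.trans (hcard_dvd γ hγG)
  have hcop : Nat.Coprime (p ^ (k - 1)) (p - 1) := by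
    apply Nat.Coprime.pow_left
    apply (Nat.Prime.coprime_iff_not_dvd hp.out).mpr
    intro hdvd
    have h2 := hp.out.two_le
    have := Nat.le_of_dvd (by omega) hdvd
    omega
  have hmul : p ^ (k - 1) * (p - 1) ∣ Nat.card G := hcop.mul_dvd_of_dvd_of_dvd hβdvd hγdvd
  have hcardtot : Nat.card (ZMod (p ^ k))ˣ = p ^ (k - 1) * (p - 1) := by
    rw [Nat.card_eq_fintype_card, ZMod.card_units_eq_totient,
      Nat.totient_prime_pow hp.out (by omega : 0 < k)]
  have hle : Nat.card G ∣ p ^ (k - 1) * (p - 1) := by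
    rw [← hcardtot]
    exact Subgroup.card_subgroup_dvd_card G
  apply Subgroup.eq_top_of_card_eq G
  rw [hcardtot]
  exact Nat.dvd_antisymm hle hmul

end ZModPart

section PadicUnits

variable {p : ℕ} [hp : Fact p.Prime]

lemma castHom_comp_toZModPow (k : ℕ) (hk : 1 ≤ k) :
    (ZMod.castHom (dvd_pow_self p (by omega : k ≠ 0)) (ZMod p)).comp
      (PadicInt.toZModPow (p := p) k) = PadicInt.toZMod := by
  apply ZMod.ringHom_eq_of_ker_eq
  rw [PadicInt.ker_toZMod, PadicInt.maximalIdeal_eq_span_p]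
  ext x
  simp only [RingHom.mem_ker, RingHom.comp_apply]
  constructor
  · intro h
    set a := PadicInt.toZModPow (p := p) k x with ha
    have hcast : (ZMod.castHom (dvd_pow_self p (by omega : k ≠ 0)) (ZMod p)) a
        = ((a.val : ℕ) : ZMod p) := by
      rw [ZMod.castHom_apply, ← ZMod.natCast_val]
    rw [hcast, ZMod.natCast_eq_zero_iff] at h
    have h1 : PadicInt.toZModPow (p := p) k ((a.val : ℤ_[p])) = a := by
      rw [_root_.map_natCast, ZMod.natCast_val, ZMod.cast_id]
    have h2 : x - (a.val : ℤ_[p]) ∈ RingHom.ker (PadicInt.toZModPow (p := p) k) := by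
      rw [RingHom.mem_ker, _root_.map_sub, h1, ha, sub_self]
    rw [PadicInt.ker_toZModPow, Ideal.mem_span_singleton] at h2
    have h3 : (p : ℤ_[p]) ∣ (a.val : ℤ_[p]) := by
      obtain ⟨c, hc⟩ := h
      exact ⟨(c : ℤ_[p]), by exact_mod_cast congrArg (Nat.cast : ℕ → ℤ_[p]) hc⟩
    have h4 : (p : ℤ_[p]) ∣ x - (a.val : ℤ_[p]) :=
      dvd_trans (dvd_pow_self _ (by omega : k ≠ 0)) h2
    rw [Ideal.mem_span_singleton]
    have := dvd_add h4 h3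
    simpa using this
  · intro h
    rw [Ideal.mem_span_singleton] at h
    obtain ⟨c, hc⟩ := h
    rw [hc, _root_.map_mul, _root_.map_natCast, _root_.map_mul, _root_.map_natCast, ZMod.natCast_self, zero_mul]

lemma padic_units_top (hodd : Odd p) (U : Subgroup ℤ_[p]ˣ)
    (hU : IsClosed (U : Set ℤ_[p]ˣ)) (ζ : ℤ_[p]ˣ)
    (hζ : Subgroup.zpowers (Units.map (PadicInt.toZMod (p := p)).toMonoidHom ζ) = ⊤)
    (hζU : ζ ∈ U) (u₀ : ℤ_[p]ˣ) (hu₀ : (u₀ : ℤ_[p]) = 1 + p) (hu₀U : u₀ ∈ U) : U = ⊤ := by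
  rw [eq_top_iff]
  intro u _
  -- reduce to closure
  have hmaptop : ∀ k : ℕ, 1 ≤ k →
      U.map (Units.map (PadicInt.toZModPow (p := p) k).toMonoidHom) = ⊤ := by
    intro k hk
    set π := Units.map (PadicInt.toZModPow (p := p) k).toMonoidHom with hπ
    apply zmod_units_top hodd k hk _ (π u₀) (π ζ)
    · show (PadicInt.toZModPow (p := p) k) (u₀ : ℤ_[p]) = 1 + p
      rw [hu₀, _root_.map_add, _root_.map_one, _root_.map_natCast]
    · -- (p-1) ∣ orderOf (π ζ)
      have hval : (Units.map (ZMod.castHom (dvd_pow_self p (by omega : k ≠ 0))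
          (ZMod p)).toMonoidHom) (π ζ) = Units.map (PadicInt.toZMod (p := p)).toMonoidHom ζ := by
        ext
        show (ZMod.castHom _ (ZMod p)) ((PadicInt.toZModPow (p := p) k) (ζ : ℤ_[p]))
          = PadicInt.toZMod (ζ : ℤ_[p])
        rw [← RingHom.comp_apply, castHom_comp_toZModPow k hk]
      have hord : orderOf (Units.map (PadicInt.toZMod (p := p)).toMonoidHom ζ) = p - 1 := by
        rw [orderOf_eq_card_of_forall_mem_zpowers (by rw [hζ] at *; intro x; exact hζ ▸ trivial),
          Nat.card_eq_fintype_card, ZMod.card_units]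
      rw [← hord, ← hval]
      exact orderOf_map_dvd _ _
    · exact Subgroup.mem_map_of_mem _ hu₀U
    · exact Subgroup.mem_map_of_mem _ hζU
  have hemb : Topology.IsOpenEmbedding (Units.val : ℤ_[p]ˣ → ℤ_[p]) :=
    Units.isOpenEmbedding_val
  have hclos : u ∈ closure (U : Set ℤ_[p]ˣ) := by
    rw [hemb.toIsEmbedding.closure_eq_preimage_closure_image, Set.mem_preimage,
      Metric.mem_closure_iff]
    intro ε hε
    obtain ⟨n, hn⟩ := PadicInt.exists_pow_neg_lt p hε
    set k := max n 1 with hkdef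
    have hmt := hmaptop k (le_max_right n 1)
    have hmem : Units.map (PadicInt.toZModPow (p := p) k).toMonoidHom u ∈
        U.map (Units.map (PadicInt.toZModPow (p := p) k).toMonoidHom) := by
      rw [hmt]; trivial
    obtain ⟨v, hvU, hv⟩ := Subgroup.mem_map.mp hmem
    refine ⟨(v : ℤ_[p]), Set.mem_image_of_mem _ hvU, ?_⟩
    have hveq : (PadicInt.toZModPow (p := p) k) (v : ℤ_[p])
        = (PadicInt.toZModPow (p := p) k) (u : ℤ_[p]) := congrArg Units.val hv
    have hker : (u : ℤ_[p]) - (v : ℤ_[p]) ∈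
        RingHom.ker (PadicInt.toZModPow (p := p) k) := by
      rw [RingHom.mem_ker, _root_.map_sub, hveq, sub_self]
    rw [PadicInt.ker_toZModPow, ← PadicInt.norm_le_pow_iff_mem_span_pow] at hker
    rw [dist_eq_norm]
    refine lt_of_le_of_lt (hker.trans ?_) hn
    apply zpow_le_zpow_right₀
    · exact_mod_cast hp.out.one_lt.le
    · omega
  rwa [hU.closure_eq] at hclos

end PadicUnits

section Glue

variable {p : ℕ} [hp : Fact p.Prime]

lemma inv_Eu (x : ℤ_[p]) : (Eu x)⁻¹ = Eu (-x) := by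
  ext : 1
  rfl

lemma Eu_zero : Eu (0 : ℤ_[p]) = 1 := by
  ext : 1
  show (!![1, 0; 0, 1] : Matrix (Fin 2) (Fin 2) ℤ_[p]) = 1
  rw [one_fin_two]

lemma Eu_zpow (n : ℤ) : (Eu (1 : ℤ_[p])) ^ n = Eu (n : ℤ_[p]) := by
  induction n using Int.induction_on with
  | zero => rw [zpow_zero]; exact (by push_cast; rw [Eu_zero] : Eu ((0 : ℤ) : ℤ_[p]) = 1).symm
  | succ n ih => rw [_root_.zpow_add_one, ih, Eu_mul]; push_cast; ring_nf
  | pred n ih => rw [_root_.zpow_sub_one, ih, inv_Eu, Eu_mul]; push_cast; ring_nf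

lemma inv_Fu (x : ℤ_[p]) : (Fu x)⁻¹ = Fu (-x) := by
  ext : 1
  rfl

lemma Fu_zero : Fu (0 : ℤ_[p]) = 1 := by
  ext : 1
  show (!![1, 0; 0, 1] : Matrix (Fin 2) (Fin 2) ℤ_[p]) = 1
  rw [one_fin_two]

lemma Fu_zpow (n : ℤ) : (Fu (1 : ℤ_[p])) ^ n = Fu (n : ℤ_[p]) := by
  induction n using Int.induction_on with
  | zero => rw [zpow_zero]; exact (by push_cast; rw [Fu_zero] : Fu ((0 : ℤ) : ℤ_[p]) = 1).symm
  | succ n ih => rw [_root_.zpow_add_one, ih, Fu_mul]; push_cast; ring_nf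
  | pred n ih => rw [_root_.zpow_sub_one, ih, inv_Fu, Fu_mul]; push_cast; ring_nf

lemma isUnit_one_add_p : IsUnit (1 + (p : ℤ_[p])) := by
  by_contra h
  have h1 : (1 + (p : ℤ_[p])) ∈ IsLocalRing.maximalIdeal ℤ_[p] := h
  have h2 : (p : ℤ_[p]) ∈ IsLocalRing.maximalIdeal ℤ_[p] := by
    rw [PadicInt.maximalIdeal_eq_span_p]
    exact Ideal.mem_span_singleton_self _
  have h3 := Ideal.sub_mem _ h1 h2
  rw [add_sub_cancel_right] at h3
  exact (IsLocalRing.maximalIdeal.isMaximal ℤ_[p]).ne_top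
    (Ideal.eq_top_of_isUnit_mem _ h3 isUnit_one)

end Glue

/-- Let `p` be an odd prime and `ζ ∈ ℤ_pˣ` a unit whose reduction mod `p`
generates `(ℤ/pℤ)ˣ`. Then the topological closure of the subgroup of `GL₂(ℤ_p)` generated by
`P⁺ = [[1,1],[0,1]]`, `P₋ = [[1,0],[1,1]]`, `M_ζ = [[ζ,0],[0,1]]` and
`P_{1+p} = [[1+p,0],[0,1]]` is all of `GL₂(ℤ_p)`. -/
theorem stmt_1 (p : ℕ) [Fact p.Prime] (hp : p ≠ 2) (ζ : ℤ_[p]ˣ)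
    (hζ : Subgroup.zpowers (Units.map (PadicInt.toZMod (p := p)).toMonoidHom ζ) = ⊤) :
    (Subgroup.closure {g : GL (Fin 2) ℤ_[p] |
        (g : Matrix (Fin 2) (Fin 2) ℤ_[p]) ∈
          ({!![1, 1; 0, 1], !![1, 0; 1, 1], !![(ζ : ℤ_[p]), 0; 0, 1],
            !![1 + (p : ℤ_[p]), 0; 0, 1]} :
            Set (Matrix (Fin 2) (Fin 2) ℤ_[p]))}).topologicalClosure = ⊤ := by
  have hodd : Odd p := (Fact.out : p.Prime).odd_of_ne_two hp
  set S := Subgroup.closure {g : GL (Fin 2) ℤ_[p] |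
      (g : Matrix (Fin 2) (Fin 2) ℤ_[p]) ∈
        ({!![1, 1; 0, 1], !![1, 0; 1, 1], !![(ζ : ℤ_[p]), 0; 0, 1],
          !![1 + (p : ℤ_[p]), 0; 0, 1]} :
          Set (Matrix (Fin 2) (Fin 2) ℤ_[p]))} with hS
  obtain ⟨u₀, hu₀⟩ := isUnit_one_add_p (p := p)
  -- generators are in S
  have hEu1 : Eu (1 : ℤ_[p]) ∈ S := by
    apply Subgroup.subset_closure
    simp only [Set.mem_setOf_eq, Eu_val]
    exact Set.mem_insert _ _
  have hFu1 : Fu (1 : ℤ_[p]) ∈ S := by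
    apply Subgroup.subset_closure
    simp only [Set.mem_setOf_eq, Fu_val]
    exact Set.mem_insert_of_mem _ (Set.mem_insert _ _)
  have hDζ : Du ζ 1 ∈ S := by
    apply Subgroup.subset_closure
    simp only [Set.mem_setOf_eq, Du_val, Units.val_one]
    exact Set.mem_insert_of_mem _ (Set.mem_insert_of_mem _ (Set.mem_insert _ _))
  have hDu₀ : Du u₀ 1 ∈ S := by
    apply Subgroup.subset_closure
    simp only [Set.mem_setOf_eq, Du_val, Units.val_one, hu₀]
    exact Set.mem_insert_of_mem _ (Set.mem_insert_of_mem _ (Set.mem_insert_of_mem _ rfl))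
  -- closure contains all Eu, Fu
  have hEint : ∀ n : ℤ, Eu ((n : ℤ) : ℤ_[p]) ∈ S := fun n => by rw [← Eu_zpow n]; exact zpow_mem hEu1 n
  have hFint : ∀ n : ℤ, Fu ((n : ℤ) : ℤ_[p]) ∈ S := fun n => by rw [← Fu_zpow n]; exact zpow_mem hFu1 n
  have hE : ∀ x : ℤ_[p], Eu x ∈ S.topologicalClosure := by
    intro x
    have hx : x ∈ closure (Set.range (Int.cast : ℤ → ℤ_[p])) := PadicInt.denseRange_intCast x
    have hmt : Set.MapsTo Eu (Set.range (Int.cast : ℤ → ℤ_[p])) (S : Set (GL (Fin 2) ℤ_[p])) := by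
      rintro y ⟨n, rfl⟩
      exact hEint n
    exact map_mem_closure continuous_Eu hx hmt
  have hF : ∀ x : ℤ_[p], Fu x ∈ S.topologicalClosure := by
    intro x
    have hx : x ∈ closure (Set.range (Int.cast : ℤ → ℤ_[p])) := PadicInt.denseRange_intCast x
    have hmt : Set.MapsTo Fu (Set.range (Int.cast : ℤ → ℤ_[p])) (S : Set (GL (Fin 2) ℤ_[p])) := by
      rintro y ⟨n, rfl⟩
      exact hFint n
    exact map_mem_closure continuous_Fu hx hmt
  -- the diagonal part
  have hD : ∀ u : ℤ_[p]ˣ, Du u 1 ∈ S.topologicalClosure := by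
    have hDhom : ∀ u v : ℤ_[p]ˣ, Du u 1 * Du v 1 = Du (u * v) 1 := by
      intro u v
      rw [Du_mul, mul_one]
    set DuHom : ℤ_[p]ˣ →* GL (Fin 2) ℤ_[p] :=
      MonoidHom.mk' (fun u => Du u 1) (fun u v => (hDhom u v).symm) with hDuHom
    set U : Subgroup ℤ_[p]ˣ := S.topologicalClosure.comap DuHom with hU
    have hUclosed : IsClosed (U : Set ℤ_[p]ˣ) := by
      rw [hU, Subgroup.coe_comap]
      exact (Subgroup.isClosed_topologicalClosure S).preimage continuous_Du
    have hζU : ζ ∈ U := Subgroup.le_topologicalClosure S hDζ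
    have hu₀U : u₀ ∈ U := Subgroup.le_topologicalClosure S hDu₀
    have htop := padic_units_top hodd U hUclosed ζ hζ hζU u₀ hu₀ hu₀U
    intro u
    have : u ∈ U := htop ▸ Subgroup.mem_top u
    exact this
  exact glgen S.topologicalClosure hE hF hD
end

section
/- Let p be a prime and N a positive integer. The image of the natural map SL_N(ℤ) → SL_N(ℤ_p), induced by the canonical ring homomorphism ℤ → ℤ_p applied entrywise, is dense in SL_N(ℤ_p) with respect to the p-adic topology. -/
open Matrix Finset

namespace Stmt7Aux

variable {R : Type*} [CommRing R] {S : Type*} [CommRing S]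

/-- The set of transvection matrices. -/
def Tv (n : ℕ) (R : Type*) [CommRing R] : Set (Matrix (Fin n) (Fin n) R) :=
  {A | ∃ i j : Fin n, ∃ c : R, i ≠ j ∧ A = Matrix.transvection i j c}

lemma tv_mem_closure {n : ℕ} {i j : Fin n} (h : i ≠ j) (c : R) :
    Matrix.transvection i j c ∈ Submonoid.closure (Tv n R) :=
  Submonoid.subset_closure ⟨i, j, c, h, rfl⟩

lemma det_eq_one_of_mem {n : ℕ} {M : Matrix (Fin n) (Fin n) R}
    (h : M ∈ Submonoid.closure (Tv n R)) : M.det = 1 := by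
  induction h using Submonoid.closure_induction with
  | mem x hx => obtain ⟨i, j, c, hij, rfl⟩ := hx; exact det_transvection_of_ne i j hij c
  | one => exact det_one
  | mul x y _ _ hx hy => rw [det_mul, hx, hy, one_mul]

lemma cancel_left {n : ℕ} {i j : Fin n} (h : i ≠ j) (c : R)
    {M : Matrix (Fin n) (Fin n) R}
    (hM : Matrix.transvection i j c * M ∈ Submonoid.closure (Tv n R)) :
    M ∈ Submonoid.closure (Tv n R) := by
  have : M = Matrix.transvection i j (-c) * (Matrix.transvection i j c * M) := by
    rw [← mul_assoc, transvection_mul_transvection_same _ _ h, neg_add_cancel,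
      transvection_zero, one_mul]
  rw [this]
  exact mul_mem (tv_mem_closure h _) hM
lemma exists_isUnit_of_isUnit_sum [IsLocalRing R] {ι : Type*} [DecidableEq ι] (s : Finset ι)
    (f : ι → R) (h : IsUnit (∑ i ∈ s, f i)) : ∃ i ∈ s, IsUnit (f i) := by
  induction s using Finset.induction with
  | empty => simp only [Finset.sum_empty] at h; exact absurd h (by simp)
  | @insert a s ha ih =>
    rw [Finset.sum_insert ha] at h
    rcases IsLocalRing.isUnit_or_isUnit_of_isUnit_add h with h1 | h2
    · exact ⟨a, Finset.mem_insert_self a s, h1⟩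
    · obtain ⟨i, hi, hu⟩ := ih h2
      exact ⟨i, Finset.mem_insert_of_mem hi, hu⟩

lemma isUnit_add_of_isUnit_right [IsLocalRing R] {a b : R} (ha : ¬IsUnit a) (hb : IsUnit b) :
    IsUnit (a + b) := by
  have : IsUnit (a + b + -a) := by simpa [add_comm] using hb
  rcases IsLocalRing.isUnit_or_isUnit_of_isUnit_add this with h | h
  · exact h
  · exact absurd (IsUnit.neg_iff a |>.mp h) ha

/-- `1 + ∑ column stdBasisMatrices` is a product of transvections. -/
lemma one_add_sum_col_mem {n : ℕ} (s : Finset (Fin (n+1))) (hs : (0 : Fin (n+1)) ∉ s)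
    (f : Fin (n+1) → R) :
    (1 + ∑ i ∈ s, Matrix.single i (0 : Fin (n+1)) (f i)) ∈ Submonoid.closure (Tv (n+1) R) := by
  induction s using Finset.induction with
  | empty => simpa using one_mem _
  | @insert a s ha ih =>
    have ha0 : a ≠ 0 := fun h => hs (h ▸ Finset.mem_insert_self a s)
    have hs' : (0 : Fin (n+1)) ∉ s := fun h => hs (Finset.mem_insert_of_mem h)
    have hz : Matrix.single a (0 : Fin (n+1)) (f a) *
        (∑ i ∈ s, Matrix.single i (0 : Fin (n+1)) (f i)) = 0 := by
      rw [Finset.mul_sum]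
      refine Finset.sum_eq_zero fun i hi => ?_
      refine Matrix.single_mul_single_of_ne _ _ _ _ (fun h => hs' ?_) _
      rwa [← h] at hi
    have key : (1 + ∑ i ∈ insert a s, Matrix.single i (0 : Fin (n+1)) (f i)) =
        Matrix.transvection a 0 (f a) * (1 + ∑ i ∈ s, Matrix.single i (0 : Fin (n+1)) (f i)) := by
      rw [Matrix.transvection, Finset.sum_insert ha, add_mul, one_mul, mul_add, mul_one, hz,
        add_zero]
      abel
    rw [key]
    exact mul_mem (tv_mem_closure ha0 _) (ih hs')

/-- `1 + ∑ row stdBasisMatrices` is a product of transvections. -/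
lemma one_add_sum_row_mem {n : ℕ} (s : Finset (Fin (n+1))) (hs : (0 : Fin (n+1)) ∉ s)
    (f : Fin (n+1) → R) :
    (1 + ∑ j ∈ s, Matrix.single (0 : Fin (n+1)) j (f j)) ∈ Submonoid.closure (Tv (n+1) R) := by
  induction s using Finset.induction with
  | empty => simpa using one_mem _
  | @insert a s ha ih =>
    have ha0 : a ≠ 0 := fun h => hs (h ▸ Finset.mem_insert_self a s)
    have hs' : (0 : Fin (n+1)) ∉ s := fun h => hs (Finset.mem_insert_of_mem h)
    have hz : (∑ j ∈ s, Matrix.single (0 : Fin (n+1)) j (f j)) *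
        Matrix.single (0 : Fin (n+1)) a (f a) = 0 := by
      rw [Finset.sum_mul]
      refine Finset.sum_eq_zero fun j hj => ?_
      refine Matrix.single_mul_single_of_ne _ _ _ _ (fun h => hs' ?_) _
      rwa [h] at hj
    have key : (1 + ∑ j ∈ insert a s, Matrix.single (0 : Fin (n+1)) j (f j)) =
        (1 + ∑ j ∈ s, Matrix.single (0 : Fin (n+1)) j (f j)) *
          Matrix.transvection 0 a (f a) := by
      rw [Matrix.transvection, Finset.sum_insert ha, mul_add, mul_one, add_mul, one_mul, hz,
        add_zero]
      abel
    rw [key]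
    exact mul_mem (ih hs') (tv_mem_closure (Ne.symm ha0) _)
lemma left_mul_apply {n : ℕ} (f : Fin (n+1) → R) (M : Matrix (Fin (n+1)) (Fin (n+1)) R)
    (a b : Fin (n+1)) :
    ((1 + ∑ i ∈ Finset.univ.erase 0, Matrix.single i (0 : Fin (n+1)) (f i)) * M) a b =
      M a b + if a = 0 then 0 else f a * M 0 b := by
  rw [add_mul, one_mul, Finset.sum_mul, Matrix.add_apply, Matrix.sum_apply]
  congr 1
  have : ∀ i ∈ Finset.univ.erase (0 : Fin (n+1)),
      (Matrix.single i (0 : Fin (n+1)) (f i) * M) a b =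
        if i = a then f i * M 0 b else 0 := by
    intro i _
    by_cases h : i = a
    · subst h; simp
    · simp [h, Matrix.single_mul_apply_of_ne _ _ _ _ _ (Ne.symm h) _]
  rw [Finset.sum_congr rfl this, Finset.sum_ite_eq']
  by_cases ha : a = 0 <;> simp [ha, Finset.mem_erase]

lemma right_mul_apply {n : ℕ} (f : Fin (n+1) → R) (M : Matrix (Fin (n+1)) (Fin (n+1)) R)
    (a b : Fin (n+1)) :
    (M * (1 + ∑ j ∈ Finset.univ.erase 0, Matrix.single (0 : Fin (n+1)) j (f j))) a b =
      M a b + if b = 0 then 0 else M a 0 * f b := by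
  rw [mul_add, mul_one, Finset.mul_sum, Matrix.add_apply, Matrix.sum_apply]
  congr 1
  have : ∀ j ∈ Finset.univ.erase (0 : Fin (n+1)),
      (M * Matrix.single (0 : Fin (n+1)) j (f j)) a b =
        if j = b then M a 0 * f j else 0 := by
    intro j _
    by_cases h : j = b
    · subst h; simp
    · simp [h, Matrix.mul_single_apply_of_ne _ _ _ _ _ (Ne.symm h) _]
  rw [Finset.sum_congr rfl this, Finset.sum_ite_eq']
  by_cases hb : b = 0 <;> simp [hb, Finset.mem_erase]

/-- Inverse pair for the unipotent column matrices. -/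
lemma col_inv_pair {n : ℕ} (f : Fin (n+1) → R) :
    (1 + ∑ i ∈ Finset.univ.erase 0, Matrix.single i (0 : Fin (n+1)) (f i)) *
      (1 + ∑ i ∈ Finset.univ.erase 0, Matrix.single i (0 : Fin (n+1)) (-f i)) = 1 := by
  have hrow0 : ∀ b, (1 + ∑ i ∈ Finset.univ.erase 0,
      Matrix.single i (0 : Fin (n+1)) (-f i)) 0 b = (1 : Matrix (Fin (n+1)) (Fin (n+1)) R) 0 b := by
    intro b
    rw [Matrix.add_apply, Matrix.sum_apply, Finset.sum_eq_zero, add_zero]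
    intro i hi
    exact Matrix.single_apply_of_row_ne (Finset.mem_erase.mp hi).1 _ _ _
  ext a b
  rw [left_mul_apply]
  rcases eq_or_ne a 0 with rfl | ha
  · rw [if_pos rfl, add_zero, hrow0]
  · rw [if_neg ha, hrow0]
    have hentry : (1 + ∑ i ∈ Finset.univ.erase 0,
        Matrix.single i (0 : Fin (n+1)) (-f i)) a b =
        (1 : Matrix (Fin (n+1)) (Fin (n+1)) R) a b + if b = 0 then -f a else 0 := by
      rw [Matrix.add_apply, Matrix.sum_apply]
      congr 1
      have : ∀ i ∈ Finset.univ.erase (0 : Fin (n+1)),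
          Matrix.single i (0 : Fin (n+1)) (-f i) a b =
            if i = a then (if b = 0 then -f a else 0) else 0 := by
        intro i _
        by_cases h : i = a
        · subst h
          by_cases hb : b = 0
          · subst hb; simp
          · rw [if_pos rfl, if_neg hb]
            exact Matrix.single_apply_of_col_ne _ _ (Ne.symm hb) _
        · simp [h]
      rw [Finset.sum_congr rfl this, Finset.sum_ite_eq', if_pos (by simp [Finset.mem_erase, ha])]
    rw [hentry]
    by_cases hb : b = 0
    · subst hb
      simp [Matrix.one_apply, ha]
    · simp [Matrix.one_apply, hb, Ne.symm hb]

lemma row_inv_pair {n : ℕ} (f : Fin (n+1) → R) :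
    (1 + ∑ j ∈ Finset.univ.erase 0, Matrix.single (0 : Fin (n+1)) j (-f j)) *
      (1 + ∑ j ∈ Finset.univ.erase 0, Matrix.single (0 : Fin (n+1)) j (f j)) = 1 := by
  have hcol0 : ∀ a, (1 + ∑ j ∈ Finset.univ.erase 0,
      Matrix.single (0 : Fin (n+1)) j (-f j)) a 0 =
        (1 : Matrix (Fin (n+1)) (Fin (n+1)) R) a 0 := by
    intro a
    rw [Matrix.add_apply, Matrix.sum_apply, Finset.sum_eq_zero, add_zero]
    intro j hj
    exact Matrix.single_apply_of_col_ne _ _ (Finset.mem_erase.mp hj).1 _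
  ext a b
  rw [right_mul_apply]
  rcases eq_or_ne b 0 with rfl | hb
  · rw [if_pos rfl, add_zero, hcol0]
  · rw [if_neg hb, hcol0]
    have hentry : (1 + ∑ j ∈ Finset.univ.erase 0,
        Matrix.single (0 : Fin (n+1)) j (-f j)) a b =
        (1 : Matrix (Fin (n+1)) (Fin (n+1)) R) a b + if a = 0 then -f b else 0 := by
      rw [Matrix.add_apply, Matrix.sum_apply]
      congr 1
      have : ∀ j ∈ Finset.univ.erase (0 : Fin (n+1)),
          Matrix.single (0 : Fin (n+1)) j (-f j) a b =
            if j = b then (if a = 0 then -f b else 0) else 0 := by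
        intro j _
        by_cases h : j = b
        · subst h
          by_cases ha : a = 0
          · subst ha; simp
          · rw [if_pos rfl, if_neg ha]
            exact Matrix.single_apply_of_row_ne (Ne.symm ha) _ _ _
        · simp [h]
      rw [Finset.sum_congr rfl this, Finset.sum_ite_eq', if_pos (by simp [Finset.mem_erase, hb])]
    rw [hentry]
    by_cases ha : a = 0
    · subst ha
      simp [Matrix.one_apply, Ne.symm hb]
    · simp [Matrix.one_apply, ha, Ne.symm ha]
/-- Embed an `n × n` matrix as the lower-right block of an `(n+1) × (n+1)` matrix with a `1`
in the upper-left corner. -/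
def emb {n : ℕ} (B : Matrix (Fin n) (Fin n) R) : Matrix (Fin (n+1)) (Fin (n+1)) R :=
  Matrix.of fun a b =>
    if ha : a = 0 then (if b = 0 then 1 else 0)
    else if hb : b = 0 then 0 else B (a.pred ha) (b.pred hb)

@[simp] lemma emb_zero_zero {n : ℕ} (B : Matrix (Fin n) (Fin n) R) : emb B 0 0 = 1 := by
  simp [emb]

@[simp] lemma emb_zero_succ {n : ℕ} (B : Matrix (Fin n) (Fin n) R) (b : Fin n) :
    emb B 0 b.succ = 0 := by simp [emb, Fin.succ_ne_zero]

@[simp] lemma emb_succ_zero {n : ℕ} (B : Matrix (Fin n) (Fin n) R) (a : Fin n) :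
    emb B a.succ 0 = 0 := by simp [emb, Fin.succ_ne_zero]

@[simp] lemma emb_succ_succ {n : ℕ} (B : Matrix (Fin n) (Fin n) R) (a b : Fin n) :
    emb B a.succ b.succ = B a b := by simp [emb, Fin.succ_ne_zero, Fin.pred_succ]

lemma emb_one {n : ℕ} : emb (1 : Matrix (Fin n) (Fin n) R) = 1 := by
  ext a b
  induction a using Fin.cases with
  | zero =>
    induction b using Fin.cases with
    | zero => simp
    | succ b => simp [Matrix.one_apply, (Fin.succ_ne_zero b).symm]
  | succ a =>
    induction b using Fin.cases with
    | zero => simp [Matrix.one_apply, Fin.succ_ne_zero a]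
    | succ b => simp [Matrix.one_apply, Fin.succ_inj]

lemma emb_mul {n : ℕ} (B C : Matrix (Fin n) (Fin n) R) :
    emb (B * C) = emb B * emb C := by
  ext a b
  rw [Matrix.mul_apply, Fin.sum_univ_succ]
  induction a using Fin.cases with
  | zero =>
    induction b using Fin.cases with
    | zero => simp
    | succ b => simp
  | succ a =>
    induction b using Fin.cases with
    | zero => simp
    | succ b => simp [Matrix.mul_apply]

lemma emb_transvection {n : ℕ} {i j : Fin n} (c : R) :
    emb (Matrix.transvection i j c) = Matrix.transvection i.succ j.succ c := by
  ext a b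
  rw [Matrix.transvection, Matrix.transvection]
  induction a using Fin.cases with
  | zero =>
    induction b using Fin.cases with
    | zero =>
      rw [Matrix.add_apply,
        Matrix.single_apply_of_row_ne (Fin.succ_ne_zero i) _ _ _]
      simp
    | succ b =>
      rw [Matrix.add_apply,
        Matrix.single_apply_of_row_ne (Fin.succ_ne_zero i) _ _ _]
      simp [Matrix.one_apply, (Fin.succ_ne_zero b).symm]
  | succ a =>
    induction b using Fin.cases with
    | zero =>
      rw [Matrix.add_apply,
        Matrix.single_apply_of_col_ne _ _ (Fin.succ_ne_zero j) _]
      simp [Matrix.one_apply, Fin.succ_ne_zero a]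
    | succ b =>
      have hstd : Matrix.single i.succ j.succ c a.succ b.succ = Matrix.single i j c a b := by
        by_cases h : i = a ∧ j = b
        · obtain ⟨rfl, rfl⟩ := h; simp
        · rw [Matrix.single_apply_of_ne _ _ _ _ _ h]
          exact Matrix.single_apply_of_ne _ _ _ _ _ (by simpa [Fin.succ_inj] using h)
      simp [Matrix.add_apply, Matrix.one_apply, Fin.succ_inj, hstd]

lemma emb_mem {n : ℕ} {B : Matrix (Fin n) (Fin n) R}
    (hB : B ∈ Submonoid.closure (Tv n R)) : emb B ∈ Submonoid.closure (Tv (n+1) R) := by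
  induction hB using Submonoid.closure_induction with
  | mem x hx =>
    obtain ⟨i, j, c, hij, rfl⟩ := hx
    rw [emb_transvection]
    exact tv_mem_closure (fun h => hij (Fin.succ_injective _ h)) c
  | one => rw [emb_one]; exact one_mem _
  | mul x y _ _ hx hy => rw [emb_mul]; exact mul_mem hx hy

lemma eq_emb {n : ℕ} {N : Matrix (Fin (n+1)) (Fin (n+1)) R} (h00 : N 0 0 = 1)
    (h0b : ∀ b : Fin n, N 0 b.succ = 0) (ha0 : ∀ a : Fin n, N a.succ 0 = 0) :
    N = emb (N.submatrix Fin.succ Fin.succ) := by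
  ext a b
  induction a using Fin.cases with
  | zero =>
    induction b using Fin.cases with
    | zero => simpa using h00
    | succ b => simpa using h0b b
  | succ a =>
    induction b using Fin.cases with
    | zero => simpa using ha0 a
    | succ b => simp
theorem mem_closure_of_det_one [IsLocalRing R] :
    ∀ (n : ℕ) (M : Matrix (Fin n) (Fin n) R), M.det = 1 → M ∈ Submonoid.closure (Tv n R) := by
  intro n
  induction n with
  | zero =>
    intro M _
    rw [Subsingleton.elim M 1]
    exact one_mem _
  | succ n ih =>
    -- main elimination step, assuming the pivot is already 1
    have key : ∀ M : Matrix (Fin (n+1)) (Fin (n+1)) R, M.det = 1 → M 0 0 = 1 →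
        M ∈ Submonoid.closure (Tv (n+1) R) := by
      intro M hdet h00
      set L : Matrix (Fin (n+1)) (Fin (n+1)) R :=
        1 + ∑ i ∈ Finset.univ.erase 0, Matrix.single i (0 : Fin (n+1)) (-(M i 0)) with hL
      set Rt : Matrix (Fin (n+1)) (Fin (n+1)) R :=
        1 + ∑ j ∈ Finset.univ.erase 0, Matrix.single (0 : Fin (n+1)) j (-(M 0 j)) with hRt
      set N : Matrix (Fin (n+1)) (Fin (n+1)) R := L * M * Rt with hN
      have hLM : ∀ a b, (L * M) a b = M a b + if a = 0 then 0 else -(M a 0) * M 0 b := by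
        intro a b
        rw [hL]
        exact left_mul_apply (fun i => -(M i 0)) M a b
      have hNab : ∀ a b, N a b = (L * M) a b +
          if b = 0 then 0 else (L * M) a 0 * (-(M 0 b)) := by
        intro a b
        rw [hN, hRt]
        exact right_mul_apply (fun j => -(M 0 j)) (L * M) a b
      have hN00 : N 0 0 = 1 := by
        rw [hNab, if_pos rfl, add_zero, hLM, if_pos rfl, add_zero, h00]
      have hN0b : ∀ b : Fin n, N 0 b.succ = 0 := by
        intro b
        rw [hNab, if_neg (Fin.succ_ne_zero b), hLM, if_pos rfl, add_zero, hLM, if_pos rfl,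
          add_zero, h00]
        ring
      have hNa0 : ∀ a : Fin n, N a.succ 0 = 0 := by
        intro a
        rw [hNab, if_pos rfl, add_zero, hLM, if_neg (Fin.succ_ne_zero a), h00]
        ring
      have hLmem : L ∈ Submonoid.closure (Tv (n+1) R) := by
        rw [hL]; exact one_add_sum_col_mem _ (by simp) _
      have hRtmem : Rt ∈ Submonoid.closure (Tv (n+1) R) := by
        rw [hRt]; exact one_add_sum_row_mem _ (by simp) _
      have hdetN : N.det = 1 := by
        rw [hN, det_mul, det_mul, det_eq_one_of_mem hLmem, det_eq_one_of_mem hRtmem, hdet,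
          one_mul, one_mul]
      have hB : (N.submatrix Fin.succ Fin.succ).det = 1 := by
        have hexp := det_succ_column_zero N
        rw [Fin.sum_univ_succ] at hexp
        simp only [Fin.val_zero, pow_zero, one_mul, hN00, hNa0, mul_zero, zero_mul,
          Finset.sum_const_zero, add_zero, Fin.succAbove_zero] at hexp
        rw [hdetN] at hexp
        exact hexp.symm
      have hNmem : N ∈ Submonoid.closure (Tv (n+1) R) := by
        rw [eq_emb hN00 hN0b hNa0]
        exact emb_mem (ih _ hB)
      have hfact : M = (1 + ∑ i ∈ Finset.univ.erase 0,
          Matrix.single i (0 : Fin (n+1)) (M i 0)) * N *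
          (1 + ∑ j ∈ Finset.univ.erase 0, Matrix.single (0 : Fin (n+1)) j (M 0 j)) := by
        have h1 : (1 + ∑ i ∈ Finset.univ.erase 0,
            Matrix.single i (0 : Fin (n+1)) (M i 0)) * L = 1 := col_inv_pair (fun i => M i 0)
        have h2 : Rt * (1 + ∑ j ∈ Finset.univ.erase 0,
            Matrix.single (0 : Fin (n+1)) j (M 0 j)) = 1 := row_inv_pair (fun j => M 0 j)
        rw [hN]
        simp only [← mul_assoc]
        rw [h1, one_mul, mul_assoc, h2, mul_one]
      rw [hfact]
      exact mul_mem (mul_mem (one_add_sum_col_mem _ (by simp) _) hNmem)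
        (one_add_sum_row_mem _ (by simp) _)
    -- pivoting: if some off-corner entry of column 0 is a unit, we can make the pivot 1
    have key2 : ∀ M : Matrix (Fin (n+1)) (Fin (n+1)) R, M.det = 1 →
        (∃ i, i ≠ 0 ∧ IsUnit (M i 0)) → M ∈ Submonoid.closure (Tv (n+1) R) := by
      intro M hdet ⟨i, hi0, hiu⟩
      obtain ⟨u, hu⟩ := hiu
      set c : R := (↑u⁻¹ : R) * (1 - M 0 0) with hc
      apply cancel_left (Ne.symm hi0) c
      apply key
      · rw [det_mul, det_transvection_of_ne _ _ (Ne.symm hi0), hdet, one_mul]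
      · rw [transvection_mul_apply_same]
        have hcu : c * M i 0 = 1 - M 0 0 := by
          rw [hc, ← hu, mul_comm ((↑u⁻¹ : R)) _, mul_assoc, Units.inv_mul, mul_one]
        rw [hcu]
        ring
    intro M hdet
    rcases Nat.eq_zero_or_pos n with rfl | hn
    · -- 1 × 1 case
      have h : M 0 0 = 1 := by rw [← hdet, det_fin_one]
      have : M = 1 := by
        ext a b
        fin_cases a
        fin_cases b
        simpa using h
      rw [this]
      exact one_mem _
    · -- some entry of column 0 is a unit
      have hunit : ∃ i, IsUnit (M i 0) := by
        have h1 : IsUnit M.det := hdet ▸ isUnit_one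
        rw [det_succ_column_zero] at h1
        obtain ⟨i, _, hi⟩ := exists_isUnit_of_isUnit_sum _ _ h1
        refine ⟨i, isUnit_of_mul_isUnit_left (x := M i 0)
          (y := (-1 : R) ^ (i : ℕ) * (M.submatrix i.succAbove Fin.succ).det) ?_⟩
        rwa [show M i 0 * ((-1 : R) ^ (i : ℕ) * (M.submatrix i.succAbove Fin.succ).det) =
          (-1 : R) ^ (i : ℕ) * M i 0 * (M.submatrix i.succAbove Fin.succ).det by ring]
      by_cases hex : ∃ i, i ≠ 0 ∧ IsUnit (M i 0)
      · exact key2 M hdet hex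
      · push_neg at hex
        have h00u : IsUnit (M 0 0) := by
          obtain ⟨i, hi⟩ := hunit
          rcases eq_or_ne i 0 with rfl | h
          · exact hi
          · exact absurd hi (hex i h)
        have h10 : (1 : Fin (n+1)) ≠ 0 := by
          simp only [Fin.ne_iff_vne, Fin.val_one', Fin.val_zero]
          rw [Nat.mod_eq_of_lt (by omega)]
          omega
        apply cancel_left h10 (1 : R)
        apply key2
        · rw [det_mul, det_transvection_of_ne _ _ h10, hdet, one_mul]
        · refine ⟨1, h10, ?_⟩
          rw [transvection_mul_apply_same, one_mul]
          exact isUnit_add_of_isUnit_right (hex 1 h10) h00u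
lemma map_Matrix.single {n : ℕ} {S : Type*} [CommRing S] (f : R →+* S) (i j : Fin n) (c : R) :
    (Matrix.single i j c).map f = Matrix.single i j (f c) := by
  ext a b
  simp only [Matrix.map_apply, Matrix.single, Matrix.of_apply]
  split <;> simp

lemma map_transvection {n : ℕ} {S : Type*} [CommRing S] (f : R →+* S) (i j : Fin n) (c : R) :
    (Matrix.transvection i j c).map f = Matrix.transvection i j (f c) := by
  rw [Matrix.transvection, Matrix.transvection, Matrix.map_add f f.map_add, map_Matrix.single,
    Matrix.map_one f f.map_zero f.map_one]

lemma exists_lift {n : ℕ} {S : Type*} [CommRing S] (f : R →+* S) (hf : Function.Surjective f)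
    {M : Matrix (Fin n) (Fin n) S} (h : M ∈ Submonoid.closure (Tv n S)) :
    ∃ A : Matrix (Fin n) (Fin n) R, A.det = 1 ∧ A.map f = M := by
  induction h using Submonoid.closure_induction with
  | mem x hx =>
    obtain ⟨i, j, c, hij, rfl⟩ := hx
    obtain ⟨r, rfl⟩ := hf c
    exact ⟨Matrix.transvection i j r, det_transvection_of_ne i j hij r, map_transvection f i j r⟩
  | one => exact ⟨1, det_one, Matrix.map_one f f.map_zero f.map_one⟩
  | mul x y _ _ hx hy =>
    obtain ⟨A, hA1, hA2⟩ := hx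
    obtain ⟨B, hB1, hB2⟩ := hy
    exact ⟨A * B, by rw [det_mul, hA1, hB1, one_mul], by rw [Matrix.map_mul, hA2, hB2]⟩

lemma zmod_isLocalRing (p k : ℕ) [hp : Fact p.Prime] : IsLocalRing (ZMod (p ^ (k + 1))) := by
  haveI : Fact (1 < p ^ (k + 1)) :=
    ⟨Nat.one_lt_pow (Nat.succ_ne_zero k) hp.out.one_lt⟩
  haveI : NeZero (p ^ (k + 1)) := ⟨pow_ne_zero _ hp.out.pos.ne'⟩
  have hdvd : ∀ c : ZMod (p ^ (k + 1)), ¬IsUnit c → (p : ZMod (p ^ (k + 1))) ∣ c := by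
    intro c hc
    have hval : ((c.val : ℕ) : ZMod (p ^ (k + 1))) = c := ZMod.natCast_zmod_val c
    have : ¬(c.val).Coprime (p ^ (k + 1)) := fun hcop =>
      hc (hval ▸ (ZMod.isUnit_iff_coprime c.val (p ^ (k + 1))).mpr hcop)
    have hpdvd : p ∣ c.val := by
      by_contra hnd
      exact this (Nat.Coprime.pow_right _
        (Nat.coprime_comm.mp (hp.out.coprime_iff_not_dvd.mpr hnd)))
    obtain ⟨m, hm⟩ := hpdvd
    exact ⟨(m : ZMod (p ^ (k + 1))), by rw [← hval, hm]; push_cast; ring⟩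
  apply IsLocalRing.of_isUnit_or_isUnit_of_isUnit_add
  intro a b hab
  by_contra hcon
  push_neg at hcon
  obtain ⟨ha, hb⟩ := hcon
  have : (p : ZMod (p ^ (k + 1))) ∣ a + b := dvd_add (hdvd a ha) (hdvd b hb)
  have hpu : IsUnit ((p : ℕ) : ZMod (p ^ (k + 1))) := isUnit_of_dvd_unit this hab
  rw [ZMod.isUnit_iff_coprime] at hpu
  have : ¬(p).Coprime (p ^ (k + 1)) := by
    intro hcop
    have h1 : p = 1 := by
      have hg := Nat.gcd_eq_left (dvd_pow_self p (Nat.succ_ne_zero k))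
      have hc1 : Nat.gcd p (p ^ (k + 1)) = 1 := hcop
      rw [hg] at hc1
      exact hc1
    exact hp.out.one_lt.ne' h1
  exact this hpu
end Stmt7Aux

/-- `SL_N(R)` carries the subspace topology from the `N × N` matrices over `R`. -/
instance specialLinearGroupTopology (n : Type*) [DecidableEq n] [Fintype n]
    (R : Type*) [CommRing R] [TopologicalSpace R] :
    TopologicalSpace (Matrix.SpecialLinearGroup n R) :=
  instTopologicalSpaceSubtype

/-- The image of `SL_N(ℤ) → SL_N(ℤ_p)` (entrywise `ℤ → ℤ_p`) is dense in
`SL_N(ℤ_p)` for the p-adic topology. -/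
theorem stmt_7 (p N : ℕ) [Fact p.Prime] (hN : 0 < N) :
    Dense (Set.range
      (Matrix.SpecialLinearGroup.map (n := Fin N) (Int.castRingHom ℤ_[p]))) := by
  intro X
  have main : ∀ k : ℕ, ∃ Y : Matrix.SpecialLinearGroup (Fin N) ℤ_[p],
      Y ∈ Set.range (Matrix.SpecialLinearGroup.map (n := Fin N) (Int.castRingHom ℤ_[p])) ∧
      ∀ i j, ‖(Y : Matrix (Fin N) (Fin N) ℤ_[p]) i j - (X : Matrix (Fin N) (Fin N) ℤ_[p]) i j‖
        ≤ (p : ℝ) ^ (-(k + 1 : ℕ) : ℤ) := by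
    intro k
    haveI := Stmt7Aux.zmod_isLocalRing p k
    set f : ℤ_[p] →+* ZMod (p ^ (k + 1)) := PadicInt.toZModPow (k + 1) with hf
    set Mbar : Matrix (Fin N) (Fin N) (ZMod (p ^ (k + 1))) :=
      ((X : Matrix (Fin N) (Fin N) ℤ_[p]).map f) with hMbar
    have hdet : Mbar.det = 1 := by
      have : Mbar.det = f ((X : Matrix (Fin N) (Fin N) ℤ_[p]).det) :=
        (RingHom.map_det f _).symm
      rw [this, X.prop, _root_.map_one]
    have hmem := Stmt7Aux.mem_closure_of_det_one N Mbar hdet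
    obtain ⟨A, hA1, hA2⟩ := Stmt7Aux.exists_lift (Int.castRingHom (ZMod (p ^ (k + 1))))
      ZMod.intCast_surjective hmem
    refine ⟨Matrix.SpecialLinearGroup.map (Int.castRingHom ℤ_[p]) ⟨A, hA1⟩, ⟨_, rfl⟩, ?_⟩
    intro i j
    rw [PadicInt.norm_le_pow_iff_mem_span_pow, ← PadicInt.ker_toZModPow (k + 1),
      RingHom.mem_ker, map_sub]
    have h1 : ((Matrix.SpecialLinearGroup.map (Int.castRingHom ℤ_[p]) ⟨A, hA1⟩ :
        Matrix.SpecialLinearGroup (Fin N) ℤ_[p]) :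
        Matrix (Fin N) (Fin N) ℤ_[p]) i j = ((A i j : ℤ) : ℤ_[p]) := rfl
    have h2 : (PadicInt.toZModPow (k + 1)) ((A i j : ℤ) : ℤ_[p]) =
        ((A i j : ℤ) : ZMod (p ^ (k + 1))) := map_intCast _ _
    have h3 : ((A i j : ℤ) : ZMod (p ^ (k + 1))) = Mbar i j := by
      rw [← hA2]; rfl
    rw [h1, h2, h3, sub_eq_zero]
    rfl
  choose Y hYmem hYnorm using main
  refine mem_closure_of_tendsto (f := Y) (b := Filter.atTop) ?_
    (Filter.Eventually.of_forall hYmem)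
  refine tendsto_subtype_rng.mpr ?_
  refine tendsto_pi_nhds.mpr fun i => tendsto_pi_nhds.mpr fun j => ?_
  rw [tendsto_iff_norm_sub_tendsto_zero]
  have hp1 : (1 : ℝ) < (p : ℝ) := by
    exact_mod_cast (Fact.out (p := p.Prime)).one_lt
  have hlim : Filter.Tendsto (fun k : ℕ => (p : ℝ) ^ (-(k + 1 : ℕ) : ℤ))
      Filter.atTop (nhds 0) := by
    have h0 : (0 : ℝ) ≤ (p : ℝ)⁻¹ := by positivity
    have h1 : (p : ℝ)⁻¹ < 1 := by
      rw [inv_lt_one_iff₀]; right; exact hp1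
    have := (tendsto_pow_atTop_nhds_zero_of_lt_one h0 h1).comp
      (Filter.tendsto_add_atTop_nat 1)
    refine this.congr fun k => ?_
    simp only [Function.comp_apply]
    rw [_root_.zpow_neg, zpow_natCast, inv_pow]
  refine squeeze_zero (fun k => norm_nonneg _) (fun k => ?_) hlim
  exact hYnorm k i j
end

section
/- Let p be a prime and N a positive integer. The closure, in GL_N(ℤ_p) with the p-adic topology, of the image of GL_N(ℤ) under the natural map induced by the ring homomorphism ℤ → ℤ_p applied entrywise, equals the subgroup {g ∈ GL_N(ℤ_p) : det g = 1 or det g = −1}. -/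
set_option linter.unusedSectionVars false
set_option linter.unreachableTactic false
set_option linter.unusedTactic false
set_option maxHeartbeats 1000000

open Matrix

namespace Stmt8



variable {R : Type*} [CommRing R] [IsLocalRing R]

open Sum Unit Matrix.TransvectionStruct Matrix.Pivot

section DetAux

variable {n : Type*} [DecidableEq n] [Fintype n]

theorem det_transvec_prod (L : List (TransvectionStruct n R)) :
    ((L.map toMatrix).prod).det = 1 := by
  induction L with
  | nil => simp
  | cons t L IH => simp [IH]

/-- In a local ring, if the determinant is a unit then some entry of each column is a unit. -/
theorem isUnit_add_of_nonunit {a b : R} (ha : ¬ IsUnit a) (hb : IsUnit b) :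
    IsUnit (a + b) := by
  by_contra hc
  apply absurd hb
  have e : b = (a + b) + (-a) := by ring
  rw [e]
  exact IsLocalRing.nonunits_add (mem_nonunits_iff.2 hc) (mem_nonunits_iff.2 (by simpa using ha))

/-- In a local ring, if the determinant is a unit then some entry of each column is a unit. -/
theorem exists_isUnit_col (M : Matrix n n R) (h : IsUnit M.det) (j : n) :
    ∃ i, IsUnit (M i j) := by
  by_contra hc
  push_neg at hc
  have key : ∀ σ ∈ (Finset.univ : Finset (Equiv.Perm n)),
      (Equiv.Perm.sign σ • ∏ i, M (σ i) i) ∈ nonunits R := by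
    intro σ _
    have h1 : ¬ IsUnit (∏ i, M (σ i) i) := by
      intro hu
      have e := Finset.mul_prod_erase Finset.univ (fun i => M (σ i) i) (Finset.mem_univ j)
      rw [← e] at hu
      exact hc (σ j) (isUnit_of_mul_isUnit_left hu)
    rcases Int.units_eq_one_or (Equiv.Perm.sign σ) with hs | hs <;> rw [hs] <;>
      simp only [one_smul, Units.neg_smul] <;> intro hu
    · exact h1 hu
    · exact h1 (by simpa using hu.neg)
  have hnon : ¬ IsUnit (∑ σ : Equiv.Perm n, Equiv.Perm.sign σ • ∏ i, M (σ i) i) :=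
    Finset.sum_induction _ (· ∈ nonunits R) (fun a b ha hb => IsLocalRing.nonunits_add ha hb)
      (zero_mem_nonunits.2 zero_ne_one) key
  exact hnon (Matrix.det_apply M ▸ h)

end DetAux

namespace LocalPivot

variable {r : ℕ} (M : Matrix (Fin r ⊕ Unit) (Fin r ⊕ Unit) R)

/-- Transvections clearing the last column, for a unit pivot. -/
noncomputable def listTransvecCol : List (Matrix (Fin r ⊕ Unit) (Fin r ⊕ Unit) R) :=
  List.ofFn fun i : Fin r =>
    transvection (inl i) (inr unit) <|
      -M (inl i) (inr unit) * Ring.inverse (M (inr unit) (inr unit))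

/-- Transvections clearing the last row, for a unit pivot. -/
noncomputable def listTransvecRow : List (Matrix (Fin r ⊕ Unit) (Fin r ⊕ Unit) R) :=
  List.ofFn fun i : Fin r =>
    transvection (inr unit) (inl i) <|
      -M (inr unit) (inl i) * Ring.inverse (M (inr unit) (inr unit))

@[simp]
theorem length_listTransvecCol : (listTransvecCol M).length = r := by simp [listTransvecCol]

@[simp]
theorem length_listTransvecRow : (listTransvecRow M).length = r := by simp [listTransvecRow]

theorem listTransvecCol_mul_last_row_drop (i : Fin r ⊕ Unit) {k : ℕ} (hk : k ≤ r) :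
    (((listTransvecCol M).drop k).prod * M) (inr unit) i = M (inr unit) i := by
  induction hk using Nat.decreasingInduction with
  | of_succ n hn IH =>
    have hn' : n < (listTransvecCol M).length := by simpa [listTransvecCol] using hn
    rw [List.drop_eq_getElem_cons hn']
    simpa [listTransvecCol, Matrix.mul_assoc] using IH
  | self =>
    simp only [length_listTransvecCol, le_refl, List.drop_eq_nil_of_le, List.prod_nil,
      Matrix.one_mul]

theorem listTransvecCol_mul_last_row (i : Fin r ⊕ Unit) :
    ((listTransvecCol M).prod * M) (inr unit) i = M (inr unit) i := by
  simpa using listTransvecCol_mul_last_row_drop M i (Nat.zero_le _)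

theorem listTransvecCol_mul_last_col (hM : IsUnit (M (inr unit) (inr unit))) (i : Fin r) :
    ((listTransvecCol M).prod * M) (inl i) (inr unit) = 0 := by
  suffices H :
    ∀ k : ℕ,
      k ≤ r →
        (((listTransvecCol M).drop k).prod * M) (inl i) (inr unit) =
          if k ≤ i then 0 else M (inl i) (inr unit) by
    simpa only [List.drop, _root_.zero_le, ite_true] using H 0 (Nat.zero_le _)
  intro k hk
  induction hk using Nat.decreasingInduction with
  | of_succ n hn IH =>
    have hn' : n < (listTransvecCol M).length := by simpa [listTransvecCol] using hn
    let n' : Fin r := ⟨n, hn⟩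
    rw [List.drop_eq_getElem_cons hn']
    have A :
      (listTransvecCol M)[n] =
        transvection (inl n') (inr unit)
          (-M (inl n') (inr unit) * Ring.inverse (M (inr unit) (inr unit))) := by
      simp [listTransvecCol, n']
    simp only [Matrix.mul_assoc, A, List.prod_cons]
    by_cases h : n' = i
    · have hni : n = i := by
        cases i
        simp only [n', Fin.mk_eq_mk] at h
        simp [h]
      simp only [h, transvection_mul_apply_same, IH, ← hni, add_le_iff_nonpos_right,
          listTransvecCol_mul_last_row_drop _ _ hn]
      rw [if_neg (by simp), mul_assoc, Ring.inverse_mul_cancel _ hM, mul_one, add_neg_cancel, if_pos le_rfl]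
    · have hni : n ≠ i := by
        rintro rfl
        cases i
        exact h rfl
      simp only [ne_eq, inl.injEq, Ne.symm h, not_false_eq_true, transvection_mul_apply_of_ne]
      rw [IH]
      rcases le_or_gt (n + 1) i with (hi | hi)
      · simp only [hi, n.le_succ.trans hi, if_true]
      · rw [if_neg, if_neg]
        · simpa only [hni.symm, not_le, or_false] using Nat.lt_succ_iff_lt_or_eq.1 hi
        · simpa only [not_le] using hi
  | self =>
    simp only [length_listTransvecCol, le_refl, List.drop_eq_nil_of_le, List.prod_nil,
      Matrix.one_mul]
    rw [if_neg]
    simpa only [not_le] using i.2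

theorem mul_listTransvecRow_last_col_take (i : Fin r ⊕ Unit) {k : ℕ} (hk : k ≤ r) :
    (M * ((listTransvecRow M).take k).prod) i (inr unit) = M i (inr unit) := by
  induction' k with k IH
  · simp only [Matrix.mul_one, List.take_zero, List.prod_nil, List.take, Matrix.mul_one]
  · have hkr : k < r := hk
    let k' : Fin r := ⟨k, hkr⟩
    have :
      (listTransvecRow M)[k]? =
        ↑(transvection (inr Unit.unit) (inl k')
            (-M (inr Unit.unit) (inl k') * Ring.inverse (M (inr Unit.unit) (inr Unit.unit)))) := by
      simp only [listTransvecRow, k', List.ofFnNthVal, hkr, dif_pos, List.getElem?_ofFn]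
    simp only [List.take_succ, ← Matrix.mul_assoc, this, List.prod_append, Matrix.mul_one,
      List.prod_cons, List.prod_nil, Option.toList_some]
    rw [mul_transvection_apply_of_ne, IH hkr.le]
    simp only [Ne, not_false_iff, reduceCtorEq]

theorem mul_listTransvecRow_last_col (i : Fin r ⊕ Unit) :
    (M * (listTransvecRow M).prod) i (inr unit) = M i (inr unit) := by
  have A : (listTransvecRow M).length = r := by simp [listTransvecRow]
  rw [← (List.take_length : (listTransvecRow M).take (listTransvecRow M).length = _), A]
  simpa using mul_listTransvecRow_last_col_take M i le_rfl

theorem mul_listTransvecRow_last_row (hM : IsUnit (M (inr unit) (inr unit))) (i : Fin r) :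
    (M * (listTransvecRow M).prod) (inr unit) (inl i) = 0 := by
  suffices H :
    ∀ k : ℕ,
      k ≤ r →
        (M * ((listTransvecRow M).take k).prod) (inr unit) (inl i) =
          if k ≤ i then M (inr unit) (inl i) else 0 by
    have A : (listTransvecRow M).length = r := by simp [listTransvecRow]
    rw [← (List.take_length : (listTransvecRow M).take (listTransvecRow M).length = _), A]
    have : ¬r ≤ i := by simp
    simpa only [this, ite_eq_right_iff, ↓reduceIte] using H r le_rfl
  intro k hk
  induction' k with n IH
  · simp only [if_true, Matrix.mul_one, List.take_zero, zero_le', List.prod_nil]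
  · have hnr : n < r := hk
    let n' : Fin r := ⟨n, hnr⟩
    have A :
      (listTransvecRow M)[n]? =
        ↑(transvection (inr unit) (inl n')
        (-M (inr unit) (inl n') * Ring.inverse (M (inr unit) (inr unit)))) := by
      simp only [listTransvecRow, n', List.ofFnNthVal, hnr, dif_pos, List.getElem?_ofFn]
    simp only [List.take_succ, A, ← Matrix.mul_assoc, List.prod_append, Matrix.mul_one,
      List.prod_cons, List.prod_nil, Option.toList_some]
    by_cases h : n' = i
    · have hni : n = i := by
        cases i
        simp only [n', Fin.mk_eq_mk] at h
        simp only [h]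
      have : ¬n.succ ≤ i := by simp only [← hni, n.lt_succ_self, not_le]
      simp only [h, mul_transvection_apply_same, List.take, if_false,
        mul_listTransvecRow_last_col_take _ _ hnr.le, hni.le, this, if_true, IH hnr.le]
      rw [mul_assoc, Ring.inverse_mul_cancel _ hM, mul_one, add_neg_cancel]
    · have hni : n ≠ i := by
        rintro rfl
        cases i
        tauto
      simp only [IH hnr.le, Ne, mul_transvection_apply_of_ne, Ne.symm h, inl.injEq,
        not_false_eq_true]
      rcases le_or_gt (n + 1) i with (hi | hi)
      · simp [hi, n.le_succ.trans hi, if_true]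
      · rw [if_neg, if_neg]
        · simpa only [not_le] using hi
        · simpa only [hni.symm, not_le, or_false] using Nat.lt_succ_iff_lt_or_eq.1 hi

theorem listTransvecCol_mul_mul_listTransvecRow_last_col
    (hM : IsUnit (M (inr unit) (inr unit))) (i : Fin r) :
    ((listTransvecCol M).prod * M * (listTransvecRow M).prod) (inr unit) (inl i) = 0 := by
  have : listTransvecRow M = listTransvecRow ((listTransvecCol M).prod * M) := by
    simp [listTransvecRow, listTransvecCol_mul_last_row]
  rw [this]
  apply mul_listTransvecRow_last_row
  simpa [listTransvecCol_mul_last_row] using hM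

theorem listTransvecCol_mul_mul_listTransvecRow_last_row
    (hM : IsUnit (M (inr unit) (inr unit))) (i : Fin r) :
    ((listTransvecCol M).prod * M * (listTransvecRow M).prod) (inl i) (inr unit) = 0 := by
  have : listTransvecCol M = listTransvecCol (M * (listTransvecRow M).prod) := by
    simp [listTransvecCol, mul_listTransvecRow_last_col]
  rw [this, Matrix.mul_assoc]
  apply listTransvecCol_mul_last_col
  simpa [mul_listTransvecRow_last_col] using hM

theorem isTwoBlockDiagonal_listTransvecCol_mul_mul_listTransvecRow
    (hM : IsUnit (M (inr unit) (inr unit))) :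
    IsTwoBlockDiagonal ((listTransvecCol M).prod * M * (listTransvecRow M).prod) := by
  constructor
  · ext i j
    have : j = unit := by simp only [eq_iff_true_of_subsingleton]
    simp [toBlocks₁₂, this, listTransvecCol_mul_mul_listTransvecRow_last_row M hM]
  · ext i j
    have : i = unit := by simp only [eq_iff_true_of_subsingleton]
    simp [toBlocks₂₁, this, listTransvecCol_mul_mul_listTransvecRow_last_col M hM]

theorem exists_isTwoBlockDiagonal_of_isUnit (hM : IsUnit (M (inr unit) (inr unit))) :
    ∃ L L' : List (TransvectionStruct (Fin r ⊕ Unit) R),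
      IsTwoBlockDiagonal ((L.map toMatrix).prod * M * (L'.map toMatrix).prod) := by
  let L : List (TransvectionStruct (Fin r ⊕ Unit) R) :=
    List.ofFn fun i : Fin r =>
      ⟨inl i, inr unit, by simp,
        -M (inl i) (inr unit) * Ring.inverse (M (inr unit) (inr unit))⟩
  let L' : List (TransvectionStruct (Fin r ⊕ Unit) R) :=
    List.ofFn fun i : Fin r =>
      ⟨inr unit, inl i, by simp,
        -M (inr unit) (inl i) * Ring.inverse (M (inr unit) (inr unit))⟩
  refine ⟨L, L', ?_⟩
  have A : L.map toMatrix = listTransvecCol M := by simp [L, listTransvecCol, Function.comp_def]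
  have B : L'.map toMatrix = listTransvecRow M := by simp [L', listTransvecRow, Function.comp_def]
  rw [A, B]
  exact isTwoBlockDiagonal_listTransvecCol_mul_mul_listTransvecRow M hM

theorem exists_isTwoBlockDiagonal (hM : IsUnit M.det) :
    ∃ L L' : List (TransvectionStruct (Fin r ⊕ Unit) R),
      IsTwoBlockDiagonal ((L.map toMatrix).prod * M * (L'.map toMatrix).prod) := by
  obtain ⟨i, hi⟩ := exists_isUnit_col M hM (inr unit)
  cases i with
  | inr u =>
    cases u
    exact exists_isTwoBlockDiagonal_of_isUnit M hi
  | inl i =>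
    by_cases hpivot : IsUnit (M (inr unit) (inr unit))
    · exact exists_isTwoBlockDiagonal_of_isUnit M hpivot
    · -- add row `inl i` to the last row to get a unit pivot
      let M' := transvection (inr Unit.unit) (inl i) 1 * M
      have hM' : IsUnit (M' (inr unit) (inr unit)) := by
        have e : M' (inr unit) (inr unit)
            = M (inr unit) (inr unit) + M (inl i) (inr unit) := by
          simp [M']
        rw [e]
        exact isUnit_add_of_nonunit hpivot hi
      rcases exists_isTwoBlockDiagonal_of_isUnit M' hM' with ⟨L, L', hLL'⟩
      rw [Matrix.mul_assoc] at hLL'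
      refine ⟨L ++ [⟨inr unit, inl i, by simp, 1⟩], L', ?_⟩
      simp only [List.map_append, List.prod_append, Matrix.mul_one, toMatrix_mk,
        List.prod_cons, List.prod_nil, List.map, Matrix.mul_assoc (L.map toMatrix).prod]
      exact hLL'

theorem exists_eq_diagonal_induction
    (IH : ∀ M : Matrix (Fin r) (Fin r) R, IsUnit M.det →
        ∃ (L₀ L₀' : List (TransvectionStruct (Fin r) R)) (D₀ : Fin r → R),
          (L₀.map toMatrix).prod * M * (L₀'.map toMatrix).prod = diagonal D₀)
    (M : Matrix (Fin r ⊕ Unit) (Fin r ⊕ Unit) R) (hM : IsUnit M.det) :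
    ∃ (L L' : List (TransvectionStruct (Fin r ⊕ Unit) R)) (D : Fin r ⊕ Unit → R),
      (L.map toMatrix).prod * M * (L'.map toMatrix).prod = diagonal D := by
  rcases exists_isTwoBlockDiagonal M hM with ⟨L₁, L₁', hM₁⟩
  let M' := (L₁.map toMatrix).prod * M * (L₁'.map toMatrix).prod
  let M'' := toBlocks₁₁ M'
  have hdetM' : IsUnit M'.det := by
    have : M'.det = (L₁.map toMatrix).prod.det * M.det * (L₁'.map toMatrix).prod.det := by
      simp [M', det_mul]
    rw [this, det_transvec_prod, det_transvec_prod, one_mul, mul_one]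
    exact hM
  set c := M' (inr unit) (inr unit) with hc
  have hblocks : M' = fromBlocks M'' 0 0 (diagonal fun _ => c) := by
    rw [← fromBlocks_toBlocks M', hM₁.1, hM₁.2]
    rfl
  have hdet'' : IsUnit M''.det := by
    have : M'.det = M''.det * (diagonal fun _ : Unit => c).det := by
      rw [hblocks]
      exact det_fromBlocks_zero₂₁ _ _ _
    rw [this] at hdetM'
    exact isUnit_of_mul_isUnit_left hdetM'
  rcases IH M'' hdet'' with ⟨L₀, L₀', D₀, h₀⟩
  refine
    ⟨L₀.map (sumInl Unit) ++ L₁, L₁' ++ L₀'.map (sumInl Unit),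
      Sum.elim D₀ fun _ => c, ?_⟩
  suffices (L₀.map (toMatrix ∘ sumInl Unit)).prod * M' * (L₀'.map (toMatrix ∘ sumInl Unit)).prod =
      diagonal (Sum.elim D₀ fun _ => c) by
    simpa [M', Matrix.mul_assoc]
  rw [hblocks]
  simp [h₀]

theorem reindex_exists_eq_diagonal {n p : Type*} [Fintype n] [Fintype p]
    [DecidableEq n] [DecidableEq p] (M : Matrix p p R) (e : p ≃ n)
    (H :
      ∃ (L L' : List (TransvectionStruct n R)) (D : n → R),
        (L.map toMatrix).prod * Matrix.reindexAlgEquiv R _ e M * (L'.map toMatrix).prod =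
          diagonal D) :
    ∃ (L L' : List (TransvectionStruct p R)) (D : p → R),
      (L.map toMatrix).prod * M * (L'.map toMatrix).prod = diagonal D := by
  rcases H with ⟨L₀, L₀', D₀, h₀⟩
  refine ⟨L₀.map (reindexEquiv e.symm), L₀'.map (reindexEquiv e.symm), D₀ ∘ e, ?_⟩
  have : M = reindexAlgEquiv R _ e.symm (reindexAlgEquiv R _ e M) := by
    simp only [Equiv.symm_symm, submatrix_submatrix, reindex_apply, submatrix_id_id,
      Equiv.symm_comp_self, reindexAlgEquiv_apply]
  rw [this]
  simp only [toMatrix_reindexEquiv_prod, List.map_map, reindexAlgEquiv_apply]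
  simp only [← reindexAlgEquiv_apply R, ← reindexAlgEquiv_mul, h₀]
  simp only [Equiv.symm_symm, reindex_apply, submatrix_diagonal_equiv, reindexAlgEquiv_apply]

theorem exists_eq_diagonal_aux (n : Type) [Fintype n]
    [DecidableEq n] (M : Matrix n n R) (hM : IsUnit M.det) :
    ∃ (L L' : List (TransvectionStruct n R)) (D : n → R),
      (L.map toMatrix).prod * M * (L'.map toMatrix).prod = diagonal D := by
  induction' hn : Fintype.card n with r IH generalizing n M
  · refine ⟨List.nil, List.nil, fun _ => 1, ?_⟩
    ext i j
    rw [Fintype.card_eq_zero_iff] at hn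
    exact hn.elim' i
  · have e : n ≃ Fin r ⊕ Unit := by
      refine Fintype.equivOfCardEq ?_
      rw [hn]
      rw [@Fintype.card_sum (Fin r) Unit _ _]
      simp
    apply reindex_exists_eq_diagonal M e
    apply exists_eq_diagonal_induction
      (fun N hN => IH (Fin r) N hN (by simp))
    rw [reindexAlgEquiv_apply, Matrix.det_reindex_self]
    exact hM

theorem exists_eq_diagonal {n : Type*} [Fintype n] [DecidableEq n]
    (M : Matrix n n R) (hM : IsUnit M.det) :
    ∃ (L L' : List (TransvectionStruct n R)) (D : n → R),
      (L.map toMatrix).prod * M * (L'.map toMatrix).prod = diagonal D := by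
  have e : n ≃ Fin (Fintype.card n) := Fintype.equivOfCardEq (by simp)
  apply reindex_exists_eq_diagonal M e
  apply exists_eq_diagonal_aux
  rw [reindexAlgEquiv_apply, Matrix.det_reindex_self]
  exact hM


end LocalPivot




section UnitsLayer

variable {n : Type*} [DecidableEq n] [Fintype n] {A : Type*} [CommRing A]

/-- A transvection as a unit of the matrix ring. -/
def tUnit (i j : n) (h : i ≠ j) (c : A) : (Matrix n n A)ˣ where
  val := transvection i j c
  inv := transvection i j (-c)
  val_inv := by rw [transvection_mul_transvection_same _ _ h, add_neg_cancel, transvection_zero]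
  inv_val := by rw [transvection_mul_transvection_same _ _ h, neg_add_cancel, transvection_zero]

/-- A diagonal matrix with unit entries, as a unit of the matrix ring. -/
def dUnit (u : n → Aˣ) : (Matrix n n A)ˣ where
  val := diagonal fun i => (u i : A)
  inv := diagonal fun i => ((u i)⁻¹ : Aˣ)
  val_inv := by rw [diagonal_mul_diagonal]; simp
  inv_val := by rw [diagonal_mul_diagonal]; simp

lemma dUnit_mul (u v : n → Aˣ) : dUnit (u * v) = dUnit u * dUnit v := by
  apply Units.ext
  show diagonal _ = diagonal _ * diagonal _
  rw [diagonal_mul_diagonal]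
  simp [Pi.mul_apply]

lemma transvection_apply_entry (i j a b : n) (c : A) :
    transvection i j c a b = (if a = b then 1 else 0) + (if i = a ∧ j = b then c else 0) := by
  simp only [transvection, Matrix.add_apply, Matrix.one_apply, Matrix.single, of_apply]

lemma whitehead_eq (i j : n) (h : i ≠ j) (u : Aˣ) :
    dUnit (fun k => if k = i then u else if k = j then u⁻¹ else 1)
      = tUnit i j h (u : A) * (tUnit j i h.symm (-((u⁻¹ : Aˣ) : A)) *
        (tUnit i j h ((u : A) - 1) * (tUnit j i h.symm 1 * tUnit i j h (-1)))) := by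
  apply Units.ext
  show diagonal _ = transvection i j (u : A) * (transvection j i (-((u⁻¹ : Aˣ) : A)) *
    (transvection i j ((u : A) - 1) * (transvection j i 1 * transvection i j (-1))))
  set T5 := transvection i j (-1 : A) with hT5
  set M1 := transvection j i (1 : A) * T5 with hM1
  set M2 := transvection i j ((u : A) - 1) * M1 with hM2
  set M3 := transvection j i (-((u⁻¹ : Aˣ) : A)) * M2 with hM3
  -- row i of T5 and M1
  have t5i : ∀ b, T5 i b = (if b = i then 1 else if b = j then -1 else 0) := by
    intro b
    rw [hT5, transvection_apply_entry]
    split_ifs <;> subst_vars <;> (try simp_all) <;> (try ring)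
  have t5j : ∀ b, T5 j b = (if b = j then 1 else 0) := by
    intro b
    rw [hT5, transvection_apply_entry]
    split_ifs <;> subst_vars <;> (try simp_all) <;> (try ring)
  have m1i : ∀ b, M1 i b = (if b = i then 1 else if b = j then -1 else 0) := by
    intro b
    rw [hM1, transvection_mul_apply_of_ne _ _ _ _ h, t5i]
  have m1j : ∀ b, M1 j b = (if b = i then 1 else 0) := by
    intro b
    rw [hM1, transvection_mul_apply_same, t5j, t5i, one_mul]
    split_ifs <;> subst_vars <;> (try simp_all) <;> (try ring)
  have m2i : ∀ b, M2 i b = (if b = i then (u : A) else if b = j then -1 else 0) := by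
    intro b
    rw [hM2, transvection_mul_apply_same, m1i, m1j]
    split_ifs <;> subst_vars <;> (try simp_all) <;> (try ring)
  have m2j : ∀ b, M2 j b = (if b = i then 1 else 0) := by
    intro b
    rw [hM2, transvection_mul_apply_of_ne _ _ _ _ (Ne.symm h), m1j]
  have m3i : ∀ b, M3 i b = (if b = i then (u : A) else if b = j then -1 else 0) := by
    intro b
    rw [hM3, transvection_mul_apply_of_ne _ _ _ _ h, m2i]
  have m3j : ∀ b, M3 j b = (if b = j then ((u⁻¹ : Aˣ) : A) else 0) := by
    intro b
    rw [hM3, transvection_mul_apply_same, m2j, m2i]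
    split_ifs <;> subst_vars <;> (try simp_all) <;> (try ring)
  have m4i : ∀ b, (transvection i j (u : A) * M3) i b
      = (if b = i then (u : A) else 0) := by
    intro b
    rw [transvection_mul_apply_same, m3i, m3j]
    split_ifs <;> subst_vars <;> (try simp_all) <;> (try ring)
  have m4j : ∀ b, (transvection i j (u : A) * M3) j b
      = (if b = j then ((u⁻¹ : Aˣ) : A) else 0) := by
    intro b
    rw [transvection_mul_apply_of_ne _ _ _ _ (Ne.symm h), m3j]
  have m4o : ∀ a b, a ≠ i → a ≠ j → (transvection i j (u : A) * M3) a b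
      = (if a = b then 1 else 0) := by
    intro a b hai haj
    rw [transvection_mul_apply_of_ne _ _ _ _ hai, hM3,
      transvection_mul_apply_of_ne _ _ _ _ haj, hM2,
      transvection_mul_apply_of_ne _ _ _ _ hai, hM1,
      transvection_mul_apply_of_ne _ _ _ _ haj, hT5, transvection_apply_entry]
    split_ifs <;> subst_vars <;> (try simp_all) <;> (try ring)
  ext a b
  by_cases hai : a = i <;> [skip; by_cases haj : a = j]
  · subst hai
    rw [m4i, diagonal_apply]
    split_ifs <;> subst_vars <;> (try simp_all) <;> (try ring)
  · subst haj
    rw [m4j, diagonal_apply]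
    split_ifs <;> subst_vars <;> (try simp_all) <;> (try ring)
  · rw [m4o a b hai haj, diagonal_apply]
    by_cases hab : a = b <;> simp_all [hai, haj]

end UnitsLayer





section Map

variable {A B : Type*} [CommRing A] [CommRing B] (φ : A →+* B)
variable {n : Type*} [DecidableEq n] [Fintype n]

lemma mapMatrix_transvection (i j : n) (c : A) :
    (RingHom.mapMatrix φ) (transvection i j c) = transvection i j (φ c) := by
  ext a b
  simp only [RingHom.mapMatrix_apply, Matrix.map_apply, transvection, Matrix.add_apply,
    Matrix.one_apply, Matrix.single, of_apply]
  rw [map_add]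
  congr 1 <;> rw [apply_ite φ] <;> simp

end Map

section Top

variable (p N : ℕ) [Fact p.Prime]

noncomputable def f : GL (Fin N) ℤ →* GL (Fin N) ℤ_[p] :=
  Units.map (RingHom.mapMatrix (Int.castRingHom ℤ_[p])).toMonoidHom

noncomputable def H : Subgroup (GL (Fin N) ℤ_[p]) := (f p N).range.topologicalClosure

lemma mem_H_iff {g : GL (Fin N) ℤ_[p]} :
    g ∈ H p N ↔ g ∈ closure (Set.range (f p N)) := by
  rw [H, ← MonoidHom.coe_range]
  rfl

lemma tUnit_mem (i j : Fin N) (h : i ≠ j) (c : ℤ_[p]) : tUnit i j h c ∈ H p N := by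
  have hF : Continuous (fun c : ℤ_[p] => tUnit i j h c) := by
    rw [Units.continuous_iff]
    constructor
    · apply continuous_matrix
      intro a b
      show Continuous fun c => transvection i j c a b
      simp only [transvection, Matrix.add_apply, Matrix.single, of_apply]
      apply Continuous.add continuous_const
      by_cases hab : i = a ∧ j = b
      · simpa only [hab, and_self, if_true] using continuous_id'
      · simpa only [hab, if_false] using continuous_const
    · apply continuous_matrix
      intro a b
      show Continuous fun c => transvection i j (-c) a b
      simp only [transvection, Matrix.add_apply, Matrix.single, of_apply]
      apply Continuous.add continuous_const
      by_cases hab : i = a ∧ j = b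
      · simpa only [hab, and_self, if_true] using continuous_neg
      · simpa only [hab, if_false] using continuous_const
  have hdense : c ∈ closure (Set.range ((↑) : ℤ → ℤ_[p])) := by
    have := PadicInt.denseRange_intCast (p := p)
    rw [DenseRange] at this
    rw [this.closure_eq]
    trivial
  rw [mem_H_iff]
  have h2 : tUnit i j h c ∈
      closure ((fun c : ℤ_[p] => tUnit i j h c) '' Set.range ((↑) : ℤ → ℤ_[p])) :=
    image_closure_subset_closure_image hF ⟨c, hdense, rfl⟩
  refine closure_mono ?_ h2
  rintro - ⟨-, ⟨m, rfl⟩, rfl⟩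
  refine ⟨tUnit i j h (m : ℤ), ?_⟩
  apply Units.ext
  show (RingHom.mapMatrix (Int.castRingHom ℤ_[p])) (transvection i j (m : ℤ))
      = transvection i j ((m : ℤ) : ℤ_[p])
  rw [mapMatrix_transvection]
  norm_num

lemma sign_dUnit_mem (u : Fin N → ℤ_[p]ˣ)
    (hu : ∀ i, (u i : ℤ_[p]) = 1 ∨ (u i : ℤ_[p]) = -1) : dUnit u ∈ H p N := by
  classical
  set z : Fin N → ℤ := fun i => if u i = 1 then 1 else -1 with hz
  have hzsq : ∀ i, z i * z i = 1 := by
    intro i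
    by_cases h1 : u i = 1 <;> simp [hz, h1]
  have hinv : diagonal z * diagonal z = 1 := by
    rw [diagonal_mul_diagonal, show (fun i => z i * z i) = fun _ => (1 : ℤ) from funext hzsq,
      diagonal_one]
  have hcast : ∀ i, ((z i : ℤ) : ℤ_[p]) = (u i : ℤ_[p]) := by
    intro i
    by_cases h2 : u i = 1
    · simp [hz, h2]
    · rcases hu i with h1 | h1
      · exact absurd (Units.val_eq_one.mp h1) h2
      · simp [hz, h2, h1]
  apply (f p N).range.le_topologicalClosure
  refine ⟨(⟨diagonal z, diagonal z, hinv, hinv⟩ : GL (Fin N) ℤ), ?_⟩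
  apply Units.ext
  show (RingHom.mapMatrix (Int.castRingHom ℤ_[p])) (diagonal z) = diagonal fun i => (u i : ℤ_[p])
  have he : (fun m => (Int.castRingHom ℤ_[p]) (z m)) = fun i => (u i : ℤ_[p]) :=
    funext fun i => hcast i
  rw [RingHom.mapMatrix_apply, Matrix.diagonal_map (by simp), he]

end Top



section Final

variable (p N : ℕ) [Fact p.Prime]

lemma whitehead_mem (i j : Fin N) (h : i ≠ j) (u : ℤ_[p]ˣ) :
    dUnit (fun k => if k = i then u else if k = j then u⁻¹ else 1) ∈ H p N := by
  rw [whitehead_eq i j h u]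
  exact mul_mem (tUnit_mem p N i j h _) (mul_mem (tUnit_mem p N j i h.symm _)
    (mul_mem (tUnit_mem p N i j h _) (mul_mem (tUnit_mem p N j i h.symm _)
      (tUnit_mem p N i j h _))))

lemma dUnit_mem (hN : 0 < N) (u : Fin N → ℤ_[p]ˣ)
    (hprod : ((∏ i, u i : ℤ_[p]ˣ) : ℤ_[p]) = 1 ∨ ((∏ i, u i : ℤ_[p]ˣ) : ℤ_[p]) = -1) :
    dUnit u ∈ H p N := by
  classical
  set i₀ : Fin N := ⟨0, hN⟩ with hi₀def
  suffices key : ∀ s : Finset (Fin N), i₀ ∉ s → ∀ u : Fin N → ℤ_[p]ˣ,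
      (∀ i, i ≠ i₀ → u i ≠ 1 → i ∈ s) →
      (((∏ i, u i : ℤ_[p]ˣ) : ℤ_[p]) = 1 ∨ ((∏ i, u i : ℤ_[p]ˣ) : ℤ_[p]) = -1) →
      dUnit u ∈ H p N by
    exact key (Finset.univ.erase i₀) (Finset.notMem_erase _ _) u
      (fun i hi _ => Finset.mem_erase.2 ⟨hi, Finset.mem_univ i⟩) hprod
  intro s
  induction s using Finset.induction_on with
  | empty =>
    intro _ u hsupp hpr
    have hone : ∀ j, j ≠ i₀ → u j = 1 := fun j hj => by
      by_contra hc; exact Finset.notMem_empty j (hsupp j hj hc)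
    have hp : (∏ j, u j) = u i₀ :=
      Finset.prod_eq_single_of_mem i₀ (Finset.mem_univ _) (fun j _ hj => hone j hj)
    apply sign_dUnit_mem
    intro i
    by_cases hi : i = i₀
    · subst hi; rw [← hp]; exact hpr
    · left; rw [hone i hi]; rfl
  | @insert j s' hjs IH =>
    intro hi₀ u hsupp hpr
    have hji₀ : j ≠ i₀ := fun hc => hi₀ (hc ▸ Finset.mem_insert_self j s')
    have hi₀s' : i₀ ∉ s' := fun hc => hi₀ (Finset.mem_insert_of_mem hc)
    by_cases huj : u j = 1
    · exact IH hi₀s' u (fun i hi hne =>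
        (Finset.mem_insert.mp (hsupp i hi hne)).resolve_left
          (fun hij => hne (hij ▸ huj))) hpr
    · set w : Fin N → ℤ_[p]ˣ :=
        fun k => if k = j then u j else if k = i₀ then (u j)⁻¹ else 1 with hw
      set u' : Fin N → ℤ_[p]ˣ :=
        fun k => if k = j then 1 else if k = i₀ then u i₀ * u j else u k with hu'
      have huu : u = u' * w := by
        funext k
        simp only [Pi.mul_apply, hw, hu']
        by_cases h1 : k = j
        · subst h1; rw [if_pos rfl, if_pos rfl, one_mul]
        · rw [if_neg h1, if_neg h1]
          by_cases h2 : k = i₀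
          · subst h2; rw [if_pos rfl, if_pos rfl, mul_assoc, mul_inv_cancel, mul_one]
          · rw [if_neg h2, if_neg h2, mul_one]
      have hi₀j : i₀ ≠ j := Ne.symm hji₀
      have hrest : ∏ k ∈ (Finset.univ.erase j).erase i₀, u' k
          = ∏ k ∈ (Finset.univ.erase j).erase i₀, u k :=
        Finset.prod_congr rfl (fun k hk => by
          rcases Finset.mem_erase.mp hk with ⟨hki₀, hk2⟩
          rcases Finset.mem_erase.mp hk2 with ⟨hkj, _⟩
          simp only [hu', if_neg hkj, if_neg hki₀])
      have hmem₂ : i₀ ∈ Finset.univ.erase j := Finset.mem_erase.2 ⟨hi₀j, Finset.mem_univ _⟩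
      have hprod' : (∏ i, u' i) = ∏ i, u i := by
        rw [← Finset.mul_prod_erase _ u' (Finset.mem_univ j),
          ← Finset.mul_prod_erase _ u' hmem₂,
          ← Finset.mul_prod_erase _ u (Finset.mem_univ j),
          ← Finset.mul_prod_erase _ u hmem₂, hrest]
        have e1 : u' j = 1 := by simp only [hu', if_pos rfl]
        have e2 : u' i₀ = u i₀ * u j := by simp [hu', hi₀j]
        rw [e1, e2, one_mul, mul_comm (u i₀) (u j), mul_assoc]
      rw [huu, dUnit_mul]
      refine mul_mem (IH hi₀s' u' ?_ ?_) ?_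
      · intro i hi hne
        by_cases h1 : i = j
        · exfalso
          apply hne
          subst h1
          simp only [hu', if_pos rfl]
        · have heq : u' i = u i := by simp only [hu', if_neg h1, if_neg hi]
          rw [heq] at hne
          exact (Finset.mem_insert.mp (hsupp i hi hne)).resolve_left h1
      · rw [hprod']; exact hpr
      · rw [hw]
        exact whitehead_mem p N j i₀ hji₀ (u j)

/-- Units built from a list of transvection structs. -/
noncomputable def LUnit {n : Type*} [DecidableEq n] [Fintype n] {A : Type*} [CommRing A]
    (L : List (TransvectionStruct n A)) : (Matrix n n A)ˣ :=
  (L.map (fun t => tUnit t.i t.j t.hij t.c)).prod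

lemma LUnit_val {n : Type*} [DecidableEq n] [Fintype n] {A : Type*} [CommRing A]
    (L : List (TransvectionStruct n A)) :
    (LUnit L : Matrix n n A) = (L.map TransvectionStruct.toMatrix).prod := by
  induction L with
  | nil => rfl
  | cons t L IH =>
    simp only [LUnit, List.map_cons, List.prod_cons, Units.val_mul] at *
    rw [IH]
    rfl

lemma LUnit_mem (L : List (TransvectionStruct (Fin N) ℤ_[p])) : LUnit L ∈ H p N := by
  induction L with
  | nil => exact one_mem _
  | cons t L IH =>
    simp only [LUnit, List.map_cons, List.prod_cons]
    exact mul_mem (tUnit_mem p N t.i t.j t.hij t.c) IH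

theorem main (hN : 0 < N) :
    closure (Set.range
        (Units.map (RingHom.mapMatrix (Int.castRingHom ℤ_[p])).toMonoidHom :
          GL (Fin N) ℤ →* GL (Fin N) ℤ_[p])) =
      {g : GL (Fin N) ℤ_[p] |
        (g : Matrix (Fin N) (Fin N) ℤ_[p]).det = 1 ∨
        (g : Matrix (Fin N) (Fin N) ℤ_[p]).det = -1} := by
  apply subset_antisymm
  · apply closure_minimal
    · rintro - ⟨A, rfl⟩
      have hA : IsUnit ((A : Matrix (Fin N) (Fin N) ℤ)).det :=
        (Matrix.isUnit_iff_isUnit_det _).mp A.isUnit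
      have hdet := Int.isUnit_iff.mp hA
      have hval : ((Units.map (RingHom.mapMatrix (Int.castRingHom ℤ_[p])).toMonoidHom A :
            GL (Fin N) ℤ_[p]) : Matrix (Fin N) (Fin N) ℤ_[p]).det
          = (Int.castRingHom ℤ_[p]) ((A : Matrix (Fin N) (Fin N) ℤ)).det := by
        rw [RingHom.map_det]
        rfl
      rcases hdet with h1 | h1
      · left; rw [hval, h1]; simp
      · right; rw [hval, h1]; simp
    · have hcont : Continuous fun g : GL (Fin N) ℤ_[p] =>
          ((g : Matrix (Fin N) (Fin N) ℤ_[p])).det :=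
        Continuous.matrix_det Units.continuous_val
      have : {g : GL (Fin N) ℤ_[p] |
          (g : Matrix (Fin N) (Fin N) ℤ_[p]).det = 1 ∨
          (g : Matrix (Fin N) (Fin N) ℤ_[p]).det = -1}
          = (fun g : GL (Fin N) ℤ_[p] => ((g : Matrix (Fin N) (Fin N) ℤ_[p])).det) ⁻¹'
            ({1} ∪ {-1}) := rfl
      rw [this]
      exact (isClosed_singleton.union isClosed_singleton).preimage hcont
  · intro g hg
    have hdet : IsUnit ((g : Matrix (Fin N) (Fin N) ℤ_[p])).det := by
      rcases hg with h1 | h1 <;> rw [h1]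
      · exact isUnit_one
      · exact isUnit_one.neg
    obtain ⟨L, L', D, hLL⟩ := LocalPivot.exists_eq_diagonal
      (g : Matrix (Fin N) (Fin N) ℤ_[p]) hdet
    have hDdet : (diagonal D).det = ((g : Matrix (Fin N) (Fin N) ℤ_[p])).det := by
      rw [← hLL, det_mul, det_mul, det_transvec_prod, det_transvec_prod, one_mul, mul_one]
    have hDprod : IsUnit (∏ i, D i) := by
      rw [← det_diagonal, hDdet]; exact hdet
    have hDu : ∀ i, IsUnit (D i) := by
      intro i
      have := Finset.mul_prod_erase Finset.univ D (Finset.mem_univ i)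
      rw [← this] at hDprod
      exact isUnit_of_mul_isUnit_left hDprod
    set du : Fin N → ℤ_[p]ˣ := fun i => (hDu i).unit with hdu
    have hduval : (fun i => ((du i : ℤ_[p]ˣ) : ℤ_[p])) = D := by
      funext i; exact (hDu i).unit_spec
    have hpm : ((∏ i, du i : ℤ_[p]ˣ) : ℤ_[p]) = 1 ∨ ((∏ i, du i : ℤ_[p]ˣ) : ℤ_[p]) = -1 := by
      have : ((∏ i, du i : ℤ_[p]ˣ) : ℤ_[p]) = ∏ i, D i := by
        rw [← hduval]; push_cast; rfl
      rw [this, ← det_diagonal, hDdet]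
      exact hg
    have hDmem : dUnit du ∈ H p N := dUnit_mem p N hN du hpm
    have hgeq : LUnit L * g * LUnit L' = dUnit du := by
      apply Units.ext
      show ((LUnit L : Matrix (Fin N) (Fin N) ℤ_[p])) * (g : Matrix (Fin N) (Fin N) ℤ_[p]) *
        ((LUnit L' : Matrix (Fin N) (Fin N) ℤ_[p])) = diagonal fun i => ((du i : ℤ_[p]ˣ) : ℤ_[p])
      rw [LUnit_val, LUnit_val, hLL, hduval]
    have hmem : g ∈ H p N := by
      have hg2 : g = (LUnit L)⁻¹ * dUnit du * (LUnit L')⁻¹ := by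
        rw [← hgeq]
        group
      rw [hg2]
      exact mul_mem (mul_mem (inv_mem (LUnit_mem p N L)) hDmem)
        (inv_mem (LUnit_mem p N L'))
    exact (mem_H_iff p N).mp hmem

end Final

end Stmt8

/-- The closure in `GL_N(ℤ_p)` of the image of `GL_N(ℤ)` (entrywise
`ℤ → ℤ_p`) equals `{g ∈ GL_N(ℤ_p) | det g = 1 or det g = -1}`. -/
theorem stmt_8 (p N : ℕ) [Fact p.Prime] (hN : 0 < N) :
    closure (Set.range
        (Units.map (RingHom.mapMatrix (Int.castRingHom ℤ_[p])).toMonoidHom :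
          GL (Fin N) ℤ →* GL (Fin N) ℤ_[p])) =
      {g : GL (Fin N) ℤ_[p] |
        (g : Matrix (Fin N) (Fin N) ℤ_[p]).det = 1 ∨
        (g : Matrix (Fin N) (Fin N) ℤ_[p]).det = -1} :=
  Stmt8.main p N hN
end

section
/- Let p be an odd prime. The closure, in the unit group ℤ_pˣ with its p-adic topology, of the cyclic subgroup generated by the element 1+p equals the subgroup of principal units {u ∈ ℤ_pˣ : u ≡ 1 (mod p)}, i.e. the set of units u with u − 1 ∈ pℤ_p. -/
open PadicInt MulOpposite

/-- Binomial expansion to second order. -/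
lemma aux_pow_one_add_eq {R : Type*} [CommRing R] (x : R) (k : ℕ) :
    ∃ r : R, (1 + x) ^ k = 1 + k * x + x ^ 2 * r := by
  induction k with
  | zero => exact ⟨0, by simp⟩
  | succ k ih =>
    obtain ⟨r, hr⟩ := ih
    refine ⟨r + k + x * r, ?_⟩
    rw [pow_succ, hr]
    push_cast
    ring

lemma aux_emult (p : ℕ) [hp : Fact p.Prime] (hp2 : p ≠ 2) (n : ℕ) :
    emultiplicity (p : ℤ) ((1 + p) ^ (p ^ n) - 1) = n + 1 := by
  have hprime := hp.out
  have hodd : Odd p := hprime.odd_of_ne_two hp2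
  have hpI : Prime (p : ℤ) := Nat.prime_iff_prime_int.mp hprime
  have h1 : (p : ℤ) ∣ (1 + p) - 1 := by simp
  have h2 : ¬(p : ℤ) ∣ (1 + p) := by
    intro h
    have : (p : ℤ) ∣ 1 := (dvd_add_right (dvd_refl (p : ℤ))).mp (by rwa [add_comm] at h)
    exact hpI.not_dvd_one this
  have key := Int.emultiplicity_pow_sub_pow hprime hodd h1 h2 (p ^ n)
  rw [one_pow, add_sub_cancel_left] at key
  have e1 : emultiplicity (p : ℤ) (p : ℤ) = 1 := by
    simpa using emultiplicity_pow_self_of_prime hpI 1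
  rw [key, e1, emultiplicity_pow_self_of_prime hprime.prime]
  rw [add_comm]

lemma aux_key (p : ℕ) [hp : Fact p.Prime] (hp2 : p ≠ 2) (n : ℕ) :
    ∃ c : ℤ_[p], IsUnit c ∧
      (1 + (p : ℤ_[p])) ^ (p ^ n) = 1 + (p : ℤ_[p]) ^ (n + 1) * c := by
  have hm := aux_emult p hp2 n
  have hdvd : (p : ℤ) ^ (n + 1) ∣ (1 + p) ^ (p ^ n) - 1 :=
    pow_dvd_of_le_emultiplicity (by rw [hm]; exact_mod_cast le_refl (n + 1))
  have hnd : ¬(p : ℤ) ^ (n + 2) ∣ (1 + p) ^ (p ^ n) - 1 := by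
    intro h
    have h2 := le_emultiplicity_of_pow_dvd h
    rw [hm] at h2
    norm_cast at h2
    omega
  obtain ⟨c0, hc0⟩ := hdvd
  have hndc : ¬(p : ℤ) ∣ c0 := by
    intro ⟨d, hd⟩
    exact hnd ⟨d, by rw [hc0, hd]; ring⟩
  refine ⟨(c0 : ℤ_[p]), ?_, ?_⟩
  · rw [isUnit_iff]
    refine le_antisymm (norm_le_one _) ?_
    by_contra hlt
    push_neg at hlt
    exact hndc ((norm_int_lt_one_iff_dvd c0).mp hlt)
  · have := congrArg (fun z : ℤ => (z : ℤ_[p])) hc0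
    push_cast at this
    rw [sub_eq_iff_eq_add] at this
    rw [this]
    ring

/-- The subgroup of principal units. -/
def principalUnits (p : ℕ) [Fact p.Prime] : Subgroup ℤ_[p]ˣ where
  carrier := {v : ℤ_[p]ˣ | (p : ℤ_[p]) ∣ (v : ℤ_[p]) - 1}
  one_mem' := by simp
  mul_mem' := by
    intro a b ha hb
    simp only [Set.mem_setOf_eq, Units.val_mul] at *
    have : (a : ℤ_[p]) * b - 1 = (a : ℤ_[p]) * ((b : ℤ_[p]) - 1) + ((a : ℤ_[p]) - 1) := by ring
    rw [this]
    exact dvd_add (hb.mul_left _) ha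
  inv_mem' := by
    intro a ha
    simp only [Set.mem_setOf_eq] at *
    have h1 : ((a⁻¹ : ℤ_[p]ˣ) : ℤ_[p]) - 1
        = ((a⁻¹ : ℤ_[p]ˣ) : ℤ_[p]) * (1 - (a : ℤ_[p])) := by
      rw [mul_sub, mul_one]
      have : ((a⁻¹ : ℤ_[p]ˣ) : ℤ_[p]) * (a : ℤ_[p]) = 1 := by
        rw [← Units.val_mul, inv_mul_cancel, Units.val_one]
      rw [this]
    rw [h1]
    have h2 : (p : ℤ_[p]) ∣ 1 - (a : ℤ_[p]) := by
      have := dvd_neg.mpr ha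
      rwa [neg_sub] at this
    exact h2.mul_left _
  
/-- For an odd prime `p`, the topological closure in `ℤ_pˣ` of the cyclic
subgroup generated by the unit `1 + p` is exactly the group of principal units
`{v ∈ ℤ_pˣ | v ≡ 1 (mod p)}`, i.e. units `v` with `v - 1 ∈ pℤ_p`. -/
theorem stmt_10 (p : ℕ) [Fact p.Prime] (hp : p ≠ 2)
    (u : ℤ_[p]ˣ) (hu : (u : ℤ_[p]) = 1 + (p : ℤ_[p])) :
    ((Subgroup.zpowers u).topologicalClosure : Set ℤ_[p]ˣ) =
      {v : ℤ_[p]ˣ | (p : ℤ_[p]) ∣ (v : ℤ_[p]) - 1} := by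
  have hprime := Fact.out (p := p.Prime)
  -- the approximation lemma
  have main : ∀ n : ℕ, ∀ v : ℤ_[p]ˣ, (p : ℤ_[p]) ∣ (v : ℤ_[p]) - 1 →
      ∃ a : ℕ, (p : ℤ_[p]) ^ (n + 1) ∣ (v : ℤ_[p]) - ((u ^ a : ℤ_[p]ˣ) : ℤ_[p]) := by
    intro n
    induction n with
    | zero =>
      intro v hv
      exact ⟨0, by simpa using hv⟩
    | succ n ih =>
      intro v hv
      obtain ⟨a, ha⟩ := ih v hv
      obtain ⟨c, hcu, hc⟩ := aux_key p hp n
      set w : ℤ_[p]ˣ := v * (u ^ a)⁻¹ with hw_def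
      have hw : (p : ℤ_[p]) ^ (n + 1) ∣ (w : ℤ_[p]) - 1 := by
        have heq : (w : ℤ_[p]) - 1
            = (((u ^ a)⁻¹ : ℤ_[p]ˣ) : ℤ_[p]) * ((v : ℤ_[p]) - ((u ^ a : ℤ_[p]ˣ) : ℤ_[p])) := by
          rw [mul_sub]
          have h1 : (((u ^ a)⁻¹ : ℤ_[p]ˣ) : ℤ_[p]) * ((u ^ a : ℤ_[p]ˣ) : ℤ_[p]) = 1 := by
            rw [← Units.val_mul, inv_mul_cancel, Units.val_one]
          rw [h1, hw_def, Units.val_mul, mul_comm (v : ℤ_[p])]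
        rw [heq]
        exact ha.mul_left _
      obtain ⟨t, ht⟩ := hw
      obtain ⟨ci, hci⟩ := hcu.exists_right_inv
      set k : ℕ := (t * ci).appr 1 with hk_def
      have hk : (p : ℤ_[p]) ∣ t * ci - k := by
        have := appr_spec 1 (t * ci)
        rwa [pow_one, Ideal.mem_span_singleton] at this
      have hk' : (p : ℤ_[p]) ∣ t - (k : ℤ_[p]) * c := by
        obtain ⟨s, hs⟩ := hk
        refine ⟨s * c, ?_⟩
        have : t - (k : ℤ_[p]) * c = (t * ci - k) * c + t * (1 - ci * c) := by ring
        rw [this, hs, mul_comm ci c, hci]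
        ring
      refine ⟨a + k * p ^ n, ?_⟩
      obtain ⟨r, hr⟩ := aux_pow_one_add_eq ((p : ℤ_[p]) ^ (n + 1) * c) k
      have hupow : ((u : ℤ_[p])) ^ (p ^ n) = 1 + (p : ℤ_[p]) ^ (n + 1) * c := by
        rw [hu, hc]
      have hv_eq : (v : ℤ_[p])
          = ((u ^ a : ℤ_[p]ˣ) : ℤ_[p]) * (1 + (p : ℤ_[p]) ^ (n + 1) * t) := by
        have hw2 : (w : ℤ_[p]) = 1 + (p : ℤ_[p]) ^ (n + 1) * t := by
          rw [← ht]; ring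
        have : (v : ℤ_[p]) = ((u ^ a : ℤ_[p]ˣ) : ℤ_[p]) * (w : ℤ_[p]) := by
          rw [hw_def, Units.val_mul, ← mul_assoc]
          have h1 : ((u ^ a : ℤ_[p]ˣ) : ℤ_[p]) * (((u ^ a)⁻¹ : ℤ_[p]ˣ) : ℤ_[p]) = 1 := by
            rw [← Units.val_mul, mul_inv_cancel, Units.val_one]
          rw [mul_comm ((u ^ a : ℤ_[p]ˣ) : ℤ_[p]) (v : ℤ_[p]), mul_assoc,
            h1, mul_one]
        rw [this, hw2]
      have hcoe : ((u ^ (a + k * p ^ n) : ℤ_[p]ˣ) : ℤ_[p])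
          = ((u ^ a : ℤ_[p]ˣ) : ℤ_[p]) * (1 + (p : ℤ_[p]) ^ (n + 1) * c) ^ k := by
        rw [pow_add, Units.val_mul, mul_comm (k : ℕ) (p ^ n), pow_mul]
        simp only [Units.val_pow_eq_pow_val]
        rw [hupow]
      rw [hcoe, hv_eq, hr]
      have hre : ((u ^ a : ℤ_[p]ˣ) : ℤ_[p]) * (1 + (p : ℤ_[p]) ^ (n + 1) * t)
          - ((u ^ a : ℤ_[p]ˣ) : ℤ_[p]) *
            (1 + (k : ℤ_[p]) * ((p : ℤ_[p]) ^ (n + 1) * c)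
              + ((p : ℤ_[p]) ^ (n + 1) * c) ^ 2 * r)
          = ((u ^ a : ℤ_[p]ˣ) : ℤ_[p]) *
            ((p : ℤ_[p]) ^ (n + 1) * (t - (k : ℤ_[p]) * c)
              - ((p : ℤ_[p]) ^ (n + 1)) ^ 2 * (c ^ 2 * r)) := by
        ring
      rw [hre]
      refine Dvd.dvd.mul_left ?_ _
      refine dvd_sub ?_ ?_
      · rw [pow_succ]
        exact mul_dvd_mul_left _ hk'
      · refine dvd_mul_of_dvd_left ?_ _
        rw [← pow_mul]
        exact pow_dvd_pow _ (by omega)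
  -- now the set equality
  have humem : u ∈ principalUnits p := by
    show (p : ℤ_[p]) ∣ (u : ℤ_[p]) - 1
    rw [hu]
    simp
  have hclosed : IsClosed ((principalUnits p : Subgroup ℤ_[p]ˣ) : Set ℤ_[p]ˣ) := by
    have hset : ((principalUnits p : Subgroup ℤ_[p]ˣ) : Set ℤ_[p]ˣ)
        = (fun w : ℤ_[p]ˣ => ((w : ℤ_[p]) - 1)) ⁻¹'
          {x : ℤ_[p] | ‖x‖ ≤ (p : ℝ) ^ (-(1 : ℕ) : ℤ)} := by
      ext w
      simp only [Set.mem_preimage, Set.mem_setOf_eq, norm_le_pow_iff_mem_span_pow,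
        Ideal.mem_span_singleton, pow_one]
      rfl
    rw [hset]
    exact (isClosed_le continuous_norm continuous_const).preimage
      ((Units.continuous_val).sub continuous_const)
  ext v
  constructor
  · intro hv
    exact Subgroup.topologicalClosure_minimal _
      ((Subgroup.zpowers_le (G := ℤ_[p]ˣ)).mpr humem) hclosed hv
  · intro hv
    have hv' : (p : ℤ_[p]) ∣ (v : ℤ_[p]) - 1 := hv
    show v ∈ ((Subgroup.zpowers u).topologicalClosure : Set ℤ_[p]ˣ)
    rw [Subgroup.topologicalClosure_coe,
      Units.isEmbedding_embedProduct.closure_eq_preimage_closure_image,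
      Set.mem_preimage, Metric.mem_closure_iff]
    intro ε hε
    have hp1 : (1 : ℝ) < (p : ℝ) := by exact_mod_cast hprime.one_lt
    have hinv : (p : ℝ)⁻¹ < 1 := inv_lt_one_of_one_lt₀ hp1
    have hinvnn : (0 : ℝ) ≤ (p : ℝ)⁻¹ := inv_nonneg.mpr (by positivity)
    obtain ⟨n, hn⟩ := exists_pow_lt_of_lt_one hε hinv
    obtain ⟨a, ha⟩ := main n v hv'
    refine ⟨Units.embedProduct _ (u ^ a), ⟨u ^ a, ⟨(a : ℤ), by simp⟩, rfl⟩, ?_⟩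
    have hbound : ∀ x : ℤ_[p], (p : ℤ_[p]) ^ (n + 1) ∣ x → ‖x‖ < ε := by
      intro x hx
      have h1 : ‖x‖ ≤ (p : ℝ) ^ (-(n + 1 : ℕ) : ℤ) := by
        rw [norm_le_pow_iff_mem_span_pow, Ideal.mem_span_singleton]
        exact hx
      calc ‖x‖ ≤ (p : ℝ) ^ (-(n + 1 : ℕ) : ℤ) := h1
        _ = ((p : ℝ)⁻¹) ^ (n + 1) := by
            rw [zpow_neg, ← zpow_natCast, inv_zpow]
        _ ≤ ((p : ℝ)⁻¹) ^ n := pow_le_pow_of_le_one hinvnn hinv.le (by omega)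
        _ < ε := hn
    have hfirst : dist (v : ℤ_[p]) ((u ^ a : ℤ_[p]ˣ) : ℤ_[p]) < ε := by
      rw [dist_eq_norm]
      exact hbound _ ha
    have hsecond :
        dist ((v⁻¹ : ℤ_[p]ˣ) : ℤ_[p]) (((u ^ a)⁻¹ : ℤ_[p]ˣ) : ℤ_[p]) < ε := by
      rw [dist_eq_norm]
      have heq : ((v⁻¹ : ℤ_[p]ˣ) : ℤ_[p]) - (((u ^ a)⁻¹ : ℤ_[p]ˣ) : ℤ_[p])
          = ((v⁻¹ : ℤ_[p]ˣ) : ℤ_[p]) * (((u ^ a)⁻¹ : ℤ_[p]ˣ) : ℤ_[p]) *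
            (((u ^ a : ℤ_[p]ˣ) : ℤ_[p]) - (v : ℤ_[p])) := by
        have h1 : ((v⁻¹ : ℤ_[p]ˣ) : ℤ_[p]) * (v : ℤ_[p]) = 1 := by
          rw [← Units.val_mul, inv_mul_cancel, Units.val_one]
        have h2 : (((u ^ a)⁻¹ : ℤ_[p]ˣ) : ℤ_[p]) * ((u ^ a : ℤ_[p]ˣ) : ℤ_[p]) = 1 := by
          rw [← Units.val_mul, inv_mul_cancel, Units.val_one]
        calc ((v⁻¹ : ℤ_[p]ˣ) : ℤ_[p]) - (((u ^ a)⁻¹ : ℤ_[p]ˣ) : ℤ_[p])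
            = ((v⁻¹ : ℤ_[p]ˣ) : ℤ_[p]) *
                ((((u ^ a)⁻¹ : ℤ_[p]ˣ) : ℤ_[p]) * ((u ^ a : ℤ_[p]ˣ) : ℤ_[p]))
              - (((u ^ a)⁻¹ : ℤ_[p]ˣ) : ℤ_[p]) * (((v⁻¹ : ℤ_[p]ˣ) : ℤ_[p]) * (v : ℤ_[p])) := by
                rw [h1, h2]; ring
          _ = _ := by ring
      rw [heq, norm_mul, norm_mul, norm_units, norm_units, one_mul, one_mul,
        ← norm_neg, neg_sub]
      exact hbound _ ha
    have hrepr : ∀ x : ℤ_[p]ˣ, Units.embedProduct ℤ_[p] x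
        = ((x : ℤ_[p]), op ((x⁻¹ : ℤ_[p]ˣ) : ℤ_[p])) := fun x => rfl
    rw [hrepr, hrepr, Prod.dist_eq, max_lt_iff]
    exact ⟨hfirst, by rwa [MulOpposite.dist_op]⟩
end

section
/- Let m be an even positive integer. Then GL_m(ℤ) is generated by the two matrices X and P, where X is the permutation matrix of the m-cycle (entries X_{i,j} = 1 exactly when i ≡ j+1 mod m, i.e., row 1 has a 1 in column m and row k has a 1 in column k−1 for 2 ≤ k ≤ m, all other entries 0) and P = I_m + E_{12} is the identity matrix with an extra 1 in position (1,2). -/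
open Matrix
open Fin.NatCast

set_option linter.unusedSectionVars false
set_option maxHeartbeats 1000000

namespace HuaReiner

variable {m : ℕ} [NeZero m]

/-! ### Transvections as elements of `GL (Fin m) ℤ` -/

def tGL (i j : Fin m) (hij : i ≠ j) (c : ℤ) : GL (Fin m) ℤ :=
  ⟨transvection i j c, transvection i j (-c),
   by rw [transvection_mul_transvection_same _ _ hij, add_neg_cancel, transvection_zero],
   by rw [transvection_mul_transvection_same _ _ hij, neg_add_cancel, transvection_zero]⟩

@[simp] lemma tGL_val (i j : Fin m) (hij : i ≠ j) (c : ℤ) :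
    (tGL i j hij c).val = transvection i j c := rfl

lemma tGL_inv (i j : Fin m) (hij : i ≠ j) (c : ℤ) :
    (tGL i j hij c)⁻¹ = tGL i j hij (-c) := by
  apply Units.ext; rfl

lemma tGL_congr2 {i i' j j' : Fin m} (ei : i = i') (ej : j = j') {h : i ≠ j} {c : ℤ} :
    tGL i j h c = tGL i' j' (ei ▸ ej ▸ h) c := by subst ei; subst ej; rfl

lemma tGL_congr {i j j' : Fin m} (e : j = j') {h : i ≠ j} {c : ℤ} :
    tGL i j h c = tGL i j' (e ▸ h) c := tGL_congr2 rfl e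

lemma tmul_apply (i j : Fin m) (c : ℤ) (M : Matrix (Fin m) (Fin m) ℤ) (a b : Fin m) :
    (transvection i j c * M) a b = M a b + if a = i then c * M j b else 0 := by
  rcases eq_or_ne a i with rfl | h
  · simp
  · simp [transvection_mul_apply_of_ne _ _ _ _ h, h]

lemma mult_apply (i j : Fin m) (c : ℤ) (M : Matrix (Fin m) (Fin m) ℤ) (a b : Fin m) :
    (M * transvection i j c) a b = M a b + if b = j then c * M a i else 0 := by
  rcases eq_or_ne b j with rfl | h
  · simp
  · simp [mul_transvection_apply_of_ne _ _ _ _ h, h]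

lemma transvection_apply (i j : Fin m) (c : ℤ) (a b : Fin m) :
    transvection i j c a b = (if a = b then 1 else 0) + if i = a ∧ j = b then c else 0 := by
  rw [transvection, Matrix.add_apply, Matrix.one_apply, Matrix.single]
  rfl

lemma trans_comm {i j k : Fin m} (hij : i ≠ j) (hjk : j ≠ k) (hik : i ≠ k) :
    transvection i j 1 * transvection j k 1 * transvection i j (-1) * transvection j k (-1)
      = transvection i k (1 : ℤ) := by
  have e1 : ∀ c d : ℤ, single i j c * single i j d = 0 := fun c d =>
    single_mul_single_of_ne _ _ _ _ hij.symm _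
  have e2 : ∀ c d : ℤ, single j k c * single i j d = 0 := fun c d =>
    single_mul_single_of_ne _ _ _ _ hik.symm _
  have e3 : ∀ c d : ℤ, single i k c * single i j d = 0 := fun c d =>
    single_mul_single_of_ne _ _ _ _ hik.symm _
  have e4 : ∀ c d : ℤ, single j k c * single j k d = 0 := fun c d =>
    single_mul_single_of_ne _ _ _ _ hjk.symm _
  have e5 : ∀ c d : ℤ, single i k c * single j k d = 0 := fun c d =>
    single_mul_single_of_ne _ _ _ _ hjk.symm _
  have e6 : ∀ c d : ℤ, single i j c * single j k d =
      single i k (c * d) := fun c d => single_mul_single_same _ _ _ _ _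
  simp only [transvection, Matrix.mul_add, Matrix.add_mul, Matrix.one_mul, Matrix.mul_one,
    e1, e2, e3, e4, e5, e6, Matrix.zero_mul, Matrix.mul_zero, add_zero, zero_add, one_mul,
    mul_neg, mul_one]
  have g1 : single i k (-1 : ℤ) = -single i k 1 := by
    ext x y; simp [single, apply_ite]
  have g2 : single i j (-1 : ℤ) = -single i j 1 := by
    ext x y; simp [single, apply_ite]
  have g3 : single j k (-1 : ℤ) = -single j k 1 := by
    ext x y; simp [single, apply_ite]
  rw [g1, g2, g3]; abel

/-! ### signed swaps -/

def swGL (a b : Fin m) (hab : a ≠ b) : GL (Fin m) ℤ :=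
  tGL a b hab 1 * tGL b a hab.symm (-1) * tGL a b hab 1

lemma swGL_mem {H : Subgroup (GL (Fin m) ℤ)}
    (hT : ∀ (i j : Fin m) (h : i ≠ j) (c : ℤ), tGL i j h c ∈ H)
    (a b : Fin m) (hab : a ≠ b) : swGL a b hab ∈ H :=
  mul_mem (mul_mem (hT _ _ _ _) (hT _ _ _ _)) (hT _ _ _ _)

lemma swGL_mul_val (a b : Fin m) (hab : a ≠ b) (M : Matrix (Fin m) (Fin m) ℤ) (x y : Fin m) :
    ((swGL a b hab).val * M) x y =
      if x = a then M b y else if x = b then - M a y else M x y := by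
  have h1 : (swGL a b hab).val * M =
      transvection a b 1 * (transvection b a (-1) * (transvection a b 1 * M)) := by
    simp [swGL, Units.val_mul, Matrix.mul_assoc]
  rw [h1]
  simp only [tmul_apply]
  rcases eq_or_ne x a with rfl | hxa
  · simp [hab, hab.symm]
  · rcases eq_or_ne x b with rfl | hxb
    · simp [hab, hab.symm, hxa]
    · simp [hxa, hxb]

lemma swGL_mul_val' (a b : Fin m) (hab : a ≠ b) (A : GL (Fin m) ℤ) (x y : Fin m) :
    ((swGL a b hab * A).val) x y =
      if x = a then A.val b y else if x = b then - A.val a y else A.val x y := by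
  rw [Units.val_mul]; exact swGL_mul_val a b hab A.val x y

lemma det_swGL (a b : Fin m) (hab : a ≠ b) : det (swGL a b hab).val = 1 := by
  simp [swGL, Units.val_mul, det_mul, det_transvection_of_ne _ _ hab,
    det_transvection_of_ne _ _ hab.symm]

/-! ### the cycle matrix -/

def Xmat (m : ℕ) [NeZero m] : Matrix (Fin m) (Fin m) ℤ :=
  Matrix.of fun i j => if i = j + 1 then 1 else 0

def Ymat (m : ℕ) [NeZero m] : Matrix (Fin m) (Fin m) ℤ :=
  Matrix.of fun i j => if j = i + 1 then 1 else 0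

lemma Xmat_mul (M : Matrix (Fin m) (Fin m) ℤ) (a b : Fin m) :
    (Xmat m * M) a b = M (a - 1) b := by
  rw [mul_apply, Finset.sum_eq_single (a - 1)]
  · simp [Xmat, sub_add_cancel]
  · intro k _ hk
    have : a ≠ k + 1 := fun h => hk (by rw [h, add_sub_cancel_right])
    simp [Xmat, this]
  · simp

lemma mul_Ymat (M : Matrix (Fin m) (Fin m) ℤ) (a b : Fin m) :
    (M * Ymat m) a b = M a (b - 1) := by
  rw [mul_apply, Finset.sum_eq_single (b - 1)]
  · simp [Ymat, sub_add_cancel]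
  · intro k _ hk
    have : b ≠ k + 1 := fun h => hk (by rw [h, add_sub_cancel_right])
    simp [Ymat, this]
  · simp

lemma mul_Xmat (M : Matrix (Fin m) (Fin m) ℤ) (a b : Fin m) :
    (M * Xmat m) a b = M a (b + 1) := by
  rw [mul_apply, Finset.sum_eq_single (b + 1)]
  · simp [Xmat]
  · intro k _ hk; simp [Xmat, hk]
  · simp

def XGL (m : ℕ) [NeZero m] : GL (Fin m) ℤ :=
  ⟨Xmat m, Ymat m,
   by ext a b; rw [mul_Ymat]; simp [Xmat, Matrix.one_apply, sub_add_cancel, eq_comm],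
   by ext a b; rw [mul_Xmat]; simp [Ymat, Matrix.one_apply, eq_comm]⟩

@[simp] lemma XGL_val : (XGL m).val = Xmat m := rfl

lemma Xmat_eq_perm : Xmat m = Equiv.Perm.permMatrix ℤ (Equiv.subRight (1 : Fin m)) := by
  ext a b
  simp only [Xmat, Equiv.Perm.permMatrix, PEquiv.toMatrix_apply, Equiv.toPEquiv_apply,
    Option.mem_def, Option.some.injEq, Matrix.of_apply, Equiv.subRight_apply]
  congr 1
  rw [eq_iff_iff, sub_eq_iff_eq_add]

lemma det_Xmat (h : Even m) : det (Xmat m) = -1 := by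
  obtain ⟨n, rfl⟩ : ∃ n, m = n + 1 := ⟨m - 1, by have := Nat.pos_of_ne_zero (NeZero.ne m); omega⟩
  rw [Xmat_eq_perm, Matrix.det_permutation]
  have h1 : Equiv.subRight (1 : Fin (n+1)) = (finRotate (n+1))⁻¹ := by
    refine Equiv.ext fun x => ?_
    rw [Equiv.subRight_apply]
    symm
    rw [Equiv.Perm.inv_def, Equiv.symm_apply_eq, finRotate_succ_apply, sub_add_cancel]
  rw [h1, map_inv, sign_finRotate]
  have : Odd n := by rcases h with ⟨k, hk⟩; exact ⟨k - 1, by omega⟩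
  simp [this.neg_one_pow]

/-! ### generation of transvections from X and P -/

lemma one_ne_zero' (h2 : 2 ≤ m) : (1 : Fin m) ≠ 0 := by
  have h : ((1 : Fin m) : ℕ) = 1 := by rw [Fin.val_one']; exact Nat.mod_eq_of_lt (by omega)
  intro h0; rw [h0] at h; simp at h

lemma ne_add_one (h2 : 2 ≤ m) (i : Fin m) : i ≠ i + 1 := by
  intro h
  exact one_ne_zero' h2 (left_eq_add.mp h)

lemma X_conj_mat (i j : Fin m) (c : ℤ) :
    Xmat m * transvection i j c = transvection (i+1) (j+1) c * Xmat m := by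
  ext a b
  rw [Xmat_mul, tmul_apply, transvection_apply]
  simp only [Xmat, Matrix.of_apply]
  have h1 : (a - 1 = b) = (a = b + 1) := by rw [eq_iff_iff, sub_eq_iff_eq_add]
  have h2 : (i = a - 1) = (a = i + 1) := by rw [eq_iff_iff, eq_comm, sub_eq_iff_eq_add]
  have h3 : ((j : Fin m) + 1 = b + 1) = (j = b) := by rw [eq_iff_iff, add_left_inj]
  simp only [h1, h2, h3]
  by_cases h : a = i + 1 <;> by_cases h' : (j : Fin m) = b <;> simp [h, h']

lemma X_conj_mem {H : Subgroup (GL (Fin m) ℤ)} (hX : XGL m ∈ H)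
    {i j : Fin m} {h : i ≠ j} {c : ℤ} (ht : tGL i j h c ∈ H) :
    tGL (i+1) (j+1) (fun e => h (add_right_cancel e)) c ∈ H := by
  have key : tGL (i+1) (j+1) (fun e => h (add_right_cancel e)) c
      = XGL m * tGL i j h c * (XGL m)⁻¹ := by
    rw [eq_mul_inv_iff_mul_eq]
    apply Units.ext
    simp only [Units.val_mul, tGL_val, XGL_val]
    exact (X_conj_mat i j c).symm
  rw [key]
  exact mul_mem (mul_mem hX ht) (inv_mem hX)

lemma step1 (h2 : 2 ≤ m) {H : Subgroup (GL (Fin m) ℤ)} (hX : XGL m ∈ H)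
    (hP : tGL 0 1 (one_ne_zero' h2).symm 1 ∈ H) (i : Fin m) :
    tGL i (i+1) (ne_add_one h2 i) 1 ∈ H := by
  have key : ∀ r : ℕ, tGL ((r : Fin m)) ((r : Fin m) + 1) (ne_add_one h2 _) 1 ∈ H := by
    intro r
    induction r with
    | zero =>
      have e1 : ((0:ℕ) : Fin m) = 0 := Nat.cast_zero
      have e2 : ((0:ℕ) : Fin m) + 1 = 1 := by rw [e1, zero_add]
      rw [tGL_congr2 e1 e2]
      exact hP
    | succ r ih =>
      have e1 : ((r+1:ℕ) : Fin m) = (r : Fin m) + 1 := by push_cast; ring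
      have e2 : ((r+1:ℕ) : Fin m) + 1 = ((r : Fin m) + 1) + 1 := by rw [e1]
      rw [tGL_congr2 e1 e2]
      exact X_conj_mem hX ih
  have := key i.val
  rwa [tGL_congr2 (Fin.cast_val_eq_self i) (by rw [Fin.cast_val_eq_self])] at this

lemma step2 (h2 : 2 ≤ m) {H : Subgroup (GL (Fin m) ℤ)} (hX : XGL m ∈ H)
    (hP : tGL 0 1 (one_ne_zero' h2).symm 1 ∈ H) (i j : Fin m) (hij : i ≠ j) :
    tGL i j hij 1 ∈ H := by
  have key : ∀ (d : ℕ) (i : Fin m) (hd : ((d:ℕ) : Fin m) ≠ 0),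
      tGL i (i + (d : Fin m)) (fun e => hd (left_eq_add.mp e)) 1 ∈ H := by
    intro d
    induction d with
    | zero => intro i hd; simp at hd
    | succ d ih =>
      intro i hd
      have e1 : ((d+1:ℕ) : Fin m) = (d : Fin m) + 1 := by push_cast; ring
      by_cases h0 : ((d:ℕ) : Fin m) = 0
      · have e2 : i + ((d+1:ℕ) : Fin m) = i + 1 := by rw [e1, h0, zero_add]
        rw [tGL_congr e2]
        exact step1 h2 hX hP i
      · set j := i + ((d:ℕ) : Fin m) with hj
        set k := i + ((d+1:ℕ) : Fin m) with hk
        have ekj : k = j + 1 := by rw [hk, hj, e1, add_assoc]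
        have hijne : i ≠ j := fun e => h0 (left_eq_add.mp e)
        have hjkne : j ≠ k := by rw [ekj]; exact ne_add_one h2 j
        have hikne : i ≠ k := fun e => hd (left_eq_add.mp e)
        have hjH : tGL j k hjkne 1 ∈ H := by
          rw [tGL_congr ekj]
          exact step1 h2 hX hP j
        have hiH : tGL i j hijne 1 ∈ H := ih i h0
        have comm : tGL i k hikne 1 =
            tGL i j hijne 1 * tGL j k hjkne 1 * (tGL i j hijne 1)⁻¹ * (tGL j k hjkne 1)⁻¹ := by
          rw [tGL_inv, tGL_inv]
          apply Units.ext
          simp only [Units.val_mul, tGL_val]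
          exact (trans_comm hijne hjkne hikne).symm
        rw [show (fun e => hd (left_eq_add.mp e) : i ≠ k) = hikne from rfl, comm]
        exact mul_mem (mul_mem (mul_mem hiH hjH) (inv_mem hiH)) (inv_mem hjH)
  have hd0 : (((j - i).val : ℕ) : Fin m) ≠ 0 := by
    rw [Fin.cast_val_eq_self]
    exact sub_ne_zero.mpr hij.symm
  have := key (j - i).val i hd0
  have e : i + (((j - i).val : ℕ) : Fin m) = j := by
    rw [Fin.cast_val_eq_self, add_comm, sub_add_cancel]
  rwa [tGL_congr e] at this

lemma tGL_zpow (i j : Fin m) (h : i ≠ j) (c : ℤ) : tGL i j h c = tGL i j h 1 ^ c := by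
  induction c using Int.induction_on with
  | zero => apply Units.ext; simp
  | succ n ih =>
    rw [_root_.zpow_add_one, ← ih]
    apply Units.ext
    simp only [Units.val_mul, tGL_val]
    rw [transvection_mul_transvection_same _ _ h]
  | pred n ih =>
    have e : tGL i j h (-(n:ℤ) - 1) = tGL i j h (-(n:ℤ)) * tGL i j h (-1) := by
      apply Units.ext
      simp only [Units.val_mul, tGL_val]
      rw [transvection_mul_transvection_same _ _ h, sub_eq_add_neg]
    rw [_root_.zpow_sub_one, ← ih, e]
    rw [tGL_inv]

/-! ### shape predicate and reduction to the identity -/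

def Shp (k : ℕ) (M : Matrix (Fin m) (Fin m) ℤ) : Prop :=
  ∀ i j : Fin m, (i : ℕ) < k ∨ (j : ℕ) < k → M i j = if i = j then 1 else 0

lemma Shp.left {k : ℕ} {M : Matrix (Fin m) (Fin m) ℤ} (hM : Shp k M) {i j : Fin m}
    (hi : k ≤ (i : ℕ)) (hj : k ≤ (j : ℕ)) (c : ℤ) : Shp k (transvection i j c * M) := by
  intro a b hab
  rw [tmul_apply]
  rcases eq_or_ne a i with rfl | h
  · have hb : (b : ℕ) < k := by rcases hab with h' | h'; · omega
                                · exact h'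
    have hjb : j ≠ b := fun e => by rw [e] at hj; omega
    have h0 : M j b = 0 := by rw [hM j b (Or.inr hb), if_neg hjb]
    simp [hM a b hab, h0]
  · rw [if_neg h, add_zero, hM a b hab]

lemma Shp.right {k : ℕ} {M : Matrix (Fin m) (Fin m) ℤ} (hM : Shp k M) {i j : Fin m}
    (hi : k ≤ (i : ℕ)) (hj : k ≤ (j : ℕ)) (c : ℤ) : Shp k (M * transvection i j c) := by
  intro a b hab
  rw [mult_apply]
  rcases eq_or_ne b j with rfl | h
  · have ha : (a : ℕ) < k := by rcases hab with h' | h'; · exact h'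
                                · omega
    have hai : a ≠ i := fun e => by rw [e] at ha; omega
    have h0 : M a i = 0 := by rw [hM a i (Or.inl ha), if_neg hai]
    simp [hM a b hab, h0]
  · rw [if_neg h, add_zero, hM a b hab]

lemma pivot_unit (A : GL (Fin m) ℤ) (p : Fin m) (hcol : ∀ i, i ≠ p → A.val i p = 0) :
    A.val p p = 1 ∨ A.val p p = -1 := by
  have h1 : ((A⁻¹).val * A.val) = (1 : Matrix (Fin m) (Fin m) ℤ) := by
    rw [← Units.val_mul, inv_mul_cancel, Units.val_one]
  have h2 : ((A⁻¹).val * A.val) p p = 1 := by rw [h1, Matrix.one_apply_eq]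
  rw [mul_apply, Finset.sum_eq_single p (fun b _ hb => by rw [hcol b hb, mul_zero])
    (fun h => absurd (Finset.mem_univ p) h)] at h2
  exact Int.isUnit_iff.mp (IsUnit.of_mul_eq_one _ (by rw [mul_comm]; exact h2))

lemma col_nonzero (A : GL (Fin m) ℤ) (p : Fin m) : ∃ i, A.val i p ≠ 0 := by
  by_contra hc
  push_neg at hc
  have h1 : ((A⁻¹).val * A.val) = (1 : Matrix (Fin m) (Fin m) ℤ) := by
    rw [← Units.val_mul, inv_mul_cancel, Units.val_one]
  have h2 : ((A⁻¹).val * A.val) p p = 1 := by rw [h1, Matrix.one_apply_eq]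
  rw [mul_apply] at h2
  simp [hc] at h2

lemma emod_natAbs_lt {a : ℤ} (ha : a ≠ 0) (b : ℤ) : (b % a).natAbs < a.natAbs := by
  have h0 : 0 ≤ b % a := Int.emod_nonneg b ha
  rcases ha.lt_or_gt with h | h
  · have h2 : b % -a < -a := Int.emod_lt_of_pos b (by omega)
    have h3 : b % -a = b % a := Int.emod_neg b a
    omega
  · have h2 : b % a < a := Int.emod_lt_of_pos b h
    omega

section Phases

variable {H : Subgroup (GL (Fin m) ℤ)}

/-- Phase 3: pivot is 1, column k is cleared; clear row k, then invoke outer IH. -/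
lemma phase3 (hT : ∀ (i j : Fin m) (h : i ≠ j) (c : ℤ), tGL i j h c ∈ H)
    {k : ℕ} (hk : k < m)
    (IH : ∀ B : GL (Fin m) ℤ, det B.val = 1 → Shp (k+1) B.val → B ∈ H) :
    ∀ (N : ℕ) (A : GL (Fin m) ℤ), det A.val = 1 → Shp k A.val →
      (∀ i, i ≠ ⟨k, hk⟩ → A.val i ⟨k, hk⟩ = 0) → A.val ⟨k, hk⟩ ⟨k, hk⟩ = 1 →
      (∑ j ∈ Finset.univ.erase (⟨k, hk⟩ : Fin m), (A.val ⟨k, hk⟩ j).natAbs) ≤ N →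
      A ∈ H := by
  intro N
  induction N with
  | zero =>
    intro A hdet hshp hcol hpiv hsum
    apply IH A hdet
    have hrow : ∀ j, j ≠ (⟨k, hk⟩ : Fin m) → A.val ⟨k, hk⟩ j = 0 := by
      intro j hj
      have h0 := (Finset.sum_eq_zero_iff.mp (Nat.le_zero.mp hsum)) j
        (Finset.mem_erase.mpr ⟨hj, Finset.mem_univ j⟩)
      exact Int.natAbs_eq_zero.mp h0
    intro i j hij
    rcases Nat.lt_or_ge (i : ℕ) k with hi | hi
    · exact hshp i j (Or.inl hi)
    rcases Nat.lt_or_ge (j : ℕ) k with hj | hj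
    · exact hshp i j (Or.inr hj)
    have hcase : i = (⟨k, hk⟩ : Fin m) ∨ j = (⟨k, hk⟩ : Fin m) := by
      rcases hij with h | h
      · left; exact Fin.ext (by simp; omega)
      · right; exact Fin.ext (by simp; omega)
    rcases hcase with rfl | rfl
    · rcases eq_or_ne j (⟨k, hk⟩ : Fin m) with rfl | hj'
      · rw [if_pos rfl]; exact hpiv
      · rw [if_neg (Ne.symm hj')]; exact hrow j hj'
    · rcases eq_or_ne i (⟨k, hk⟩ : Fin m) with rfl | hi'
      · rw [if_pos rfl]; exact hpiv
      · rw [if_neg hi']; exact hcol i hi'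
  | succ N ihN =>
    intro A hdet hshp hcol hpiv hsum
    by_cases hle : (∑ j ∈ Finset.univ.erase (⟨k, hk⟩ : Fin m), (A.val ⟨k, hk⟩ j).natAbs) ≤ N
    · exact ihN A hdet hshp hcol hpiv hle
    have hex : ∃ j ∈ Finset.univ.erase (⟨k, hk⟩ : Fin m), (A.val ⟨k, hk⟩ j).natAbs ≠ 0 := by
      by_contra hc
      push_neg at hc
      exact hle (by rw [Finset.sum_eq_zero hc]; omega)
    obtain ⟨j, hjmem, hjne⟩ := hex
    have hjkf : j ≠ (⟨k, hk⟩ : Fin m) := (Finset.mem_erase.mp hjmem).1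
    have hkfj : (⟨k, hk⟩ : Fin m) ≠ j := hjkf.symm
    have hjnz : A.val ⟨k, hk⟩ j ≠ 0 := Int.natAbs_ne_zero.mp hjne
    have hjk : k ≤ (j : ℕ) := by
      by_contra hlt
      have := hshp ⟨k, hk⟩ j (Or.inr (by omega))
      rw [if_neg hkfj] at this
      exact hjnz this
    set A' : GL (Fin m) ℤ := A * tGL ⟨k, hk⟩ j hkfj (-(A.val ⟨k, hk⟩ j)) with hA'
    have hent : ∀ x y, A'.val x y =
        A.val x y + if y = j then (-(A.val ⟨k, hk⟩ j)) * A.val x ⟨k, hk⟩ else 0 := by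
      intro x y
      rw [hA', Units.val_mul, tGL_val, mult_apply]
    have hcol' : ∀ i, i ≠ (⟨k, hk⟩ : Fin m) → A'.val i ⟨k, hk⟩ = 0 := by
      intro i hi
      rw [hent, if_neg hkfj, add_zero]
      exact hcol i hi
    have hpiv' : A'.val ⟨k, hk⟩ ⟨k, hk⟩ = 1 := by
      rw [hent, if_neg hkfj, add_zero]; exact hpiv
    have hshp' : Shp k A'.val := by
      rw [hA', Units.val_mul, tGL_val]
      exact Shp.right hshp (le_of_eq rfl) hjk _
    have hdet' : det A'.val = 1 := by
      rw [hA', Units.val_mul, tGL_val, det_mul, det_transvection_of_ne _ _ hkfj, mul_one]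
      exact hdet
    have hAj : A'.val ⟨k, hk⟩ j = 0 := by
      rw [hent, if_pos rfl, hpiv, mul_one, add_neg_cancel]
    have hoth : ∀ y, y ≠ j → A'.val ⟨k, hk⟩ y = A.val ⟨k, hk⟩ y := by
      intro y hy; rw [hent, if_neg hy, add_zero]
    have hsum' : (∑ y ∈ Finset.univ.erase (⟨k, hk⟩ : Fin m), (A'.val ⟨k, hk⟩ y).natAbs) ≤ N := by
      have hlt : (∑ y ∈ Finset.univ.erase (⟨k, hk⟩ : Fin m), (A'.val ⟨k, hk⟩ y).natAbs)
          < ∑ y ∈ Finset.univ.erase (⟨k, hk⟩ : Fin m), (A.val ⟨k, hk⟩ y).natAbs := by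
        apply Finset.sum_lt_sum
        · intro x hx
          rcases eq_or_ne x j with rfl | hxj
          · rw [hAj]; omega
          · rw [hoth x hxj]
        · exact ⟨j, hjmem, by rw [hAj]; omega⟩
      omega
    have hA'H : A' ∈ H := ihN A' hdet' hshp' hcol' hpiv' hsum'
    have hAeq : A = A' * (tGL ⟨k, hk⟩ j hkfj (-(A.val ⟨k, hk⟩ j)))⁻¹ := by
      rw [hA', mul_inv_cancel_right]
    rw [hAeq]
    exact mul_mem hA'H (inv_mem (hT _ _ _ _))

/-- Phase 2: column k is cleared below and above; fix the sign of the pivot. -/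
lemma phase2 (hT : ∀ (i j : Fin m) (h : i ≠ j) (c : ℤ), tGL i j h c ∈ H)
    {k : ℕ} (hk : k < m)
    (IH : ∀ B : GL (Fin m) ℤ, det B.val = 1 → Shp (k+1) B.val → B ∈ H) :
    ∀ (A : GL (Fin m) ℤ), det A.val = 1 → Shp k A.val →
      (∀ i, i ≠ ⟨k, hk⟩ → A.val i ⟨k, hk⟩ = 0) → A ∈ H := by
  intro A hdet hshp hcol
  rcases pivot_unit A ⟨k, hk⟩ hcol with hpiv | hpiv
  · exact phase3 hT hk IH _ A hdet hshp hcol hpiv le_rfl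
  by_cases hk1 : k + 1 < m
  · set i' : Fin m := ⟨k+1, hk1⟩ with hi'
    have hne : (⟨k, hk⟩ : Fin m) ≠ i' := by
      intro e
      have := congrArg Fin.val e
      simp [hi'] at this
    set W := swGL ⟨k, hk⟩ i' hne with hW
    set A' := W * (W * A) with hA'
    have hent : ∀ x y, A'.val x y =
        if x = (⟨k, hk⟩ : Fin m) then -(A.val ⟨k, hk⟩ y)
        else if x = i' then -(A.val i' y) else A.val x y := by
      intro x y
      have hB1 : (W * A).val i' y = -(A.val ⟨k, hk⟩ y) := by
        rw [hW, swGL_mul_val', if_neg (Ne.symm hne), if_pos rfl]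
      have hB2 : (W * A).val ⟨k, hk⟩ y = A.val i' y := by
        rw [hW, swGL_mul_val', if_pos rfl]
      have hB3 : ∀ x, x ≠ (⟨k, hk⟩ : Fin m) → x ≠ i' → (W * A).val x y = A.val x y := by
        intro x h1 h2
        rw [hW, swGL_mul_val', if_neg h1, if_neg h2]
      rcases eq_or_ne x (⟨k, hk⟩ : Fin m) with rfl | hx1
      · rw [if_pos rfl, hA', hW, swGL_mul_val', if_pos rfl, ← hW, hB1]
      rcases eq_or_ne x i' with rfl | hx2
      · rw [if_neg hx1, if_pos rfl, hA', hW, swGL_mul_val', if_neg hx1, if_pos rfl, ← hW, hB2]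
      · rw [if_neg hx1, if_neg hx2, hA', hW, swGL_mul_val', if_neg hx1, if_neg hx2, ← hW,
          hB3 x hx1 hx2]
    have hdet' : det A'.val = 1 := by
      rw [hA', Units.val_mul, Units.val_mul, det_mul, det_mul, hW, det_swGL]
      simpa using hdet
    have hshp' : Shp k A'.val := by
      intro a b hab
      rw [hent]
      rcases eq_or_ne a (⟨k, hk⟩ : Fin m) with rfl | ha1
      · have hb : (b : ℕ) < k := by
          rcases hab with h | h
          · simp at h
          · exact h
        have hnb : (⟨k, hk⟩ : Fin m) ≠ b := fun e => by
          have := congrArg Fin.val e; simp at this; omega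
        rw [if_pos rfl, hshp ⟨k, hk⟩ b (Or.inr hb)]
        simp [hnb]
      rcases eq_or_ne a i' with rfl | ha2
      · have hb : (b : ℕ) < k := by
          rcases hab with h | h
          · simp [hi'] at h
          · exact h
        have hnb : i' ≠ b := fun e => by
          have := congrArg Fin.val e; simp [hi'] at this; omega
        rw [if_neg ha1, if_pos rfl, hshp i' b (Or.inr hb)]
        simp [hnb]
      · rw [if_neg ha1, if_neg ha2, hshp a b hab]
    have hcol' : ∀ i, i ≠ (⟨k, hk⟩ : Fin m) → A'.val i ⟨k, hk⟩ = 0 := by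
      intro i hi
      rw [hent, if_neg hi]
      rcases eq_or_ne i i' with rfl | hi2
      · rw [if_pos rfl, hcol i' (Ne.symm hne), neg_zero]
      · rw [if_neg hi2]; exact hcol i hi
    have hpiv' : A'.val ⟨k, hk⟩ ⟨k, hk⟩ = 1 := by
      rw [hent, if_pos rfl, hpiv]; norm_num
    have hA'H : A' ∈ H := phase3 hT hk IH _ A' hdet' hshp' hcol' hpiv' le_rfl
    have hAeq : A = W⁻¹ * (W⁻¹ * A') := by rw [hA']; group
    rw [hAeq]
    exact mul_mem (inv_mem (swGL_mem hT _ _ _)) (mul_mem (inv_mem (swGL_mem hT _ _ _)) hA'H)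
  · exfalso
    have hkm : k + 1 = m := by omega
    have hdiag : A.val = Matrix.diagonal
        (fun i => if i = (⟨k, hk⟩ : Fin m) then (-1 : ℤ) else 1) := by
      ext i j
      rcases eq_or_ne i j with rfl | hij
      · rw [Matrix.diagonal_apply_eq]
        rcases eq_or_ne i (⟨k, hk⟩ : Fin m) with rfl | hik
        · rw [if_pos rfl]; exact hpiv
        · rw [if_neg hik]
          have hiv : (i : ℕ) < k := by
            have h1 := i.isLt
            have h2 : (i : ℕ) ≠ k := fun e => hik (Fin.ext (by simp [e]))
            omega
          have := hshp i i (Or.inl hiv)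
          simpa using this
      · rw [Matrix.diagonal_apply_ne _ hij]
        rcases Nat.lt_or_ge (i : ℕ) k with hi | hi
        · have := hshp i j (Or.inl hi); rwa [if_neg hij] at this
        rcases Nat.lt_or_ge (j : ℕ) k with hj | hj
        · have := hshp i j (Or.inr hj); rwa [if_neg hij] at this
        · exact absurd (Fin.ext (by have := i.isLt; have := j.isLt; omega : (i:ℕ) = (j:ℕ))) hij
    rw [hdiag, Matrix.det_diagonal, Finset.prod_ite_eq' Finset.univ (⟨k, hk⟩ : Fin m)
      (fun _ => (-1 : ℤ))] at hdet
    simp at hdet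

end Phases

section Phase1

variable {H : Subgroup (GL (Fin m) ℤ)}

/-- Phase 1: Euclidean algorithm on column k. -/
lemma phase1 (hT : ∀ (i j : Fin m) (h : i ≠ j) (c : ℤ), tGL i j h c ∈ H)
    {k : ℕ} (hk : k < m)
    (IH : ∀ B : GL (Fin m) ℤ, det B.val = 1 → Shp (k+1) B.val → B ∈ H) :
    ∀ (N : ℕ) (A : GL (Fin m) ℤ), det A.val = 1 → Shp k A.val →
      (∑ i ∈ Finset.univ.filter (fun i : Fin m => k ≤ (i : ℕ)), (A.val i ⟨k, hk⟩).natAbs) ≤ N →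
      A ∈ H := by
  intro N
  induction N with
  | zero =>
    intro A hdet hshp hsum
    exfalso
    obtain ⟨i, hi⟩ := col_nonzero A ⟨k, hk⟩
    apply hi
    rcases Nat.lt_or_ge (i : ℕ) k with h | h
    · have hne : i ≠ (⟨k, hk⟩ : Fin m) := fun e => by
        have := congrArg Fin.val e; simp at this; omega
      have := hshp i ⟨k, hk⟩ (Or.inl h)
      rwa [if_neg hne] at this
    · have hmem : i ∈ Finset.univ.filter (fun i : Fin m => k ≤ (i : ℕ)) :=
        Finset.mem_filter.mpr ⟨Finset.mem_univ _, h⟩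
      have h0 := (Finset.sum_eq_zero_iff.mp (Nat.le_zero.mp hsum)) i hmem
      exact Int.natAbs_eq_zero.mp h0
  | succ N ihN =>
    intro A hdet hshp hsum
    by_cases hle :
        (∑ i ∈ Finset.univ.filter (fun i : Fin m => k ≤ (i : ℕ)), (A.val i ⟨k, hk⟩).natAbs) ≤ N
    · exact ihN A hdet hshp hle
    set s := Finset.univ.filter (fun i : Fin m => k ≤ (i : ℕ) ∧ A.val i ⟨k, hk⟩ ≠ 0) with hs
    have hsne : s.Nonempty := by
      have hex : ∃ i ∈ Finset.univ.filter (fun i : Fin m => k ≤ (i : ℕ)),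
          (A.val i ⟨k, hk⟩).natAbs ≠ 0 := by
        by_contra hc
        push_neg at hc
        exact hle (by rw [Finset.sum_eq_zero hc]; omega)
      obtain ⟨i, himem, hine⟩ := hex
      exact ⟨i, Finset.mem_filter.mpr ⟨Finset.mem_univ _,
        (Finset.mem_filter.mp himem).2, Int.natAbs_ne_zero.mp hine⟩⟩
    obtain ⟨i₀, hi₀s, hmin⟩ := Finset.exists_min_image s (fun i => (A.val i ⟨k, hk⟩).natAbs) hsne
    have hi₀k : k ≤ (i₀ : ℕ) := ((Finset.mem_filter.mp hi₀s).2).1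
    have hi₀ne : A.val i₀ ⟨k, hk⟩ ≠ 0 := ((Finset.mem_filter.mp hi₀s).2).2
    by_cases hex2 : ∃ j ∈ s, j ≠ i₀
    · -- Euclidean step
      obtain ⟨j, hjs, hjne⟩ := hex2
      have hjk : k ≤ (j : ℕ) := ((Finset.mem_filter.mp hjs).2).1
      have hjnz : A.val j ⟨k, hk⟩ ≠ 0 := ((Finset.mem_filter.mp hjs).2).2
      set q : ℤ := A.val j ⟨k, hk⟩ / A.val i₀ ⟨k, hk⟩ with hq
      set A' := tGL j i₀ hjne (-q) * A with hA'
      have hent : ∀ x y, A'.val x y = A.val x y + if x = j then (-q) * A.val i₀ y else 0 := by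
        intro x y
        rw [hA', Units.val_mul, tGL_val, tmul_apply]
      have hj' : A'.val j ⟨k, hk⟩ = A.val j ⟨k, hk⟩ % A.val i₀ ⟨k, hk⟩ := by
        rw [hent, if_pos rfl, Int.emod_def, hq]; ring
      have hoth : ∀ x, x ≠ j → A'.val x ⟨k, hk⟩ = A.val x ⟨k, hk⟩ := by
        intro x hx; rw [hent, if_neg hx, add_zero]
      have hdet' : det A'.val = 1 := by
        rw [hA', Units.val_mul, tGL_val, det_mul, det_transvection_of_ne _ _ hjne, one_mul]
        exact hdet
      have hshp' : Shp k A'.val := by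
        rw [hA', Units.val_mul, tGL_val]
        exact Shp.left hshp hjk hi₀k _
      have hra : (A.val j ⟨k, hk⟩ % A.val i₀ ⟨k, hk⟩).natAbs < (A.val i₀ ⟨k, hk⟩).natAbs :=
        emod_natAbs_lt hi₀ne _
      have hab : (A.val i₀ ⟨k, hk⟩).natAbs ≤ (A.val j ⟨k, hk⟩).natAbs := hmin j hjs
      have hjmemf : j ∈ Finset.univ.filter (fun i : Fin m => k ≤ (i : ℕ)) :=
        Finset.mem_filter.mpr ⟨Finset.mem_univ _, hjk⟩
      have hsum' :
          (∑ i ∈ Finset.univ.filter (fun i : Fin m => k ≤ (i : ℕ)),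
            (A'.val i ⟨k, hk⟩).natAbs) ≤ N := by
        have hlt : (∑ i ∈ Finset.univ.filter (fun i : Fin m => k ≤ (i : ℕ)),
              (A'.val i ⟨k, hk⟩).natAbs)
            < ∑ i ∈ Finset.univ.filter (fun i : Fin m => k ≤ (i : ℕ)),
              (A.val i ⟨k, hk⟩).natAbs := by
          apply Finset.sum_lt_sum
          · intro x hx
            rcases eq_or_ne x j with rfl | hxj
            · rw [hj']; omega
            · rw [hoth x hxj]
          · exact ⟨j, hjmemf, by rw [hj']; omega⟩
        omega
      have hA'H : A' ∈ H := ihN A' hdet' hshp' hsum'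
      have hAeq : A = (tGL j i₀ hjne (-q))⁻¹ * A' := by
        rw [hA', inv_mul_cancel_left]
      rw [hAeq]
      exact mul_mem (inv_mem (hT _ _ _ _)) hA'H
    · -- single nonzero entry in the column
      push_neg at hex2
      by_cases hi₀kf : i₀ = (⟨k, hk⟩ : Fin m)
      · -- already in position
        have hcol : ∀ i, i ≠ (⟨k, hk⟩ : Fin m) → A.val i ⟨k, hk⟩ = 0 := by
          intro i hi
          rcases Nat.lt_or_ge (i : ℕ) k with h | h
          · have := hshp i ⟨k, hk⟩ (Or.inl h)
            rwa [if_neg hi] at this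
          · by_contra hne
            exact hi ((hex2 i (Finset.mem_filter.mpr
              ⟨Finset.mem_univ _, h, hne⟩)).trans hi₀kf)
        exact phase2 hT hk IH A hdet hshp hcol
      · -- signed swap of rows kf and i₀
        have hne : (⟨k, hk⟩ : Fin m) ≠ i₀ := Ne.symm hi₀kf
        have hkfz : A.val ⟨k, hk⟩ ⟨k, hk⟩ = 0 := by
          by_contra hnz
          exact hi₀kf (hex2 ⟨k, hk⟩ (Finset.mem_filter.mpr
            ⟨Finset.mem_univ _, le_refl k, hnz⟩)).symm
        set A' := swGL ⟨k, hk⟩ i₀ hne * A with hA'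
        have hent : ∀ x y, A'.val x y =
            if x = (⟨k, hk⟩ : Fin m) then A.val i₀ y
            else if x = i₀ then -(A.val ⟨k, hk⟩ y) else A.val x y := by
          intro x y; rw [hA', swGL_mul_val']
        have hdet' : det A'.val = 1 := by
          rw [hA', Units.val_mul, det_mul, det_swGL, one_mul]
          exact hdet
        have hshp' : Shp k A'.val := by
          intro a b hab
          rw [hent]
          rcases eq_or_ne a (⟨k, hk⟩ : Fin m) with rfl | ha1
          · have hb : (b : ℕ) < k := by
              rcases hab with h | h
              · simp at h
              · exact h
            have hnb : (⟨k, hk⟩ : Fin m) ≠ b := fun e => by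
              have := congrArg Fin.val e; simp at this; omega
            have hnb2 : i₀ ≠ b := fun e => by
              have := congrArg Fin.val e; omega
            rw [if_pos rfl, hshp i₀ b (Or.inr hb), if_neg hnb2, if_neg hnb]
          rcases eq_or_ne a i₀ with heq | ha2
          · have hak : k ≤ (a : ℕ) := heq ▸ hi₀k
            have hb : (b : ℕ) < k := by
              rcases hab with h | h
              · omega
              · exact h
            have hnb : a ≠ b := fun e => by
              have := congrArg Fin.val e; omega
            have hnb2 : (⟨k, hk⟩ : Fin m) ≠ b := fun e => by
              have := congrArg Fin.val e; simp at this; omega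
            rw [if_neg ha1, heq, if_pos rfl, hshp ⟨k, hk⟩ b (Or.inr hb), if_neg hnb2, neg_zero,
              ← heq, if_neg hnb]
          · rw [if_neg ha1, if_neg ha2, hshp a b hab]
        have hcol' : ∀ i, i ≠ (⟨k, hk⟩ : Fin m) → A'.val i ⟨k, hk⟩ = 0 := by
          intro i hi
          rw [hent, if_neg hi]
          rcases eq_or_ne i i₀ with rfl | hi2
          · rw [if_pos rfl, hkfz, neg_zero]
          · rw [if_neg hi2]
            rcases Nat.lt_or_ge (i : ℕ) k with h | h
            · have := hshp i ⟨k, hk⟩ (Or.inl h)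
              rwa [if_neg hi] at this
            · by_contra hne2
              exact hi2 (hex2 i (Finset.mem_filter.mpr ⟨Finset.mem_univ _, h, hne2⟩))
        have hA'H : A' ∈ H := phase2 hT hk IH A' hdet' hshp' hcol'
        have hAeq : A = (swGL ⟨k, hk⟩ i₀ hne)⁻¹ * A' := by
          rw [hA', inv_mul_cancel_left]
        rw [hAeq]
        exact mul_mem (inv_mem (swGL_mem hT _ _ _)) hA'H

end Phase1

lemma shp_eq_one {A : GL (Fin m) ℤ} {k : ℕ} (hk : m ≤ k) (h : Shp k A.val) : A = 1 := by
  apply Units.ext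
  ext i j
  rw [h i j (Or.inl (lt_of_lt_of_le i.isLt hk)), Units.val_one, Matrix.one_apply]

lemma outer {H : Subgroup (GL (Fin m) ℤ)}
    (hT : ∀ (i j : Fin m) (h : i ≠ j) (c : ℤ), tGL i j h c ∈ H) :
    ∀ (d k : ℕ), m ≤ k + d → ∀ A : GL (Fin m) ℤ, det A.val = 1 → Shp k A.val → A ∈ H := by
  intro d
  induction d with
  | zero =>
    intro k hkd A hdet hshp
    rw [shp_eq_one (by omega) hshp]
    exact one_mem H
  | succ d ih =>
    intro k hkd A hdet hshp
    by_cases hkm : m ≤ k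
    · rw [shp_eq_one hkm hshp]
      exact one_mem H
    · exact phase1 hT (lt_of_not_ge hkm)
        (fun B hB hShpB => ih (k+1) (by omega) B hB hShpB) _ A hdet hshp le_rfl

lemma main {H : Subgroup (GL (Fin m) ℤ)}
    (hT : ∀ (i j : Fin m) (h : i ≠ j) (c : ℤ), tGL i j h c ∈ H)
    (A : GL (Fin m) ℤ) (hdet : det A.val = 1) : A ∈ H :=
  outer hT m 0 (by omega) A hdet (by intro i j hij; rcases hij with h | h <;> omega)

end HuaReiner

/-- Hua–Reiner, even case: for even positive `m`, `GL_m(ℤ)` is generated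
by the cyclic permutation matrix `X` (with `X i j = 1` iff `i ≡ j + 1 (mod m)`) and
`P = I_m + E₁₂`. -/
theorem stmt_12 (m : ℕ) (hm : 0 < m) (heven : Even m) :
    Subgroup.closure {g : GL (Fin m) ℤ |
      (g : Matrix (Fin m) (Fin m) ℤ) =
          Matrix.of (fun i j : Fin m => if (i : ℕ) = ((j : ℕ) + 1) % m then 1 else 0) ∨
      (g : Matrix (Fin m) (Fin m) ℤ) =
          1 + Matrix.single (⟨0, hm⟩ : Fin m)
              (⟨1, by rcases heven with ⟨k, rfl⟩; omega⟩ : Fin m) 1} = ⊤ := by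
  haveI : NeZero m := ⟨hm.ne'⟩
  have h2 : 2 ≤ m := by rcases heven with ⟨k, rfl⟩; omega
  rw [eq_top_iff]
  rintro g -
  set S := {g : GL (Fin m) ℤ |
      (g : Matrix (Fin m) (Fin m) ℤ) =
          Matrix.of (fun i j : Fin m => if (i : ℕ) = ((j : ℕ) + 1) % m then 1 else 0) ∨
      (g : Matrix (Fin m) (Fin m) ℤ) =
          1 + Matrix.single (⟨0, hm⟩ : Fin m)
              (⟨1, by rcases heven with ⟨k, rfl⟩; omega⟩ : Fin m) 1} with hS
  set H := Subgroup.closure S with hH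
  have hv1 : ((1 : Fin m) : ℕ) = 1 := by
    rw [Fin.val_one']
    exact Nat.mod_eq_of_lt (by omega)
  -- X is in the closure
  have hXval : ((HuaReiner.XGL m : GL (Fin m) ℤ) : Matrix (Fin m) (Fin m) ℤ) =
      Matrix.of (fun i j : Fin m => if (i : ℕ) = ((j : ℕ) + 1) % m then 1 else 0) := by
    ext i j
    show HuaReiner.Xmat m i j = _
    simp only [HuaReiner.Xmat, Matrix.of_apply]
    congr 1
    rw [eq_iff_iff, Fin.ext_iff]
    have : ((j + 1 : Fin m) : ℕ) = ((j : ℕ) + 1) % m := by rw [Fin.val_add, hv1]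
    rw [this]
  have hX : HuaReiner.XGL m ∈ H := Subgroup.subset_closure (Or.inl hXval)
  -- P is in the closure
  have he0 : (0 : Fin m) = (⟨0, hm⟩ : Fin m) := by
    apply Fin.ext; simp
  have he1 : (1 : Fin m) = (⟨1, by rcases heven with ⟨k, rfl⟩; omega⟩ : Fin m) :=
    Fin.ext hv1
  have hne01 : (0 : Fin m) ≠ 1 := (HuaReiner.one_ne_zero' h2).symm
  have hPval : ((HuaReiner.tGL 0 1 hne01 1 : GL (Fin m) ℤ) : Matrix (Fin m) (Fin m) ℤ) =
      1 + Matrix.single (⟨0, hm⟩ : Fin m)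
        (⟨1, by rcases heven with ⟨k, rfl⟩; omega⟩ : Fin m) 1 := by
    rw [HuaReiner.tGL_val, Matrix.transvection, he0]
    exact congrArg (fun x => 1 + Matrix.single (⟨0, hm⟩ : Fin m) x 1) he1
  have hP : HuaReiner.tGL 0 1 hne01 1 ∈ H := Subgroup.subset_closure (Or.inr hPval)
  -- all transvections are in the closure
  have hT : ∀ (i j : Fin m) (h : i ≠ j) (c : ℤ), HuaReiner.tGL i j h c ∈ H := by
    intro i j h c
    rw [HuaReiner.tGL_zpow]
    exact zpow_mem (HuaReiner.step2 h2 hX hP i j h) c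
  -- determinant of g is ±1
  have hdu : det (g : Matrix (Fin m) (Fin m) ℤ) = 1 ∨
      det (g : Matrix (Fin m) (Fin m) ℤ) = -1 := by
    apply Int.isUnit_iff.mp
    have hmul : det (g : Matrix (Fin m) (Fin m) ℤ) *
        det ((g⁻¹ : GL (Fin m) ℤ) : Matrix (Fin m) (Fin m) ℤ) = 1 := by
      rw [← det_mul, ← Units.val_mul, mul_inv_cancel, Units.val_one, det_one]
    exact IsUnit.of_mul_eq_one _ hmul
  rcases hdu with hdet | hdet
  · exact HuaReiner.main hT g hdet
  · have hXinv : det (((HuaReiner.XGL m)⁻¹ : GL (Fin m) ℤ) : Matrix (Fin m) (Fin m) ℤ) = -1 := by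
      have h1 : det ((HuaReiner.XGL m : GL (Fin m) ℤ) : Matrix (Fin m) (Fin m) ℤ) *
          det (((HuaReiner.XGL m)⁻¹ : GL (Fin m) ℤ) : Matrix (Fin m) (Fin m) ℤ) = 1 := by
        rw [← det_mul, ← Units.val_mul, mul_inv_cancel, Units.val_one, det_one]
      rw [HuaReiner.XGL_val, HuaReiner.det_Xmat heven] at h1
      linarith
    have hXg : det (((HuaReiner.XGL m)⁻¹ * g : GL (Fin m) ℤ) : Matrix (Fin m) (Fin m) ℤ) = 1 := by
      rw [Units.val_mul, det_mul, hXinv, hdet]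
      norm_num
    have hmem : (HuaReiner.XGL m)⁻¹ * g ∈ H := HuaReiner.main hT _ hXg
    have hgeq : g = HuaReiner.XGL m * ((HuaReiner.XGL m)⁻¹ * g) := by
      rw [mul_inv_cancel_left]
    rw [hgeq]
    exact mul_mem hX hmem
end
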